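/- arXiv:1405.6555 — 7 statements merged into one kernel-verified Lean document; each statement's English description precedes it below -/
import Mathlib

section
/- Under complete randomization, the variance of the difference-in-means estimator equals V_N = (1/(N−1))·{ ((N−m)/m)·S_N²(y₁) + ((N−(n−m))/(n−m))·S_N²(y₀) + 2·S_N(y₁,y₀) }, where S_N²(v) = (1/N)Σᵢ(vᵢ−μ_N(v))² and S_N(v,w) = (1/N)Σᵢ(vᵢ−μ_N(v))(wᵢ−μ_N(w)). -/
open Finset

lemma count1 {α : Type*} [DecidableEq α] (s u : Finset α) (hu : u ⊆ s) (k : ℕ) (hk : u.card ≤ k) :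
    ((powersetCard k s).filter (fun T => u ⊆ T)).card = (s.card - u.card).choose (k - u.card) := by
  rw [show s.card - u.card = (s \ u).card from (card_sdiff_of_subset hu).symm,
    ← card_powersetCard (k - u.card) (s \ u)]
  apply Finset.card_nbij (fun T => T \ u)
  · intro T hT
    simp only [mem_coe, mem_filter, mem_powersetCard] at hT ⊢
    exact ⟨sdiff_subset_sdiff hT.1.1 le_rfl, by rw [card_sdiff_of_subset hT.2, hT.1.2]⟩
  · intro T1 h1 T2 h2 h
    simp only [coe_filter, Set.mem_setOf_eq, mem_powersetCard] at h1 h2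
    have : T1 \ u ∪ u = T2 \ u ∪ u := by simp only at h; rw [h]
    rwa [sdiff_union_of_subset h1.2, sdiff_union_of_subset h2.2] at this
  · intro T hT
    simp only [mem_coe, mem_powersetCard] at hT
    refine ⟨T ∪ u, ?_, ?_⟩
    · simp only [coe_filter, Set.mem_setOf_eq, mem_powersetCard]
      have hd : Disjoint T u := disjoint_of_subset_left hT.1 sdiff_disjoint
      constructor
      · exact ⟨union_subset (hT.1.trans sdiff_subset) hu, by
          rw [card_union_of_disjoint hd, hT.2]; omega⟩
      · exact subset_union_right
    · have hd : Disjoint T u := disjoint_of_subset_left hT.1 sdiff_disjoint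
      simp only []
      rw [union_sdiff_right, sdiff_eq_self_of_disjoint hd]

lemma countA (N n m : ℕ) (u v : Finset (Fin N)) (hd : Disjoint u v)
    (hum : u.card ≤ m) (huvn : u.card + v.card ≤ n) (hnN : n ≤ N) :
    ((Finset.univ.filter (fun p : Finset (Fin N) × Finset (Fin N) =>
        p.2 ⊆ p.1 ∧ p.1.card = n ∧ p.2.card = m)).filter
      (fun p => u ⊆ p.2 ∧ v ⊆ p.1 \ p.2)).card
    = (N - (u.card + v.card)).choose (n - (u.card + v.card))
        * (n - (u.card + v.card)).choose (m - u.card) := by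
  classical
  set B := ((Finset.univ.filter (fun p : Finset (Fin N) × Finset (Fin N) =>
        p.2 ⊆ p.1 ∧ p.1.card = n ∧ p.2.card = m)).filter
      (fun p => u ⊆ p.2 ∧ v ⊆ p.1 \ p.2)) with hB
  have key : ∀ p ∈ B, p.1 ∈ (powersetCard n (univ : Finset (Fin N))).filter
      (fun S => u ∪ v ⊆ S) := by
    intro p hp
    simp only [hB, mem_filter, mem_univ, true_and, mem_powersetCard] at hp ⊢
    exact ⟨⟨subset_univ _, hp.1.2.1⟩, union_subset (hp.2.1.trans hp.1.1)
      (hp.2.2.trans sdiff_subset)⟩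
  rw [card_eq_sum_card_fiberwise key]
  have hfib : ∀ S ∈ (powersetCard n (univ : Finset (Fin N))).filter (fun S => u ∪ v ⊆ S),
      (B.filter (fun p => p.1 = S)).card = (n - (u.card + v.card)).choose (m - u.card) := by
    intro S hS
    simp only [mem_filter, mem_powersetCard] at hS
    have hvS : v ⊆ S := (subset_union_right).trans hS.2
    have huS : u ⊆ S := (subset_union_left).trans hS.2
    have hcard : (S \ v).card = n - v.card := by rw [card_sdiff_of_subset hvS, hS.1.2]
    have : (B.filter (fun p => p.1 = S)).card
        = ((powersetCard m (S \ v)).filter (fun T => u ⊆ T)).card := by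
      apply Finset.card_nbij (fun p => p.2)
      · intro p hp
        simp only [hB, mem_coe, mem_filter, mem_univ, true_and, mem_powersetCard] at hp ⊢
        obtain ⟨⟨⟨hTS, _, hTm⟩, huT, hvT⟩, hpS⟩ := hp
        subst hpS
        refine ⟨⟨fun x hx => ?_, hTm⟩, huT⟩
        · rw [mem_sdiff]
          refine ⟨hTS hx, fun hxv => ?_⟩
          have := hvT hxv
          rw [mem_sdiff] at this
          exact this.2 hx
      · intro p1 h1 p2 h2 h
        simp only [hB, coe_filter, Set.mem_setOf_eq, mem_filter, mem_univ, true_and] at h1 h2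
        simp only at h
        exact Prod.ext (h1.2.trans h2.2.symm) h
      · intro T hT
        simp only [mem_coe, mem_filter, mem_powersetCard] at hT
        obtain ⟨⟨hTSv, hTm⟩, huT⟩ := hT
        refine ⟨(S, T), ?_, rfl⟩
        simp only [hB, mem_coe, mem_filter, mem_univ, true_and]
        have hTS : T ⊆ S := hTSv.trans sdiff_subset
        refine ⟨⟨⟨hTS, hS.1.2, hTm⟩, huT, ?_⟩, trivial⟩
        intro x hx
        rw [mem_sdiff]
        exact ⟨hvS hx, fun hxT => (mem_sdiff.1 (hTSv hxT)).2 hx⟩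
    rw [this, count1 (S \ v) u (fun x hx => mem_sdiff.2 ⟨huS hx, fun h => (disjoint_left.1 hd) hx h⟩) m hum,
      hcard]
    congr 1
    omega
  rw [Finset.sum_congr rfl hfib, Finset.sum_const, smul_eq_mul,
    count1 (univ : Finset (Fin N)) (u ∪ v) (subset_univ _) n
      (by rw [card_union_of_disjoint hd]; exact huvn)]
  rw [card_union_of_disjoint hd, card_univ, Fintype.card_fin]

lemma sum_mul_expand {ι κ : Type*} [Fintype κ] [DecidableEq κ] (A : Finset ι)
    (s t : ι → Finset κ) (f g : κ → ℝ) :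
    ∑ p ∈ A, (∑ i ∈ s p, f i) * (∑ j ∈ t p, g j)
      = ∑ i : κ, ∑ j : κ, (f i * g j) *
          ((A.filter (fun p => i ∈ s p ∧ j ∈ t p)).card : ℝ) := by
  have h1 : ∀ p ∈ A, (∑ i ∈ s p, f i) * (∑ j ∈ t p, g j)
      = ∑ i : κ, ∑ j : κ, (if i ∈ s p then f i else 0) * (if j ∈ t p then g j else 0) := by
    intro p _
    rw [← Finset.sum_mul_sum]
    congr 1
    · rw [Finset.sum_ite_mem, univ_inter]
    · rw [Finset.sum_ite_mem, univ_inter]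
  rw [Finset.sum_congr rfl h1, Finset.sum_comm]
  refine Finset.sum_congr rfl (fun i _ => ?_)
  rw [Finset.sum_comm]
  refine Finset.sum_congr rfl (fun j _ => ?_)
  have h2 : ∀ p, (if i ∈ s p then f i else 0) * (if j ∈ t p then g j else 0)
      = if i ∈ s p ∧ j ∈ t p then f i * g j else 0 := by
    intro p
    by_cases h1 : i ∈ s p <;> by_cases h2 : j ∈ t p <;> simp [h1, h2]
  rw [Finset.sum_congr rfl (fun p _ => h2 p), ← Finset.sum_filter, Finset.sum_const,
    nsmul_eq_mul, mul_comm]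

lemma offdiag_sum {ι : Type*} [Fintype ι] [DecidableEq ι] (f g : ι → ℝ) (c d : ℝ) :
    ∑ i : ι, ∑ j : ι, (f i * g j) * (if i = j then c else d)
      = (c - d) * (∑ i, f i * g i) + d * ((∑ i, f i) * (∑ j, g j)) := by
  have h : ∀ i j : ι, (f i * g j) * (if i = j then c else d)
      = d * (f i * g j) + (if i = j then (c - d) * (f i * g j) else 0) := by
    intro i j
    split_ifs with h
    · subst h; ring
    · ring
  simp_rw [h, Finset.sum_add_distrib, Finset.sum_ite_eq, mem_univ, if_true,
    ← Finset.mul_sum, ← Finset.sum_mul]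
  ring

lemma smc (a b : ℕ) : (a+1) * a.choose b = (b+1) * ((a+1).choose (b+1)) := by
  have := Nat.add_one_mul_choose_eq a b
  rw [this]; ring

lemma cms' (a b c : ℕ) (h : a + 1 = b + c) : (a+1) * (a.choose b) = c * ((a+1).choose b) := by
  have h2 := Nat.choose_mul_succ_eq a b
  have hc : a + 1 - b = c := by omega
  rw [hc] at h2
  rw [mul_comm, h2, mul_comm]

variable {N n m : ℕ}

lemma cntTT (hm : 2 ≤ m) (hmn : m + 2 ≤ n) (hnN : n ≤ N) (i j : Fin N) :
    (((Finset.univ.filter (fun p : Finset (Fin N) × Finset (Fin N) =>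
        p.2 ⊆ p.1 ∧ p.1.card = n ∧ p.2.card = m)).filter
      (fun p => i ∈ p.2 ∧ j ∈ p.2)).card)
    = if i = j then (N-1).choose (n-1) * ((n-1).choose (m-1))
      else (N-2).choose (n-2) * ((n-2).choose (m-2)) := by
  split_ifs with hij
  · subst hij
    rw [filter_congr (q := fun p => ({i} : Finset (Fin N)) ⊆ p.2 ∧ (∅ : Finset (Fin N)) ⊆ p.1 \ p.2)
      (fun p _ => by simp)]
    rw [countA N n m {i} ∅ (by simp) (by simp; omega) (by simp; omega) hnN]
    simp
  · rw [filter_congr (q := fun p => ({i, j} : Finset (Fin N)) ⊆ p.2 ∧ (∅ : Finset (Fin N)) ⊆ p.1 \ p.2)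
      (fun p _ => by simp [insert_subset_iff])]
    rw [countA N n m {i, j} ∅ (by simp) (by rw [card_pair hij]; omega)
      (by rw [card_pair hij]; simp; omega) hnN]
    rw [card_pair hij]
    simp

lemma cntTC (hm : 2 ≤ m) (hmn : m + 2 ≤ n) (hnN : n ≤ N) (i j : Fin N) :
    (((Finset.univ.filter (fun p : Finset (Fin N) × Finset (Fin N) =>
        p.2 ⊆ p.1 ∧ p.1.card = n ∧ p.2.card = m)).filter
      (fun p => i ∈ p.2 ∧ j ∈ p.1 \ p.2)).card)
    = if i = j then 0 else (N-2).choose (n-2) * ((n-2).choose (m-1)) := by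
  split_ifs with hij
  · subst hij
    rw [Finset.card_eq_zero, Finset.filter_eq_empty_iff]
    rintro p _ ⟨h1, h2⟩
    exact (mem_sdiff.1 h2).2 h1
  · rw [filter_congr (q := fun p => ({i} : Finset (Fin N)) ⊆ p.2 ∧ ({j} : Finset (Fin N)) ⊆ p.1 \ p.2)
      (fun p _ => by simp)]
    rw [countA N n m {i} {j} (by simp [hij, Ne.symm hij]) (by simp; omega) (by simp; omega) hnN]
    simp

lemma cntCC (hm : 2 ≤ m) (hmn : m + 2 ≤ n) (hnN : n ≤ N) (i j : Fin N) :
    (((Finset.univ.filter (fun p : Finset (Fin N) × Finset (Fin N) =>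
        p.2 ⊆ p.1 ∧ p.1.card = n ∧ p.2.card = m)).filter
      (fun p => i ∈ p.1 \ p.2 ∧ j ∈ p.1 \ p.2)).card)
    = if i = j then (N-1).choose (n-1) * ((n-1).choose m)
      else (N-2).choose (n-2) * ((n-2).choose m) := by
  split_ifs with hij
  · subst hij
    rw [filter_congr (q := fun p => (∅ : Finset (Fin N)) ⊆ p.2 ∧ ({i} : Finset (Fin N)) ⊆ p.1 \ p.2)
      (fun p _ => by simp)]
    rw [countA N n m ∅ {i} (by simp) (by simp) (by simp; omega) hnN]
    simp
  · rw [filter_congr (q := fun p => (∅ : Finset (Fin N)) ⊆ p.2 ∧ ({i, j} : Finset (Fin N)) ⊆ p.1 \ p.2)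
      (fun p _ => by simp [insert_subset_iff])]
    rw [countA N n m ∅ {i, j} (by simp) (by simp)
      (by rw [card_pair hij]; simp; omega) hnN]
    rw [card_pair hij]
    simp

lemma cardA (hm : 2 ≤ m) (hmn : m + 2 ≤ n) (hnN : n ≤ N) :
    (Finset.univ.filter (fun p : Finset (Fin N) × Finset (Fin N) =>
        p.2 ⊆ p.1 ∧ p.1.card = n ∧ p.2.card = m)).card = N.choose n * n.choose m := by
  have h := countA N n m ∅ ∅ (by simp) (by simp) (by simp) hnN
  rw [filter_true_of_mem (fun p _ => ⟨empty_subset _, empty_subset _⟩)] at h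
  simpa using h

lemma I1 (hm : 2 ≤ m) (hmn : m + 2 ≤ n) (hnN : n ≤ N) :
    (N : ℝ) * (((N-1).choose (n-1) * ((n-1).choose (m-1)) : ℕ) : ℝ)
      = (m : ℝ) * ((N.choose n * n.choose m : ℕ) : ℝ) := by
  obtain ⟨m2, rfl⟩ : ∃ m2, m = m2 + 2 := ⟨m-2, by omega⟩
  obtain ⟨n2, rfl⟩ : ∃ n2, n = n2 + 2 := ⟨n-2, by omega⟩
  obtain ⟨N2, rfl⟩ : ∃ N2, N = N2 + 2 := ⟨N-2, by omega⟩
  have e1 : N2+2-1 = N2+1 := by omega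
  have e2 : n2+2-1 = n2+1 := by omega
  have e3 : m2+2-1 = m2+1 := by omega
  rw [e1, e2, e3]
  have A2 : ((N2:ℝ)+2) * ((N2+1).choose (n2+1) : ℕ) = ((n2:ℝ)+2) * ((N2+2).choose (n2+2) : ℕ) := by
    exact_mod_cast smc (N2+1) (n2+1)
  have B2 : ((n2:ℝ)+2) * ((n2+1).choose (m2+1) : ℕ) = ((m2:ℝ)+2) * ((n2+2).choose (m2+2) : ℕ) := by
    exact_mod_cast smc (n2+1) (m2+1)
  push_cast
  linear_combination (((n2+1).choose (m2+1) : ℕ) : ℝ) * A2 + (((N2+2).choose (n2+2) : ℕ) : ℝ) * B2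

lemma I2 (hm : 2 ≤ m) (hmn : m + 2 ≤ n) (hnN : n ≤ N) :
    (N : ℝ) * ((N : ℝ) - 1) * (((N-2).choose (n-2) * ((n-2).choose (m-2)) : ℕ) : ℝ)
      = (m : ℝ) * ((m : ℝ) - 1) * ((N.choose n * n.choose m : ℕ) : ℝ) := by
  obtain ⟨m2, rfl⟩ : ∃ m2, m = m2 + 2 := ⟨m-2, by omega⟩
  obtain ⟨n2, rfl⟩ : ∃ n2, n = n2 + 2 := ⟨n-2, by omega⟩
  obtain ⟨N2, rfl⟩ : ∃ N2, N = N2 + 2 := ⟨N-2, by omega⟩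
  have e1 : N2+2-2 = N2 := by omega
  have e2 : n2+2-2 = n2 := by omega
  have e3 : m2+2-2 = m2 := by omega
  rw [e1, e2, e3]
  have A1 : ((N2:ℝ)+1) * (N2.choose n2 : ℕ) = ((n2:ℝ)+1) * ((N2+1).choose (n2+1) : ℕ) := by
    exact_mod_cast smc N2 n2
  have A2 : ((N2:ℝ)+2) * ((N2+1).choose (n2+1) : ℕ) = ((n2:ℝ)+2) * ((N2+2).choose (n2+2) : ℕ) := by
    exact_mod_cast smc (N2+1) (n2+1)
  have B1 : ((n2:ℝ)+1) * (n2.choose m2 : ℕ) = ((m2:ℝ)+1) * ((n2+1).choose (m2+1) : ℕ) := by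
    exact_mod_cast smc n2 m2
  have B2 : ((n2:ℝ)+2) * ((n2+1).choose (m2+1) : ℕ) = ((m2:ℝ)+2) * ((n2+2).choose (m2+2) : ℕ) := by
    exact_mod_cast smc (n2+1) (m2+1)
  push_cast
  linear_combination (((N2:ℝ)+2) * ((n2.choose m2 : ℕ) : ℝ)) * A1
    + (((n2:ℝ)+1) * ((n2.choose m2 : ℕ) : ℝ)) * A2
    + (((n2:ℝ)+2) * (((N2+2).choose (n2+2) : ℕ) : ℝ)) * B1
    + (((m2:ℝ)+1) * (((N2+2).choose (n2+2) : ℕ) : ℝ)) * B2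

lemma I3 (hm : 2 ≤ m) (hmn : m + 2 ≤ n) (hnN : n ≤ N) :
    (N : ℝ) * ((N : ℝ) - 1) * (((N-2).choose (n-2) * ((n-2).choose (m-1)) : ℕ) : ℝ)
      = (m : ℝ) * (((n - m : ℕ) : ℕ) : ℝ) * ((N.choose n * n.choose m : ℕ) : ℝ) := by
  obtain ⟨q2, hq⟩ : ∃ q2, n - m = q2 + 2 := ⟨n-m-2, by omega⟩
  obtain ⟨m2, rfl⟩ : ∃ m2, m = m2 + 2 := ⟨m-2, by omega⟩
  obtain ⟨n2, rfl⟩ : ∃ n2, n = n2 + 2 := ⟨n-2, by omega⟩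
  obtain ⟨N2, rfl⟩ : ∃ N2, N = N2 + 2 := ⟨N-2, by omega⟩
  have hn2 : n2 = m2 + q2 + 2 := by omega
  have e1 : N2+2-2 = N2 := by omega
  have e2 : n2+2-2 = n2 := by omega
  have e3 : m2+2-1 = m2+1 := by omega
  rw [e1, e2, e3, hq]
  have A1 : ((N2:ℝ)+1) * (N2.choose n2 : ℕ) = ((n2:ℝ)+1) * ((N2+1).choose (n2+1) : ℕ) := by
    exact_mod_cast smc N2 n2
  have A2 : ((N2:ℝ)+2) * ((N2+1).choose (n2+1) : ℕ) = ((n2:ℝ)+2) * ((N2+2).choose (n2+2) : ℕ) := by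
    exact_mod_cast smc (N2+1) (n2+1)
  have B1 : ((n2:ℝ)+1) * (n2.choose (m2+1) : ℕ) = ((m2:ℝ)+2) * ((n2+1).choose (m2+2) : ℕ) := by
    exact_mod_cast smc n2 (m2+1)
  have B2 : ((n2:ℝ)+2) * ((n2+1).choose (m2+2) : ℕ) = ((q2:ℝ)+2) * ((n2+2).choose (m2+2) : ℕ) := by
    exact_mod_cast cms' (n2+1) (m2+2) (q2+2) (by omega)
  push_cast
  linear_combination (((N2:ℝ)+2) * ((n2.choose (m2+1) : ℕ) : ℝ)) * A1
    + (((n2:ℝ)+1) * ((n2.choose (m2+1) : ℕ) : ℝ)) * A2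
    + (((n2:ℝ)+2) * (((N2+2).choose (n2+2) : ℕ) : ℝ)) * B1
    + (((m2:ℝ)+2) * (((N2+2).choose (n2+2) : ℕ) : ℝ)) * B2

lemma I4 (hm : 2 ≤ m) (hmn : m + 2 ≤ n) (hnN : n ≤ N) :
    (N : ℝ) * (((N-1).choose (n-1) * ((n-1).choose m) : ℕ) : ℝ)
      = (((n - m : ℕ) : ℕ) : ℝ) * ((N.choose n * n.choose m : ℕ) : ℝ) := by
  obtain ⟨q2, hq⟩ : ∃ q2, n - m = q2 + 2 := ⟨n-m-2, by omega⟩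
  obtain ⟨m2, rfl⟩ : ∃ m2, m = m2 + 2 := ⟨m-2, by omega⟩
  obtain ⟨n2, rfl⟩ : ∃ n2, n = n2 + 2 := ⟨n-2, by omega⟩
  obtain ⟨N2, rfl⟩ : ∃ N2, N = N2 + 2 := ⟨N-2, by omega⟩
  have e1 : N2+2-1 = N2+1 := by omega
  have e2 : n2+2-1 = n2+1 := by omega
  rw [e1, e2, hq]
  have A2 : ((N2:ℝ)+2) * ((N2+1).choose (n2+1) : ℕ) = ((n2:ℝ)+2) * ((N2+2).choose (n2+2) : ℕ) := by
    exact_mod_cast smc (N2+1) (n2+1)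
  have C1 : ((n2:ℝ)+2) * ((n2+1).choose (m2+2) : ℕ) = ((q2:ℝ)+2) * ((n2+2).choose (m2+2) : ℕ) := by
    exact_mod_cast cms' (n2+1) (m2+2) (q2+2) (by omega)
  push_cast
  linear_combination ((((n2+1).choose (m2+2) : ℕ)) : ℝ) * A2
    + ((((N2+2).choose (n2+2) : ℕ)) : ℝ) * C1

lemma I5 (hm : 2 ≤ m) (hmn : m + 2 ≤ n) (hnN : n ≤ N) :
    (N : ℝ) * ((N : ℝ) - 1) * (((N-2).choose (n-2) * ((n-2).choose m) : ℕ) : ℝ)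
      = (((n - m : ℕ) : ℕ) : ℝ) * ((((n - m : ℕ) : ℕ) : ℝ) - 1) * ((N.choose n * n.choose m : ℕ) : ℝ) := by
  obtain ⟨q2, hq⟩ : ∃ q2, n - m = q2 + 2 := ⟨n-m-2, by omega⟩
  obtain ⟨m2, rfl⟩ : ∃ m2, m = m2 + 2 := ⟨m-2, by omega⟩
  obtain ⟨n2, rfl⟩ : ∃ n2, n = n2 + 2 := ⟨n-2, by omega⟩
  obtain ⟨N2, rfl⟩ : ∃ N2, N = N2 + 2 := ⟨N-2, by omega⟩
  have e1 : N2+2-2 = N2 := by omega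
  have e2 : n2+2-2 = n2 := by omega
  rw [e1, e2, hq]
  have A1 : ((N2:ℝ)+1) * (N2.choose n2 : ℕ) = ((n2:ℝ)+1) * ((N2+1).choose (n2+1) : ℕ) := by
    exact_mod_cast smc N2 n2
  have A2 : ((N2:ℝ)+2) * ((N2+1).choose (n2+1) : ℕ) = ((n2:ℝ)+2) * ((N2+2).choose (n2+2) : ℕ) := by
    exact_mod_cast smc (N2+1) (n2+1)
  have C0 : ((n2:ℝ)+1) * (n2.choose (m2+2) : ℕ) = ((q2:ℝ)+1) * ((n2+1).choose (m2+2) : ℕ) := by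
    exact_mod_cast cms' n2 (m2+2) (q2+1) (by omega)
  have C1 : ((n2:ℝ)+2) * ((n2+1).choose (m2+2) : ℕ) = ((q2:ℝ)+2) * ((n2+2).choose (m2+2) : ℕ) := by
    exact_mod_cast cms' (n2+1) (m2+2) (q2+2) (by omega)
  push_cast
  linear_combination (((N2:ℝ)+2) * ((n2.choose (m2+2) : ℕ) : ℝ)) * A1
    + (((n2:ℝ)+1) * ((n2.choose (m2+2) : ℕ) : ℝ)) * A2
    + (((n2:ℝ)+2) * (((N2+2).choose (n2+2) : ℕ) : ℝ)) * C0
    + (((q2:ℝ)+1) * (((N2+2).choose (n2+2) : ℕ) : ℝ)) * C1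

set_option maxHeartbeats 2000000 in
/-- Variance of the difference-in-means estimator under complete randomization:
`V_N = (1/(N-1)) { ((N-m)/m) S²(y₁) + ((N-(n-m))/(n-m)) S²(y₀) + 2 S(y₁,y₀) }`. -/
theorem stmt1 (N n m : ℕ) (hN : 4 ≤ N) (hnN : n ≤ N) (hm : 2 ≤ m)
    (hmn : m + 2 ≤ n) (y1 y0 : Fin N → ℝ) :
    let μ1 := (∑ i, y1 i) / (N : ℝ)
    let μ0 := (∑ i, y0 i) / (N : ℝ)
    let S1 := (∑ i, (y1 i - μ1) ^ 2) / (N : ℝ)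
    let S0 := (∑ i, (y0 i - μ0) ^ 2) / (N : ℝ)
    let S10 := (∑ i, (y1 i - μ1) * (y0 i - μ0)) / (N : ℝ)
    let A : Finset (Finset (Fin N) × Finset (Fin N)) :=
      Finset.univ.filter (fun p => p.2 ⊆ p.1 ∧ p.1.card = n ∧ p.2.card = m)
    (∑ p ∈ A, (((∑ i ∈ p.2, y1 i) / (m : ℝ)
          - (∑ i ∈ p.1 \ p.2, y0 i) / ((n - m : ℕ) : ℝ)) - (μ1 - μ0)) ^ 2) / (A.card : ℝ)
      = (1 / ((N : ℝ) - 1)) * (((N : ℝ) - m) / m * S1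
          + ((N : ℝ) - ((n - m : ℕ) : ℝ)) / ((n - m : ℕ) : ℝ) * S0 + 2 * S10) := by
  intro μ1 μ0 S1 S0 S10 A
  have hAdef : A = Finset.univ.filter (fun p : Finset (Fin N) × Finset (Fin N) =>
      p.2 ⊆ p.1 ∧ p.1.card = n ∧ p.2.card = m) := rfl
  have hμ1 : μ1 = (∑ i, y1 i) / (N : ℝ) := rfl
  have hμ0 : μ0 = (∑ i, y0 i) / (N : ℝ) := rfl
  have hS1 : S1 = (∑ i, (y1 i - μ1) ^ 2) / (N : ℝ) := rfl
  have hS0 : S0 = (∑ i, (y0 i - μ0) ^ 2) / (N : ℝ) := rfl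
  have hS10 : S10 = (∑ i, (y1 i - μ1) * (y0 i - μ0)) / (N : ℝ) := rfl
  set k := n - m with hk
  have hmR : (m : ℝ) ≠ 0 := Nat.cast_ne_zero.2 (by omega)
  have hkR : ((k : ℕ) : ℝ) ≠ 0 := Nat.cast_ne_zero.2 (by omega)
  have hNR : (N : ℝ) ≠ 0 := Nat.cast_ne_zero.2 (by omega)
  have hN1 : (N : ℝ) - 1 ≠ 0 := by
    have : (4 : ℝ) ≤ (N : ℝ) := by exact_mod_cast hN
    intro h; linarith
  have hCA : A.card = N.choose n * n.choose m := hAdef ▸ cardA hm hmn hnN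
  have hCAR : ((N.choose n * n.choose m : ℕ) : ℝ) ≠ 0 := by
    have h1 := Nat.choose_pos hnN
    have h2 := Nat.choose_pos (show m ≤ n by omega)
    exact Nat.cast_ne_zero.2 (by positivity)
  have hZ1 : ∑ i, (y1 i - μ1) = 0 := by
    rw [Finset.sum_sub_distrib, Finset.sum_const, card_univ, Fintype.card_fin,
      nsmul_eq_mul, hμ1]
    field_simp
    ring
  have hZ0 : ∑ i, (y0 i - μ0) = 0 := by
    rw [Finset.sum_sub_distrib, Finset.sum_const, card_univ, Fintype.card_fin,
      nsmul_eq_mul, hμ0]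
    field_simp
    ring
  have hsummand : ∀ p ∈ A,
      (((∑ i ∈ p.2, y1 i) / (m : ℝ) - (∑ i ∈ p.1 \ p.2, y0 i) / ((k : ℕ) : ℝ))
          - (μ1 - μ0)) ^ 2
      = (1/(m:ℝ)^2) * ((∑ i ∈ p.2, (y1 i - μ1)) * (∑ j ∈ p.2, (y1 j - μ1)))
        - (2/((m:ℝ) * ((k:ℕ):ℝ))) *
            ((∑ i ∈ p.2, (y1 i - μ1)) * (∑ j ∈ p.1 \ p.2, (y0 j - μ0)))
        + (1/((k:ℕ):ℝ)^2) *
            ((∑ i ∈ p.1 \ p.2, (y0 i - μ0)) * (∑ j ∈ p.1 \ p.2, (y0 j - μ0))) := by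
    intro p hp
    rw [hAdef, mem_filter] at hp
    obtain ⟨-, hsub, hSn, hTm⟩ := hp
    have hCcard : (p.1 \ p.2).card = k := by rw [card_sdiff_of_subset hsub, hSn, hTm]
    have e1 : ∑ i ∈ p.2, (y1 i - μ1) = (∑ i ∈ p.2, y1 i) - (m : ℝ) * μ1 := by
      rw [Finset.sum_sub_distrib, Finset.sum_const, hTm, nsmul_eq_mul]
    have e0 : ∑ i ∈ p.1 \ p.2, (y0 i - μ0)
        = (∑ i ∈ p.1 \ p.2, y0 i) - ((k : ℕ) : ℝ) * μ0 := by
      rw [Finset.sum_sub_distrib, Finset.sum_const, hCcard, nsmul_eq_mul]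
    rw [e1, e0]
    field_simp
    ring
  rw [Finset.sum_congr rfl hsummand, Finset.sum_add_distrib, Finset.sum_sub_distrib]
  simp only [← Finset.mul_sum]
  have hSA : ∑ p ∈ A, ((∑ i ∈ p.2, (y1 i - μ1)) * (∑ j ∈ p.2, (y1 j - μ1)))
      = ((((N-1).choose (n-1) * ((n-1).choose (m-1)) : ℕ) : ℝ)
          - (((N-2).choose (n-2) * ((n-2).choose (m-2)) : ℕ) : ℝ))
        * (∑ i, (y1 i - μ1) * (y1 i - μ1)) := by
    rw [sum_mul_expand A (fun p => p.2) (fun p => p.2)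
      (fun i => y1 i - μ1) (fun i => y1 i - μ1)]
    have hcnt : ∀ i j : Fin N,
        ((A.filter (fun p => i ∈ p.2 ∧ j ∈ p.2)).card : ℝ)
        = if i = j then (((N-1).choose (n-1) * ((n-1).choose (m-1)) : ℕ) : ℝ)
          else (((N-2).choose (n-2) * ((n-2).choose (m-2)) : ℕ) : ℝ) := by
      intro i j
      rw [hAdef, cntTT hm hmn hnN i j]
      split_ifs <;> simp
    simp only [hcnt]
    rw [offdiag_sum, hZ1]
    ring
  have hSC : ∑ p ∈ A, ((∑ i ∈ p.2, (y1 i - μ1)) * (∑ j ∈ p.1 \ p.2, (y0 j - μ0)))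
      = -((((N-2).choose (n-2) * ((n-2).choose (m-1)) : ℕ) : ℝ)
          * (∑ i, (y1 i - μ1) * (y0 i - μ0))) := by
    rw [sum_mul_expand A (fun p => p.2) (fun p => p.1 \ p.2)
      (fun i => y1 i - μ1) (fun i => y0 i - μ0)]
    have hcnt : ∀ i j : Fin N,
        ((A.filter (fun p => i ∈ p.2 ∧ j ∈ p.1 \ p.2)).card : ℝ)
        = if i = j then (0 : ℝ)
          else (((N-2).choose (n-2) * ((n-2).choose (m-1)) : ℕ) : ℝ) := by
      intro i j
      rw [hAdef, cntTC hm hmn hnN i j]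
      split_ifs <;> simp
    simp only [hcnt]
    rw [offdiag_sum, hZ1]
    ring
  have hSB : ∑ p ∈ A, ((∑ i ∈ p.1 \ p.2, (y0 i - μ0)) * (∑ j ∈ p.1 \ p.2, (y0 j - μ0)))
      = ((((N-1).choose (n-1) * ((n-1).choose m) : ℕ) : ℝ)
          - (((N-2).choose (n-2) * ((n-2).choose m) : ℕ) : ℝ))
        * (∑ i, (y0 i - μ0) * (y0 i - μ0)) := by
    rw [sum_mul_expand A (fun p => p.1 \ p.2) (fun p => p.1 \ p.2)
      (fun i => y0 i - μ0) (fun i => y0 i - μ0)]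
    have hcnt : ∀ i j : Fin N,
        ((A.filter (fun p => i ∈ p.1 \ p.2 ∧ j ∈ p.1 \ p.2)).card : ℝ)
        = if i = j then (((N-1).choose (n-1) * ((n-1).choose m) : ℕ) : ℝ)
          else (((N-2).choose (n-2) * ((n-2).choose m) : ℕ) : ℝ) := by
      intro i j
      rw [hAdef, cntCC hm hmn hnN i j]
      split_ifs <;> simp
    simp only [hcnt]
    rw [offdiag_sum, hZ0]
    ring
  rw [hSA, hSC, hSB, hCA, hS1, hS0, hS10]
  have hX : ∑ i, (y1 i - μ1) * (y1 i - μ1) = ∑ i, (y1 i - μ1) ^ 2 :=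
    Finset.sum_congr rfl (fun i _ => (sq _).symm)
  have hY : ∑ i, (y0 i - μ0) * (y0 i - μ0) = ∑ i, (y0 i - μ0) ^ 2 :=
    Finset.sum_congr rfl (fun i _ => (sq _).symm)
  rw [hX, hY]
  -- substitute count values
  have hc1 : (((N-1).choose (n-1) * ((n-1).choose (m-1)) : ℕ) : ℝ)
      = (m : ℝ) * ((N.choose n * n.choose m : ℕ) : ℝ) / (N : ℝ) := by
    rw [eq_div_iff hNR]; linear_combination I1 hm hmn hnN
  have hc2 : (((N-2).choose (n-2) * ((n-2).choose (m-2)) : ℕ) : ℝ)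
      = (m : ℝ) * ((m : ℝ) - 1) * ((N.choose n * n.choose m : ℕ) : ℝ)
          / ((N : ℝ) * ((N : ℝ) - 1)) := by
    rw [eq_div_iff (mul_ne_zero hNR hN1)]; linear_combination I2 hm hmn hnN
  have hc3 : (((N-2).choose (n-2) * ((n-2).choose (m-1)) : ℕ) : ℝ)
      = (m : ℝ) * ((k : ℕ) : ℝ) * ((N.choose n * n.choose m : ℕ) : ℝ)
          / ((N : ℝ) * ((N : ℝ) - 1)) := by
    rw [eq_div_iff (mul_ne_zero hNR hN1)]; linear_combination I3 hm hmn hnN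
  have hd1 : (((N-1).choose (n-1) * ((n-1).choose m) : ℕ) : ℝ)
      = ((k : ℕ) : ℝ) * ((N.choose n * n.choose m : ℕ) : ℝ) / (N : ℝ) := by
    rw [eq_div_iff hNR]; linear_combination I4 hm hmn hnN
  have hd2 : (((N-2).choose (n-2) * ((n-2).choose m) : ℕ) : ℝ)
      = ((k : ℕ) : ℝ) * (((k : ℕ) : ℝ) - 1) * ((N.choose n * n.choose m : ℕ) : ℝ)
          / ((N : ℝ) * ((N : ℝ) - 1)) := by
    rw [eq_div_iff (mul_ne_zero hNR hN1)]; linear_combination I5 hm hmn hnN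
  rw [hc1, hc2, hc3, hd1, hd2]
  set X := ∑ i, (y1 i - μ1) ^ 2 with hXd
  set Y := ∑ i, (y0 i - μ0) ^ 2 with hYd
  set Z := ∑ i, (y1 i - μ1) * (y0 i - μ0) with hZd
  set C := ((N.choose n * n.choose m : ℕ) : ℝ) with hCd
  set Nr := (N : ℝ) with hNd
  set mr := (m : ℝ) with hmd
  set kr := ((k : ℕ) : ℝ) with hkd
  field_simp
  ring
end

section
/- Neyman's conservative estimator V̂ₙᵃ = (n/(n−1))·{Ŝₙ²(y₁)/m + Ŝₙ²(y₀)/(n−m)} has nonnegative bias: E_X[V̂ₙᵃ − Vₙ] = (1/(n−1))·{Sₙ²(y₁) + Sₙ²(y₀) − 2Sₙ(y₁,y₀)} ≥ 0. -/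
set_option maxHeartbeats 1000000
open Finset
lemma count_aux {α : Type*} [DecidableEq α] (s : Finset α) (k : ℕ) (a : α) (ha : a ∈ s)
    (p : Finset α → Prop) [DecidablePred p]
    (hp : ∀ T, a ∉ T → (p (insert a T) ↔ p T)) :
    ((powersetCard (k+1) s).filter (fun T => a ∈ T ∧ p T)).card
      = ((powersetCard k (s.erase a)).filter p).card := by
  apply Finset.card_bij (fun T _ => T.erase a)
  · intro T hT
    simp only [mem_filter, mem_powersetCard] at hT ⊢
    obtain ⟨⟨hs, hc⟩, haT, hpT⟩ := hT
    have hins : insert a (T.erase a) = T := insert_erase haT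
    refine ⟨⟨fun x hx => mem_erase.2 ⟨(mem_erase.1 hx).1, hs (mem_erase.1 hx).2⟩, ?_⟩, ?_⟩
    · rw [card_erase_of_mem haT, hc]; rfl
    · have := hp (T.erase a) (notMem_erase a T); rw [hins] at this; exact this.1 hpT
  · intro T hT T' hT' h
    simp only [mem_filter] at hT hT'
    rw [← insert_erase hT.2.1, ← insert_erase hT'.2.1, h]
  · intro T' hT'
    simp only [mem_filter, mem_powersetCard] at hT'
    obtain ⟨⟨hs, hc⟩, hpT⟩ := hT'
    have haT' : a ∉ T' := fun h => (mem_erase.1 (hs h)).1 rfl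
    refine ⟨insert a T', ?_, erase_insert haT'⟩
    simp only [mem_filter, mem_powersetCard]
    refine ⟨⟨fun x hx => ?_, ?_⟩, mem_insert_self a T', (hp T' haT').2 hpT⟩
    · rcases mem_insert.1 hx with rfl | hx
      · exact ha
      · exact (mem_erase.1 (hs hx)).2
    · rw [card_insert_of_notMem haT', hc]

lemma count_one (n k : ℕ) (a : Fin n) :
    (((powersetCard (k+1) (univ : Finset (Fin n)))).filter (fun T => a ∈ T)).card
      = (n-1).choose k := by
  have := count_aux (univ : Finset (Fin n)) k a (mem_univ a) (fun _ => True)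
      (fun T _ => Iff.rfl)
  simp only [filter_true_of_mem (fun _ _ => trivial), and_true] at this
  rw [this, card_powersetCard, card_erase_of_mem (mem_univ a), card_univ, Fintype.card_fin]

lemma count_two (n k : ℕ) (a b : Fin n) (hab : a ≠ b) :
    (((powersetCard (k+2) (univ : Finset (Fin n)))).filter (fun T => a ∈ T ∧ b ∈ T)).card
      = (n-2).choose k := by
  have h1 := count_aux (univ : Finset (Fin n)) (k+1) a (mem_univ a) (fun T => b ∈ T)
      (fun T _ => by simp [mem_insert, hab.symm])
  have hb : b ∈ (univ : Finset (Fin n)).erase a := mem_erase.2 ⟨hab.symm, mem_univ b⟩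
  have h2 := count_aux ((univ : Finset (Fin n)).erase a) k b hb (fun _ => True)
      (fun T _ => Iff.rfl)
  simp only [filter_true_of_mem (fun _ _ => trivial), and_true] at h2
  rw [h1, h2, card_powersetCard, card_erase_of_mem hb, card_erase_of_mem (mem_univ a),
    card_univ, Fintype.card_fin, Nat.sub_sub]

lemma sum_T_single (n k : ℕ) (z : Fin n → ℝ) :
    ∑ T ∈ powersetCard (k+1) (univ : Finset (Fin n)), ∑ i ∈ T, z i
      = ((n-1).choose k : ℝ) * ∑ i, z i := by
  calc ∑ T ∈ powersetCard (k+1) (univ : Finset (Fin n)), ∑ i ∈ T, z i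
      = ∑ T ∈ powersetCard (k+1) (univ : Finset (Fin n)), ∑ i,
          if i ∈ T then z i else 0 := by
        refine sum_congr rfl fun T _ => ?_
        rw [Finset.sum_ite_mem, univ_inter]
    _ = ∑ i, ∑ T ∈ powersetCard (k+1) (univ : Finset (Fin n)),
          if i ∈ T then z i else 0 := Finset.sum_comm
    _ = ((n-1).choose k : ℝ) * ∑ i, z i := by
        rw [Finset.mul_sum]
        refine sum_congr rfl fun i _ => ?_
        rw [← Finset.sum_filter, Finset.sum_const, nsmul_eq_mul, count_one]
lemma sum_T_sq (n k : ℕ) (z : Fin n → ℝ) :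
    ∑ T ∈ powersetCard (k+2) (univ : Finset (Fin n)), (∑ i ∈ T, z i)^2
      = ((n-1).choose (k+1) : ℝ) * ∑ i, (z i)^2
        + ((n-2).choose k : ℝ) * ((∑ i, z i)^2 - ∑ i, (z i)^2) := by
  have step1 : ∀ T ∈ powersetCard (k+2) (univ : Finset (Fin n)), (∑ i ∈ T, z i)^2
      = ∑ i, ∑ j, if i ∈ T ∧ j ∈ T then z i * z j else 0 := by
    intro T _
    rw [sq, Finset.sum_mul_sum]
    calc ∑ i ∈ T, ∑ j ∈ T, z i * z j
        = ∑ i ∈ T, ∑ j, if j ∈ T then z i * z j else 0 := by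
          refine sum_congr rfl fun i _ => ?_; rw [Finset.sum_ite_mem, univ_inter]
      _ = ∑ i, if i ∈ T then ∑ j, (if j ∈ T then z i * z j else 0) else 0 := by
          rw [Finset.sum_ite_mem, univ_inter]
      _ = ∑ i, ∑ j, if i ∈ T ∧ j ∈ T then z i * z j else 0 := by
          refine sum_congr rfl fun i _ => ?_
          by_cases h : i ∈ T <;> simp [h, ite_and]
  rw [Finset.sum_congr rfl step1]
  have step2 : ∑ T ∈ powersetCard (k+2) (univ : Finset (Fin n)),
        ∑ i, ∑ j, (if i ∈ T ∧ j ∈ T then z i * z j else 0)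
      = ∑ i, ∑ j,
        ((((powersetCard (k+2) (univ : Finset (Fin n)))).filter
            (fun T => i ∈ T ∧ j ∈ T)).card : ℝ) * (z i * z j) := by
    rw [Finset.sum_comm]
    refine sum_congr rfl fun i _ => ?_
    rw [Finset.sum_comm]
    refine sum_congr rfl fun j _ => ?_
    rw [← Finset.sum_filter, Finset.sum_const, nsmul_eq_mul]
  rw [step2]
  have step3 : ∀ i : Fin n, ∑ j,
      ((((powersetCard (k+2) (univ : Finset (Fin n)))).filter
          (fun T => i ∈ T ∧ j ∈ T)).card : ℝ) * (z i * z j)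
      = ((n-1).choose (k+1) : ℝ) * (z i)^2
        + ((n-2).choose k : ℝ) * (z i * ((∑ j, z j) - z i)) := by
    intro i
    rw [← Finset.add_sum_erase _ _ (mem_univ i)]
    have hset : ((powersetCard (k+2) (univ : Finset (Fin n)))).filter
        (fun T => i ∈ T ∧ i ∈ T)
        = ((powersetCard (k+2) (univ : Finset (Fin n)))).filter (fun T => i ∈ T) := by
      refine filter_congr fun T _ => by simp
    have hoff : ∑ j ∈ univ.erase i,
        ((((powersetCard (k+2) (univ : Finset (Fin n)))).filter
            (fun T => i ∈ T ∧ j ∈ T)).card : ℝ) * (z i * z j)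
        = ((n-2).choose k : ℝ) * (z i * ((∑ j, z j) - z i)) := by
      rw [← Finset.sum_erase_eq_sub (mem_univ i), Finset.mul_sum, Finset.mul_sum]
      refine sum_congr rfl fun j hj => ?_
      rw [count_two n k i j (Ne.symm (mem_erase.1 hj).1)]
    rw [hset, hoff, count_one]
    ring
  rw [Finset.sum_congr rfl (fun i _ => step3 i), Finset.sum_add_distrib,
    ← Finset.mul_sum, ← Finset.mul_sum]
  congr 2
  have : ∑ i, z i * ((∑ j, z j) - z i) = ∑ i, (z i * (∑ j, z j) - (z i)^2) :=
    sum_congr rfl fun i _ => by ring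
  rw [this, Finset.sum_sub_distrib, ← Finset.sum_mul, ← sq]
lemma key (n k : ℕ) (hk2 : 2 ≤ k) (hn2 : 2 ≤ n) (z : Fin n → ℝ) (hz : ∑ i, z i = 0) :
    ∑ T ∈ powersetCard k (univ : Finset (Fin n)),
        ∑ i ∈ T, (z i - (∑ j ∈ T, z j)/(k:ℝ))^2
      = (n.choose k : ℝ) * (((k:ℝ)-1)/((n:ℝ)-1)) * ∑ i, (z i)^2 := by
  obtain ⟨b, rfl⟩ : ∃ b, k = b + 2 := ⟨k - 2, by omega⟩
  obtain ⟨c, rfl⟩ : ∃ c, n = c + 2 := ⟨n - 2, by omega⟩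
  have hK : ((b:ℝ)+2) ≠ 0 := by positivity
  have hA : ∀ T ∈ powersetCard (b+2) (univ : Finset (Fin (c+2))),
      ∑ i ∈ T, (z i - (∑ j ∈ T, z j)/((b+2:ℕ):ℝ))^2
        = (∑ i ∈ T, (z i)^2) - (∑ i ∈ T, z i)^2/((b:ℝ)+2) := by
    intro T hT
    have hcard : T.card = b + 2 := (mem_powersetCard_univ.1 hT)
    calc ∑ i ∈ T, (z i - (∑ j ∈ T, z j)/((b+2:ℕ):ℝ))^2
        = ∑ i ∈ T, ((z i)^2 - (2*((∑ j ∈ T, z j)/((b:ℝ)+2)))*z i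
            + ((∑ j ∈ T, z j)/((b:ℝ)+2))^2) := by
          refine sum_congr rfl fun i _ => ?_; push_cast; ring
      _ = (∑ i ∈ T, (z i)^2) - (2*((∑ j ∈ T, z j)/((b:ℝ)+2)))*(∑ i ∈ T, z i)
            + (T.card : ℝ) * ((∑ j ∈ T, z j)/((b:ℝ)+2))^2 := by
          rw [Finset.sum_add_distrib, Finset.sum_sub_distrib, ← Finset.mul_sum,
            Finset.sum_const, nsmul_eq_mul]
      _ = (∑ i ∈ T, (z i)^2) - (∑ i ∈ T, z i)^2/((b:ℝ)+2) := by
          rw [hcard]; push_cast; field_simp; ring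
  rw [Finset.sum_congr rfl hA, Finset.sum_sub_distrib]
  have h1 : ∑ T ∈ powersetCard (b+2) (univ : Finset (Fin (c+2))), ∑ i ∈ T, (z i)^2
      = ((c+1).choose (b+1) : ℝ) * ∑ i, (z i)^2 := by
    have := sum_T_single (c+2) (b+1) (fun i => (z i)^2)
    norm_num at this ⊢
    convert this using 2
  have h2 : ∑ T ∈ powersetCard (b+2) (univ : Finset (Fin (c+2))),
        (∑ i ∈ T, z i)^2/((b:ℝ)+2)
      = (((c+1).choose (b+1) : ℝ) * ∑ i, (z i)^2
          + (c.choose b : ℝ) * (0 - ∑ i, (z i)^2))/((b:ℝ)+2) := by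
    rw [← Finset.sum_div]
    have := sum_T_sq (c+2) b z
    norm_num at this
    rw [this, hz]
    norm_num
  rw [h1, h2]
  have hc1 : (((c+2).choose (b+2) : ℝ)) * ((b:ℝ)+2)
      = ((c:ℝ)+2) * (((c+1).choose (b+1) : ℝ)) := by
    have := Nat.add_one_mul_choose_eq (c+1) (b+1)
    exact_mod_cast this.symm
  have hc2 : (((c+1).choose (b+1) : ℝ)) * ((b:ℝ)+1)
      = ((c:ℝ)+1) * ((c.choose b : ℝ)) := by
    have := Nat.add_one_mul_choose_eq c b
    exact_mod_cast this.symm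
  have hN : ((c:ℝ)+2) - 1 ≠ 0 := by intro h; nlinarith [Nat.cast_nonneg (α := ℝ) c]
  push_cast
  field_simp
  linear_combination (-((b:ℝ)+1) * (∑ i, (z i) ^ 2)) * hc1 - (∑ i, (z i) ^ 2) * hc2
lemma sum_compl_eq (n m : ℕ) (hmn : m ≤ n) (f : Finset (Fin n) → ℝ) :
    ∑ T ∈ powersetCard m (univ : Finset (Fin n)), f Tᶜ
      = ∑ S ∈ powersetCard (n-m) (univ : Finset (Fin n)), f S := by
  apply Finset.sum_nbij' (fun T => Tᶜ) (fun S => Sᶜ)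
  · intro T hT
    rw [mem_powersetCard_univ] at hT ⊢
    rw [Finset.card_compl, hT, Fintype.card_fin]
  · intro S hS
    rw [mem_powersetCard_univ] at hS ⊢
    rw [Finset.card_compl, hS, Fintype.card_fin]
    omega
  · intro T _; exact compl_compl T
  · intro S _; exact compl_compl S
  · intro T _; rfl
/-- Neyman's conservative estimator `V̂ₙᵃ` has bias
`(1/(n-1)) { Sₙ²(y₁) + Sₙ²(y₀) - 2 Sₙ(y₁,y₀) } ≥ 0` (complete randomization
of all `n = N` units, treated group `T` of size `m`, control its complement). -/
theorem stmt3 (n m : ℕ) (hm : 2 ≤ m) (hmn : m + 2 ≤ n) (y1 y0 : Fin n → ℝ) :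
    let μ1 := (∑ i, y1 i) / (n : ℝ)
    let μ0 := (∑ i, y0 i) / (n : ℝ)
    let S1 := (∑ i, (y1 i - μ1) ^ 2) / (n : ℝ)
    let S0 := (∑ i, (y0 i - μ0) ^ 2) / (n : ℝ)
    let S10 := (∑ i, (y1 i - μ1) * (y0 i - μ0)) / (n : ℝ)
    let Vn := (1 / ((n : ℝ) - 1)) * (((n : ℝ) - m) / m * S1
        + (m : ℝ) / ((n - m : ℕ) : ℝ) * S0 + 2 * S10)
    let A := Finset.powersetCard m (Finset.univ : Finset (Fin n))
    let Va : Finset (Fin n) → ℝ := fun T =>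
      ((n : ℝ) / ((n : ℝ) - 1)) *
        ((((n : ℝ) - 1) / ((n : ℝ) * ((m : ℝ) - 1))
            * ∑ i ∈ T, (y1 i - (∑ j ∈ T, y1 j) / (m : ℝ)) ^ 2) / (m : ℝ)
         + (((n : ℝ) - 1) / ((n : ℝ) * (((n - m : ℕ) : ℝ) - 1))
            * ∑ i ∈ Tᶜ, (y0 i - (∑ j ∈ Tᶜ, y0 j) / ((n - m : ℕ) : ℝ)) ^ 2)
              / ((n - m : ℕ) : ℝ))
    ((∑ T ∈ A, Va T) / (A.card : ℝ)) - Vn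
        = (1 / ((n : ℝ) - 1)) * (S1 + S0 - 2 * S10)
      ∧ 0 ≤ (1 / ((n : ℝ) - 1)) * (S1 + S0 - 2 * S10) := by
  intro μ1 μ0 S1 S0 S10 Vn A Va
  have hm' : m ≤ n := by omega
  have hn0 : (n:ℝ) ≠ 0 := by
    have : 0 < n := by omega
    exact_mod_cast this.ne'
  have hn1 : (n:ℝ) - 1 ≠ 0 := by
    have : (2:ℝ) ≤ n := by exact_mod_cast (by omega : 2 ≤ n)
    intro h; nlinarith
  have hm0 : (m:ℝ) ≠ 0 := by
    have : 0 < m := by omega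
    exact_mod_cast this.ne'
  have hm1 : (m:ℝ) - 1 ≠ 0 := by
    have : (2:ℝ) ≤ m := by exact_mod_cast hm
    intro h; nlinarith
  have hnmcast : ((n - m : ℕ) : ℝ) = (n:ℝ) - m := by
    exact Nat.cast_sub hm'
  have hnm0' : (n:ℝ) - (m:ℝ) ≠ 0 := by
    have h2 : (2:ℝ) ≤ (n:ℝ) - m := by
      rw [← hnmcast]; exact_mod_cast (by omega : 2 ≤ n - m)
    intro h; nlinarith
  have hnm0 : ((n - m : ℕ) : ℝ) ≠ 0 := by
    have : 0 < n - m := by omega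
    exact_mod_cast this.ne'
  have hnm1 : ((n - m : ℕ) : ℝ) - 1 ≠ 0 := by
    have : (2:ℝ) ≤ ((n - m : ℕ) : ℝ) := by exact_mod_cast (by omega : 2 ≤ n - m)
    intro h; nlinarith
  have hch : (0:ℝ) < (n.choose m : ℝ) := by
    exact_mod_cast Nat.choose_pos hm'
  have hz1 : ∑ i, (y1 i - μ1) = 0 := by
    rw [Finset.sum_sub_distrib, Finset.sum_const, card_univ, Fintype.card_fin, nsmul_eq_mul]
    simp only [μ1]
    field_simp
    ring
  have hz0 : ∑ i, (y0 i - μ0) = 0 := by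
    rw [Finset.sum_sub_distrib, Finset.sum_const, card_univ, Fintype.card_fin, nsmul_eq_mul]
    simp only [μ0]
    field_simp
    ring
  constructor
  · have hVaT : ∀ T ∈ A, Va T = ((n:ℝ)/((n:ℝ)-1)) *
        ((((n:ℝ)-1)/((n:ℝ)*((m:ℝ)-1))
            * ∑ i ∈ T, ((y1 i - μ1) - (∑ j ∈ T, (y1 j - μ1))/(m:ℝ))^2)/(m:ℝ)
         + (((n:ℝ)-1)/((n:ℝ)*(((n-m:ℕ):ℝ)-1))
            * ∑ i ∈ Tᶜ, ((y0 i - μ0) - (∑ j ∈ Tᶜ, (y0 j - μ0))/((n-m:ℕ):ℝ))^2)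
              /((n-m:ℕ):ℝ)) := by
      intro T hT
      have hcT : (T.card : ℝ) = (m:ℝ) := by
        exact_mod_cast mem_powersetCard_univ.1 hT
      have hcTcn : Tᶜ.card = n - m := by
        rw [Finset.card_compl, Fintype.card_fin, mem_powersetCard_univ.1 hT]
      have hcTc : (Tᶜ.card : ℝ) = ((n-m:ℕ):ℝ) := by exact_mod_cast hcTcn
      have es1 : ∑ i ∈ T, (y1 i - (∑ j ∈ T, y1 j)/(m:ℝ))^2
          = ∑ i ∈ T, ((y1 i - μ1) - (∑ j ∈ T, (y1 j - μ1))/(m:ℝ))^2 := by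
        refine Finset.sum_congr rfl fun i _ => ?_
        rw [Finset.sum_sub_distrib, Finset.sum_const, nsmul_eq_mul, hcT]
        congr 1
        field_simp
        ring
      have es0 : ∑ i ∈ Tᶜ, (y0 i - (∑ j ∈ Tᶜ, y0 j)/((n-m:ℕ):ℝ))^2
          = ∑ i ∈ Tᶜ, ((y0 i - μ0) - (∑ j ∈ Tᶜ, (y0 j - μ0))/((n-m:ℕ):ℝ))^2 := by
        refine Finset.sum_congr rfl fun i _ => ?_
        rw [Finset.sum_sub_distrib, Finset.sum_const, nsmul_eq_mul, hcTc]
        congr 1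
        field_simp
        ring
      simp only [Va]
      rw [es1, es0]
    rw [Finset.sum_congr rfl hVaT]
    rw [← Finset.mul_sum, Finset.sum_add_distrib, ← Finset.sum_div, ← Finset.mul_sum,
      ← Finset.sum_div, ← Finset.mul_sum]
    have K1 := key n m hm (by omega) (fun i => y1 i - μ1) hz1
    have K0 := key n (n - m) (by omega) (by omega) (fun i => y0 i - μ0) hz0
    beta_reduce at K1 K0
    have hcompl : ∑ T ∈ A, ∑ i ∈ Tᶜ, ((y0 i - μ0) - (∑ j ∈ Tᶜ, (y0 j - μ0))/((n-m:ℕ):ℝ))^2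
        = ∑ S ∈ powersetCard (n-m) (univ : Finset (Fin n)),
            ∑ i ∈ S, ((y0 i - μ0) - (∑ j ∈ S, (y0 j - μ0))/((n-m:ℕ):ℝ))^2 := by
      simp only [A]
      exact sum_compl_eq n m hm'
        (fun S => ∑ i ∈ S, ((y0 i - μ0) - (∑ j ∈ S, (y0 j - μ0))/((n-m:ℕ):ℝ))^2)
    rw [hcompl, K0]
    simp only [A]
    rw [K1]
    have hAcard : ((powersetCard m (univ : Finset (Fin n))).card : ℝ) = (n.choose m : ℝ) := by
      rw [Finset.card_powersetCard, card_univ, Fintype.card_fin]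
    rw [hAcard]
    have hchs : ((n.choose (n-m) : ℕ) : ℝ) = ((n.choose m : ℕ) : ℝ) := by
      exact_mod_cast Nat.choose_symm hm'
    rw [hchs]
    simp only [Vn, S1, S0, S10]
    set P1 := ∑ i, (y1 i - μ1)^2 with hP1
    set P0 := ∑ i, (y0 i - μ0)^2 with hP0
    set P10 := ∑ i, (y1 i - μ1)*(y0 i - μ0) with hP10
    simp only [hnmcast]
    have hnm1' : (n:ℝ) - (m:ℝ) - 1 ≠ 0 := by rw [hnmcast] at hnm1; intro h; apply hnm1; linarith
    field_simp
    ring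
  · have hkey : S1 + S0 - 2 * S10 = (∑ i, ((y1 i - μ1) - (y0 i - μ0))^2) / n := by
      simp only [S1, S0, S10]
      rw [Finset.sum_congr rfl (fun i (_ : i ∈ univ) => show ((y1 i - μ1) - (y0 i - μ0))^2
        = (y1 i - μ1)^2 + (y0 i - μ0)^2 - 2*((y1 i - μ1)*(y0 i - μ0)) by ring),
        Finset.sum_sub_distrib, Finset.sum_add_distrib, ← Finset.mul_sum]
      ring
    rw [hkey]
    have h1 : (0:ℝ) ≤ 1 / ((n:ℝ) - 1) := by
      have : (2:ℝ) ≤ n := by exact_mod_cast (by omega : 2 ≤ n)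
      apply div_nonneg zero_le_one; linarith
    have h2 : (0:ℝ) ≤ (∑ i, ((y1 i - μ1) - (y0 i - μ0))^2) / n := by
      apply div_nonneg (Finset.sum_nonneg fun i _ => sq_nonneg _) (Nat.cast_nonneg n)
    exact mul_nonneg h1 h2
end

section
/- For any two distribution functions G and F on ℝ with common bivariate couplings, E_{H^L}[XY] ≤ E_H[XY] ≤ E_{H^H}[XY] for every joint distribution H with marginals G and F, where H^H(x,y) = min{G(x),F(y)} and H^L(x,y) = max{0, G(x)+F(y)−1}, provided the relevant expectations exist. -/
open MeasureTheory

section Stmt7Aux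

open Set Filter

noncomputable def phi7 (x s : ℝ) : ℝ :=
  (Iio x).indicator 1 s - (Iio (0:ℝ)).indicator 1 s

lemma phi7_eq (x : ℝ) :
    phi7 x = fun s => (Ico (0:ℝ) x).indicator 1 s - (Ico x (0:ℝ)).indicator 1 s := by
  funext s
  rcases le_or_gt 0 s with hs | hs <;> rcases lt_or_ge s x with hx | hx
  · simp [phi7, indicator, hs, hx, not_lt.2 hs]
  · simp [phi7, indicator, hs, not_lt.2 hs, not_lt.2 hx]
  · simp [phi7, indicator, hs, hx, not_le.2 hs, not_le.2 hx]
  · simp [phi7, indicator, hs, not_le.2 hs, not_lt.2 hx, hx]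

lemma ind7_integrable (a b : ℝ) : Integrable ((Ico a b).indicator (1 : ℝ → ℝ)) :=
  (integrable_indicator_iff measurableSet_Ico).2
    (integrableOn_const measure_Ico_lt_top.ne)

lemma phi7_integrable (x : ℝ) : Integrable (phi7 x) := by
  rw [phi7_eq]; exact (ind7_integrable 0 x).sub (ind7_integrable x 0)

lemma phi7_integral (x : ℝ) : ∫ s, phi7 x s = x := by
  rw [phi7_eq, integral_sub (ind7_integrable 0 x) (ind7_integrable x 0),
    integral_indicator_one measurableSet_Ico, integral_indicator_one measurableSet_Ico,
    Real.volume_real_Ico, Real.volume_real_Ico]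
  rcases le_total 0 x with h | h <;> simp [max_def] <;> split_ifs <;> linarith

lemma phi7_abs (x s : ℝ) :
    |phi7 x s| = (Ico (0:ℝ) x).indicator 1 s + (Ico x (0:ℝ)).indicator 1 s := by
  rcases le_or_gt 0 s with hs | hs <;> rcases lt_or_ge s x with hx | hx
  · simp [phi7, indicator, hs, hx, not_lt.2 hs]
  · simp [phi7, indicator, hs, not_lt.2 hs, not_lt.2 hx]
  · simp [phi7, indicator, hs, hx, not_le.2 hs, not_le.2 hx]
  · simp [phi7, indicator, hs, not_le.2 hs, not_lt.2 hx, hx]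

lemma phi7_abs_integral (x : ℝ) : ∫ s, |phi7 x s| = |x| := by
  simp_rw [phi7_abs]
  rw [integral_add (ind7_integrable 0 x) (ind7_integrable x 0),
    integral_indicator_one measurableSet_Ico, integral_indicator_one measurableSet_Ico,
    Real.volume_real_Ico, Real.volume_real_Ico]
  rcases le_total 0 x with h | h <;>
    simp [max_def, abs_of_nonneg, abs_of_nonpos, h] <;> split_ifs <;> linarith

noncomputable def fk7 : (ℝ × ℝ) → (ℝ × ℝ) → ℝ := fun p z => phi7 p.1 z.1 * phi7 p.2 z.2

lemma phi7_meas2 : Measurable (fun q : ℝ × ℝ => phi7 q.1 q.2) := by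
  have h1 : Measurable fun q : ℝ × ℝ => (Iio q.1).indicator (1:ℝ→ℝ) q.2 := by
    have he : (fun q : ℝ × ℝ => (Iio q.1).indicator (1:ℝ→ℝ) q.2)
        = {q : ℝ × ℝ | q.2 < q.1}.indicator 1 := by
      funext q; by_cases h : q.2 < q.1 <;> simp [indicator, h]
    rw [he]
    exact measurable_const.indicator (measurableSet_lt measurable_snd measurable_fst)
  have h2 : Measurable fun q : ℝ × ℝ => (Iio (0:ℝ)).indicator (1:ℝ→ℝ) q.2 :=
    (measurable_const.indicator measurableSet_Iio).comp measurable_snd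
  exact h1.sub h2

lemma fk7_meas : Measurable (Function.uncurry fk7) := by
  have : Function.uncurry fk7 =
      fun q : (ℝ × ℝ) × (ℝ × ℝ) => phi7 q.1.1 q.2.1 * phi7 q.1.2 q.2.2 := rfl
  rw [this]
  exact (phi7_meas2.comp ((measurable_fst.fst).prodMk (measurable_snd.fst))).mul
    (phi7_meas2.comp ((measurable_fst.snd).prodMk (measurable_snd.snd)))

lemma fubini_key7 (μ : Measure (ℝ × ℝ)) [IsProbabilityMeasure μ]
    (hi : Integrable (fun p : ℝ × ℝ => p.1 * p.2) μ) :
    Integrable (fun z : ℝ × ℝ => ∫ p, fk7 p z ∂μ) volume ∧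
      ∫ z, ∫ p, fk7 p z ∂μ = ∫ p, p.1 * p.2 ∂μ := by
  have hFi : Integrable (Function.uncurry fk7) (μ.prod volume) := by
    rw [integrable_prod_iff (fk7_meas.aestronglyMeasurable)]
    constructor
    · refine Filter.Eventually.of_forall (fun p => ?_)
      have he : (fun z : ℝ × ℝ => Function.uncurry fk7 (p, z))
          = fun z : ℝ × ℝ => phi7 p.1 z.1 * phi7 p.2 z.2 := rfl
      rw [he, Measure.volume_eq_prod]
      exact (phi7_integrable p.1).mul_prod (phi7_integrable p.2)
    · have he : (fun p : ℝ × ℝ => ∫ z, ‖Function.uncurry fk7 (p, z)‖)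
          = fun p : ℝ × ℝ => |p.1 * p.2| := by
        funext p
        have h1 : ∀ z : ℝ × ℝ, ‖Function.uncurry fk7 (p, z)‖ = |phi7 p.1 z.1| * |phi7 p.2 z.2| := by
          intro z
          rw [Real.norm_eq_abs]
          exact abs_mul _ _
        simp_rw [h1]
        rw [Measure.volume_eq_prod,
          integral_prod_mul (fun s => |phi7 p.1 s|) (fun t => |phi7 p.2 t|),
          phi7_abs_integral, phi7_abs_integral, ← abs_mul]
      rw [he]
      exact hi.abs
  refine ⟨hFi.integral_prod_right, ?_⟩
  have h1 : ∫ p, (∫ z, fk7 p z) ∂μ = ∫ p, p.1 * p.2 ∂μ := by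
    refine integral_congr_ae (Filter.Eventually.of_forall fun p => ?_)
    have h2 : (∫ z, fk7 p z) = (∫ s, phi7 p.1 s) * ∫ t, phi7 p.2 t := by
      rw [show (fun z : ℝ × ℝ => fk7 p z) = fun z : ℝ × ℝ => phi7 p.1 z.1 * phi7 p.2 z.2 from rfl,
        Measure.volume_eq_prod]
      exact integral_prod_mul _ _
    show (∫ z, fk7 p z) = p.1 * p.2
    rw [h2, phi7_integral, phi7_integral]
  rw [← h1]
  exact (integral_integral_swap hFi).symm

lemma gval7 (μ : Measure (ℝ × ℝ)) [IsProbabilityMeasure μ] (z : ℝ × ℝ) :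
    ∫ p, fk7 p z ∂μ =
      (μ (Ioi z.1 ×ˢ Ioi z.2)).toReal
        - (if z.2 < 0 then (1:ℝ) else 0) * (μ (Ioi z.1 ×ˢ univ)).toReal
        - (if z.1 < 0 then (1:ℝ) else 0) * (μ (univ ×ˢ Ioi z.2)).toReal
        + (if z.1 < 0 then (1:ℝ) else 0) * (if z.2 < 0 then (1:ℝ) else 0) := by
  set a : ℝ := if z.1 < 0 then (1:ℝ) else 0 with ha
  set b : ℝ := if z.2 < 0 then (1:ℝ) else 0 with hb
  have hpt : ∀ p : ℝ × ℝ, fk7 p z =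
      (Ioi z.1 ×ˢ Ioi z.2).indicator 1 p - b * ((Ioi z.1 ×ˢ univ).indicator 1 p)
        - a * ((univ ×ˢ Ioi z.2).indicator 1 p) + a * b := by
    intro p
    by_cases h1 : z.1 < p.1 <;> by_cases h2 : z.2 < p.2 <;>
      simp [fk7, phi7, indicator, h1, h2, ← ha, ← hb, Set.mem_prod] <;> ring
  have hm1 : MeasurableSet (Ioi z.1 ×ˢ Ioi z.2 : Set (ℝ × ℝ)) :=
    measurableSet_Ioi.prod measurableSet_Ioi
  have hm2 : MeasurableSet (Ioi z.1 ×ˢ univ : Set (ℝ × ℝ)) :=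
    measurableSet_Ioi.prod MeasurableSet.univ
  have hm3 : MeasurableSet (univ ×ˢ Ioi z.2 : Set (ℝ × ℝ)) :=
    MeasurableSet.univ.prod measurableSet_Ioi
  have i1 : Integrable ((Ioi z.1 ×ˢ Ioi z.2).indicator (1 : ℝ × ℝ → ℝ)) μ :=
    (integrable_const 1).indicator hm1
  have i2 : Integrable ((Ioi z.1 ×ˢ univ).indicator (1 : ℝ × ℝ → ℝ)) μ :=
    (integrable_const 1).indicator hm2
  have i3 : Integrable ((univ ×ˢ Ioi z.2).indicator (1 : ℝ × ℝ → ℝ)) μ :=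
    (integrable_const 1).indicator hm3
  calc ∫ p, fk7 p z ∂μ
      = ∫ p, ((Ioi z.1 ×ˢ Ioi z.2).indicator 1 p - b * ((Ioi z.1 ×ˢ univ).indicator 1 p)
          - a * ((univ ×ˢ Ioi z.2).indicator 1 p) + a * b) ∂μ := by
        exact integral_congr_ae (Filter.Eventually.of_forall hpt)
    _ = (μ (Ioi z.1 ×ˢ Ioi z.2)).toReal - b * (μ (Ioi z.1 ×ˢ univ)).toReal
          - a * (μ (univ ×ˢ Ioi z.2)).toReal + a * b := by
        have i2b : Integrable (fun p : ℝ × ℝ => b * (Ioi z.1 ×ˢ univ).indicator 1 p) μ :=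
          i2.const_mul b
        have i3a : Integrable (fun p : ℝ × ℝ => a * (univ ×ˢ Ioi z.2).indicator 1 p) μ :=
          i3.const_mul a
        have iA : Integrable (fun p : ℝ × ℝ => (Ioi z.1 ×ˢ Ioi z.2).indicator 1 p
            - b * (Ioi z.1 ×ˢ univ).indicator 1 p) μ := i1.sub i2b
        have iB : Integrable (fun p : ℝ × ℝ => (Ioi z.1 ×ˢ Ioi z.2).indicator 1 p
            - b * (Ioi z.1 ×ˢ univ).indicator 1 p
            - a * (univ ×ˢ Ioi z.2).indicator 1 p) μ := iA.sub i3a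
        rw [integral_add iB (integrable_const (a * b)),
          integral_sub iA i3a,
          integral_sub i1 i2b,
          integral_const_mul, integral_const_mul,
          integral_indicator_one hm1, integral_indicator_one hm2, integral_indicator_one hm3]
        simp [measureReal_def]

lemma survival7 (μ : Measure (ℝ × ℝ)) [IsProbabilityMeasure μ] (s t : ℝ) :
    (μ (Ioi s ×ˢ Ioi t)).toReal =
      1 - (μ (Iic s ×ˢ univ)).toReal - (μ (univ ×ˢ Iic t)).toReal
        + (μ (Iic s ×ˢ Iic t)).toReal := by
  have hmA : MeasurableSet (Iic s ×ˢ (univ : Set ℝ)) := measurableSet_Iic.prod .univ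
  have hmB : MeasurableSet ((univ : Set ℝ) ×ˢ Iic t) := MeasurableSet.univ.prod measurableSet_Iic
  have hset : (Ioi s ×ˢ Ioi t : Set (ℝ × ℝ)) = ((Iic s ×ˢ univ) ∪ (univ ×ˢ Iic t))ᶜ := by
    ext p
    simp [not_or, not_le]
  have hu := measure_union_add_inter (μ := μ) (Iic s ×ˢ univ) hmB
  have hinter : (Iic s ×ˢ (univ : Set ℝ)) ∩ ((univ : Set ℝ) ×ˢ Iic t) = Iic s ×ˢ Iic t := by
    rw [Set.prod_inter_prod]; simp
  rw [hinter] at hu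
  have hu' := congrArg ENNReal.toReal hu
  rw [ENNReal.toReal_add (measure_ne_top _ _) (measure_ne_top _ _),
    ENNReal.toReal_add (measure_ne_top _ _) (measure_ne_top _ _)] at hu'
  rw [hset, prob_compl_eq_one_sub (hmA.union hmB),
    ENNReal.toReal_sub_of_le prob_le_one ENNReal.one_ne_top, ENNReal.toReal_one]
  linarith

lemma compl_fst7 (μ : Measure (ℝ × ℝ)) [IsProbabilityMeasure μ] (s : ℝ) :
    (μ (Ioi s ×ˢ univ)).toReal = 1 - (μ (Iic s ×ˢ univ)).toReal := by
  have hset : (Ioi s ×ˢ univ : Set (ℝ × ℝ)) = (Iic s ×ˢ univ)ᶜ := by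
    ext p; simp [not_le]
  rw [hset, prob_compl_eq_one_sub (measurableSet_Iic.prod .univ),
    ENNReal.toReal_sub_of_le prob_le_one ENNReal.one_ne_top, ENNReal.toReal_one]

lemma compl_snd7 (μ : Measure (ℝ × ℝ)) [IsProbabilityMeasure μ] (t : ℝ) :
    (μ (univ ×ˢ Ioi t)).toReal = 1 - (μ (univ ×ˢ Iic t)).toReal := by
  have hset : ((univ : Set ℝ) ×ˢ Ioi t : Set (ℝ × ℝ)) = (univ ×ˢ Iic t)ᶜ := by
    ext p; simp [not_le]
  rw [hset, prob_compl_eq_one_sub (MeasurableSet.univ.prod measurableSet_Iic),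
    ENNReal.toReal_sub_of_le prob_le_one ENNReal.one_ne_top, ENNReal.toReal_one]

lemma marg_fst7 (μ : Measure (ℝ × ℝ)) [IsProbabilityMeasure μ] {s c : ℝ}
    (h : Tendsto (fun n : ℕ => (μ (Iic s ×ˢ Iic (n:ℝ))).toReal) atTop (nhds c)) :
    (μ (Iic s ×ˢ univ)).toReal = c := by
  have hmono : Monotone fun n : ℕ => (Iic s ×ˢ Iic (n:ℝ) : Set (ℝ × ℝ)) := fun m n hmn =>
    Set.prod_mono subset_rfl (Set.Iic_subset_Iic.2 (by exact_mod_cast hmn))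
  have hU : (⋃ n : ℕ, (Iic s ×ˢ Iic (n:ℝ) : Set (ℝ × ℝ))) = Iic s ×ˢ univ := by
    ext p
    simp only [Set.mem_iUnion, Set.mem_prod, Set.mem_Iic, Set.mem_univ, and_true]
    constructor
    · rintro ⟨n, h1, _⟩; exact h1
    · intro h1
      obtain ⟨n, hn⟩ := exists_nat_ge p.2
      exact ⟨n, h1, hn⟩
  have ht := tendsto_measure_iUnion_atTop (μ := μ) hmono
  rw [hU] at ht
  exact tendsto_nhds_unique ((ENNReal.tendsto_toReal (measure_ne_top μ _)).comp ht) h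

lemma marg_snd7 (μ : Measure (ℝ × ℝ)) [IsProbabilityMeasure μ] {t c : ℝ}
    (h : Tendsto (fun n : ℕ => (μ (Iic (n:ℝ) ×ˢ Iic t)).toReal) atTop (nhds c)) :
    (μ (univ ×ˢ Iic t)).toReal = c := by
  have hmono : Monotone fun n : ℕ => (Iic (n:ℝ) ×ˢ Iic t : Set (ℝ × ℝ)) := fun m n hmn =>
    Set.prod_mono (Set.Iic_subset_Iic.2 (by exact_mod_cast hmn)) subset_rfl
  have hU : (⋃ n : ℕ, (Iic (n:ℝ) ×ˢ Iic t : Set (ℝ × ℝ))) = univ ×ˢ Iic t := by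
    ext p
    simp only [Set.mem_iUnion, Set.mem_prod, Set.mem_Iic, Set.mem_univ, true_and]
    constructor
    · rintro ⟨n, _, h1⟩; exact h1
    · intro h1
      obtain ⟨n, hn⟩ := exists_nat_ge p.1
      exact ⟨n, hn, h1⟩
  have ht := tendsto_measure_iUnion_atTop (μ := μ) hmono
  rw [hU] at ht
  exact tendsto_nhds_unique ((ENNReal.tendsto_toReal (measure_ne_top μ _)).comp ht) h

end Stmt7Aux

open Set Filter

/-- Hoeffding–Fréchet bounds: for any joint distribution `ν` with marginal
distribution functions `G` and `F`, the expectation of the product is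
sandwiched between the expectations under the lower Fréchet bound
`H^L(x,y) = max{0, G(x)+F(y)-1}` and the upper Fréchet bound
`H^H(x,y) = min{G(x), F(y)}`. -/
theorem stmt7 (G F : ℝ → ℝ) (ν μH μL : Measure (ℝ × ℝ))
    [IsProbabilityMeasure ν] [IsProbabilityMeasure μH] [IsProbabilityMeasure μL]
    (hνG : ∀ x : ℝ, (ν (Set.Iic x ×ˢ Set.univ)).toReal = G x)
    (hνF : ∀ y : ℝ, (ν (Set.univ ×ˢ Set.Iic y)).toReal = F y)
    (hH : ∀ x y : ℝ, (μH (Set.Iic x ×ˢ Set.Iic y)).toReal = min (G x) (F y))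
    (hL : ∀ x y : ℝ, (μL (Set.Iic x ×ˢ Set.Iic y)).toReal = max 0 (G x + F y - 1))
    (hi : Integrable (fun p : ℝ × ℝ => p.1 * p.2) ν)
    (hiH : Integrable (fun p : ℝ × ℝ => p.1 * p.2) μH)
    (hiL : Integrable (fun p : ℝ × ℝ => p.1 * p.2) μL) :
    (∫ p, p.1 * p.2 ∂μL) ≤ (∫ p, p.1 * p.2 ∂ν) ∧
    (∫ p, p.1 * p.2 ∂ν) ≤ (∫ p, p.1 * p.2 ∂μH) := by
  -- bounds on G, F
  have hG01 : ∀ x, 0 ≤ G x ∧ G x ≤ 1 := by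
    intro x
    rw [← hνG x]
    exact ⟨ENNReal.toReal_nonneg,
      by simpa using ENNReal.toReal_mono ENNReal.one_ne_top (prob_le_one (μ := ν))⟩
  have hF01 : ∀ y, 0 ≤ F y ∧ F y ≤ 1 := by
    intro y
    rw [← hνF y]
    exact ⟨ENNReal.toReal_nonneg,
      by simpa using ENNReal.toReal_mono ENNReal.one_ne_top (prob_le_one (μ := ν))⟩
  -- G(n) → 1 and F(n) → 1
  have hFlim : Tendsto (fun n : ℕ => F n) atTop (nhds 1) := by
    have hmono : Monotone fun n : ℕ => ((univ : Set ℝ) ×ˢ Iic (n:ℝ) : Set (ℝ × ℝ)) := fun m n hmn =>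
      Set.prod_mono subset_rfl (Set.Iic_subset_Iic.2 (by exact_mod_cast hmn))
    have hU : (⋃ n : ℕ, ((univ : Set ℝ) ×ˢ Iic (n:ℝ) : Set (ℝ × ℝ))) = univ := by
      ext p
      simp only [Set.mem_iUnion, Set.mem_prod, Set.mem_Iic, Set.mem_univ, true_and, iff_true]
      exact exists_nat_ge p.2
    have ht := tendsto_measure_iUnion_atTop (μ := ν) hmono
    rw [hU, measure_univ] at ht
    have h2 := (ENNReal.tendsto_toReal ENNReal.one_ne_top).comp ht
    simp only [Function.comp_def, ENNReal.toReal_one] at h2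
    simpa only [hνF] using h2
  have hGlim : Tendsto (fun n : ℕ => G n) atTop (nhds 1) := by
    have hmono : Monotone fun n : ℕ => (Iic (n:ℝ) ×ˢ (univ : Set ℝ) : Set (ℝ × ℝ)) := fun m n hmn =>
      Set.prod_mono (Set.Iic_subset_Iic.2 (by exact_mod_cast hmn)) subset_rfl
    have hU : (⋃ n : ℕ, (Iic (n:ℝ) ×ˢ (univ : Set ℝ) : Set (ℝ × ℝ))) = univ := by
      ext p
      simp only [Set.mem_iUnion, Set.mem_prod, Set.mem_Iic, Set.mem_univ, and_true, iff_true]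
      exact exists_nat_ge p.1
    have ht := tendsto_measure_iUnion_atTop (μ := ν) hmono
    rw [hU, measure_univ] at ht
    have h2 := (ENNReal.tendsto_toReal ENNReal.one_ne_top).comp ht
    simp only [Function.comp_def, ENNReal.toReal_one] at h2
    simpa only [hνG] using h2
  -- marginals of μH
  have hHG : ∀ s : ℝ, (μH (Iic s ×ˢ univ)).toReal = G s := by
    intro s
    refine marg_fst7 μH ?_
    have : Tendsto (fun n : ℕ => min (G s) (F n)) atTop (nhds (min (G s) 1)) :=
      tendsto_const_nhds.min hFlim
    rw [min_eq_left (hG01 s).2] at this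
    simpa only [hH] using this
  have hHF : ∀ t : ℝ, (μH (univ ×ˢ Iic t)).toReal = F t := by
    intro t
    refine marg_snd7 μH ?_
    have : Tendsto (fun n : ℕ => min (G n) (F t)) atTop (nhds (min 1 (F t))) :=
      hGlim.min tendsto_const_nhds
    rw [min_eq_right (hF01 t).2] at this
    simpa only [hH] using this
  -- marginals of μL
  have hLG : ∀ s : ℝ, (μL (Iic s ×ˢ univ)).toReal = G s := by
    intro s
    refine marg_fst7 μL ?_
    have h1 : Tendsto (fun n : ℕ => max 0 (G s + F n - 1)) atTop
        (nhds (max 0 (G s + 1 - 1))) :=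
      tendsto_const_nhds.max ((tendsto_const_nhds.add hFlim).sub tendsto_const_nhds)
    have h2 : max (0:ℝ) (G s + 1 - 1) = G s := by
      rw [max_eq_right]
      · ring
      · linarith [(hG01 s).1]
    rw [h2] at h1
    simpa only [hL] using h1
  have hLF : ∀ t : ℝ, (μL (univ ×ˢ Iic t)).toReal = F t := by
    intro t
    refine marg_snd7 μL ?_
    have h1 : Tendsto (fun n : ℕ => max 0 (G n + F t - 1)) atTop
        (nhds (max 0 (1 + F t - 1))) :=
      tendsto_const_nhds.max ((hGlim.add tendsto_const_nhds).sub tendsto_const_nhds)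
    have h2 : max (0:ℝ) (1 + F t - 1) = F t := by
      rw [max_eq_right]
      · ring
      · linarith [(hF01 t).1]
    rw [h2] at h1
    simpa only [hL] using h1
  -- pointwise comparison of the integrands
  have hub : ∀ z : ℝ × ℝ, (∫ p, fk7 p z ∂ν) ≤ ∫ p, fk7 p z ∂μH := by
    intro z
    rw [gval7 ν z, gval7 μH z, survival7 ν z.1 z.2, survival7 μH z.1 z.2,
      compl_fst7 ν z.1, compl_fst7 μH z.1, compl_snd7 ν z.2, compl_snd7 μH z.2,
      hνG, hνF, hHG, hHF, hH]
    have h1 : (ν (Iic z.1 ×ˢ Iic z.2)).toReal ≤ G z.1 := by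
      rw [← hνG z.1]
      exact ENNReal.toReal_mono (measure_ne_top _ _)
        (measure_mono (Set.prod_mono subset_rfl (subset_univ _)))
    have h2 : (ν (Iic z.1 ×ˢ Iic z.2)).toReal ≤ F z.2 := by
      rw [← hνF z.2]
      exact ENNReal.toReal_mono (measure_ne_top _ _)
        (measure_mono (Set.prod_mono (subset_univ _) subset_rfl))
    have h3 := le_min h1 h2
    nlinarith [h3]
  have hlb : ∀ z : ℝ × ℝ, (∫ p, fk7 p z ∂μL) ≤ ∫ p, fk7 p z ∂ν := by
    intro z
    rw [gval7 ν z, gval7 μL z, survival7 ν z.1 z.2, survival7 μL z.1 z.2,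
      compl_fst7 ν z.1, compl_fst7 μL z.1, compl_snd7 ν z.2, compl_snd7 μL z.2,
      hνG, hνF, hLG, hLF, hL]
    have h0 : 0 ≤ (ν (Ioi z.1 ×ˢ Ioi z.2)).toReal := ENNReal.toReal_nonneg
    rw [survival7 ν z.1 z.2, hνG, hνF] at h0
    have h3 : max 0 (G z.1 + F z.2 - 1) ≤ (ν (Iic z.1 ×ˢ Iic z.2)).toReal :=
      max_le ENNReal.toReal_nonneg (by linarith)
    nlinarith [h3]
  obtain ⟨iν, eν⟩ := fubini_key7 ν hi
  obtain ⟨iH, eH⟩ := fubini_key7 μH hiH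
  obtain ⟨iL, eL⟩ := fubini_key7 μL hiL
  constructor
  · rw [← eν, ← eL]
    exact integral_mono iL iν fun z => hlb z
  · rw [← eν, ← eH]
    exact integral_mono iν iH fun z => hub z
end

section
/- For random variables X, Y bounded by C (|X|, |Y| ≤ C a.s.) with joint distribution function H and marginals G, F, the covariance admits Hoeffding's representation: E[XY] − E[X]E[Y] = ∫_{−C}^{C}∫_{−C}^{C} {H(x,y) − G(x)F(y)} dx dy. -/
open MeasureTheory

lemma bdd_integrable {α : Type*} [MeasurableSpace α] {ν : Measure α} [IsFiniteMeasure ν]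
    {f : α → ℝ} (hm : AEStronglyMeasurable f ν) {M : ℝ} (hb : ∀ a, |f a| ≤ M) :
    Integrable f ν :=
  Integrable.mono' (integrable_const M) hm
    (Filter.Eventually.of_forall (by simpa [Real.norm_eq_abs] using hb))

lemma ind_integral (C t : ℝ) (h1 : -C ≤ t) (h2 : t ≤ C) :
    ∫ x in Set.Ioc (-C) C, (if t ≤ x then (1:ℝ) else 0) = C - t := by
  have he : (fun x => if t ≤ x then (1:ℝ) else 0)
      = Set.indicator (Set.Ici t) (fun _ => (1:ℝ)) := by
    ext x; simp [Set.indicator_apply, Set.mem_Ici]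
  rw [he, integral_indicator measurableSet_Ici]
  rw [setIntegral_const, measureReal_def, Measure.restrict_apply measurableSet_Ici]
  have hmeas : volume (Set.Ici t ∩ Set.Ioc (-C) C) = ENNReal.ofReal (C - t) := by
    apply le_antisymm
    · calc volume (Set.Ici t ∩ Set.Ioc (-C) C) ≤ volume (Set.Icc t C) := by
            apply measure_mono; rintro x ⟨hx1, hx2⟩; exact ⟨hx1, hx2.2⟩
      _ = ENNReal.ofReal (C - t) := Real.volume_Icc
    · calc ENNReal.ofReal (C - t) = volume (Set.Ioc t C) := Real.volume_Ioc.symm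
      _ ≤ volume (Set.Ici t ∩ Set.Ioc (-C) C) := by
            apply measure_mono; rintro x ⟨hx1, hx2⟩
            exact ⟨le_of_lt hx1, lt_of_le_of_lt h1 hx1, hx2⟩
  rw [hmeas, smul_eq_mul, mul_one, ENNReal.toReal_ofReal (by linarith : (0:ℝ) ≤ C - t)]

lemma swap_helper {Ω : Type*} [MeasurableSpace Ω] (P : Measure Ω) [IsProbabilityMeasure P]
    (C : ℝ) (F : Ω × ℝ → ℝ) (hm : Measurable F) {M : ℝ} (hb : ∀ p, |F p| ≤ M) :
    ∫ ω, (∫ x in Set.Ioc (-C) C, F (ω, x)) ∂P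
      = ∫ x in Set.Ioc (-C) C, (∫ ω, F (ω, x) ∂P) := by
  haveI : IsFiniteMeasure (volume.restrict (Set.Ioc (-C) C)) :=
    ⟨by rw [Measure.restrict_apply_univ]; exact measure_Ioc_lt_top⟩
  exact integral_integral_swap (f := fun ω x => F (ω, x))
    (bdd_integrable hm.aestronglyMeasurable hb)

/-- Hoeffding's covariance identity: for random variables `X, Y` bounded by
`C`, `Cov(X,Y) = ∫_{-C}^{C} ∫_{-C}^{C} { H(x,y) - G(x) F(y) } dx dy`, where
`H` is the joint distribution function and `G, F` the marginals. -/
theorem stmt8 (Ω : Type*) [MeasurableSpace Ω] (P : Measure Ω) [IsProbabilityMeasure P]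
    (X Y : Ω → ℝ) (hX : Measurable X) (hY : Measurable Y) (C : ℝ)
    (hXb : ∀ ω, |X ω| ≤ C) (hYb : ∀ ω, |Y ω| ≤ C) :
    (∫ ω, X ω * Y ω ∂P) - (∫ ω, X ω ∂P) * (∫ ω, Y ω ∂P) =
      ∫ x in (-C)..C, ∫ y in (-C)..C,
        ((P {ω | X ω ≤ x ∧ Y ω ≤ y}).toReal
          - (P {ω | X ω ≤ x}).toReal * (P {ω | Y ω ≤ y}).toReal) := by
  -- Ω is nonempty, hence 0 ≤ C
  have hne : Nonempty Ω := by
    rcases isEmpty_or_nonempty Ω with h | h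
    · exfalso
      have h1 : P Set.univ = 1 := measure_univ
      rw [Set.univ_eq_empty_iff.mpr h] at h1
      simp at h1
    · exact h
  obtain ⟨ω₀⟩ := hne
  have hC : 0 ≤ C := le_trans (abs_nonneg _) (hXb ω₀)
  haveI hfin : IsFiniteMeasure (volume.restrict (Set.Ioc (-C) C)) :=
    ⟨by rw [Measure.restrict_apply_univ]; exact measure_Ioc_lt_top⟩
  -- basic integrabilities over P
  have intX : Integrable X P := bdd_integrable hX.aestronglyMeasurable hXb
  have intY : Integrable Y P := bdd_integrable hY.aestronglyMeasurable hYb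
  have intXY : Integrable (fun ω => X ω * Y ω) P := by
    refine bdd_integrable (hX.mul hY).aestronglyMeasurable (M := C * C) (fun ω => ?_)
    rw [abs_mul]
    exact mul_le_mul (hXb ω) (hYb ω) (abs_nonneg _) hC
  -- indicator integral facts
  have k1X : ∀ ω, ∫ x in Set.Ioc (-C) C, (if X ω ≤ x then (1:ℝ) else 0) = C - X ω :=
    fun ω => ind_integral C (X ω) (abs_le.mp (hXb ω)).1 (abs_le.mp (hXb ω)).2
  have k1Y : ∀ ω, ∫ y in Set.Ioc (-C) C, (if Y ω ≤ y then (1:ℝ) else 0) = C - Y ω :=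
    fun ω => ind_integral C (Y ω) (abs_le.mp (hYb ω)).1 (abs_le.mp (hYb ω)).2
  have k2X : ∀ x : ℝ, ∫ ω, (if X ω ≤ x then (1:ℝ) else 0) ∂P = (P {ω | X ω ≤ x}).toReal := by
    intro x
    have hs : MeasurableSet {ω | X ω ≤ x} := hX measurableSet_Iic
    calc ∫ ω, (if X ω ≤ x then (1:ℝ) else 0) ∂P
        = ∫ ω, Set.indicator {ω | X ω ≤ x} (fun _ => (1:ℝ)) ω ∂P := by
          simp [Set.indicator_apply]
      _ = (P {ω | X ω ≤ x}).toReal := by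
          rw [integral_indicator hs, setIntegral_const, smul_eq_mul, mul_one, measureReal_def]
  have k2Y : ∀ y : ℝ, ∫ ω, (if Y ω ≤ y then (1:ℝ) else 0) ∂P = (P {ω | Y ω ≤ y}).toReal := by
    intro y
    have hs : MeasurableSet {ω | Y ω ≤ y} := hY measurableSet_Iic
    calc ∫ ω, (if Y ω ≤ y then (1:ℝ) else 0) ∂P
        = ∫ ω, Set.indicator {ω | Y ω ≤ y} (fun _ => (1:ℝ)) ω ∂P := by
          simp [Set.indicator_apply]
      _ = (P {ω | Y ω ≤ y}).toReal := by
          rw [integral_indicator hs, setIntegral_const, smul_eq_mul, mul_one, measureReal_def]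
  have k2H : ∀ x y : ℝ, ∫ ω, (if X ω ≤ x then (1:ℝ) else 0) * (if Y ω ≤ y then (1:ℝ) else 0) ∂P
      = (P {ω | X ω ≤ x ∧ Y ω ≤ y}).toReal := by
    intro x y
    have hs : MeasurableSet {ω | X ω ≤ x ∧ Y ω ≤ y} :=
      (hX measurableSet_Iic).inter (hY measurableSet_Iic)
    calc ∫ ω, (if X ω ≤ x then (1:ℝ) else 0) * (if Y ω ≤ y then (1:ℝ) else 0) ∂P
        = ∫ ω, Set.indicator {ω | X ω ≤ x ∧ Y ω ≤ y} (fun _ => (1:ℝ)) ω ∂P := by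
          refine integral_congr_ae (Filter.Eventually.of_forall fun ω => ?_)
          by_cases h1 : X ω ≤ x <;> by_cases h2 : Y ω ≤ y <;>
            simp [Set.indicator_apply, h1, h2]
      _ = (P {ω | X ω ≤ x ∧ Y ω ≤ y}).toReal := by
          rw [integral_indicator hs, setIntegral_const, smul_eq_mul, mul_one, measureReal_def]
  -- measurability of indicator-type maps on Ω × ℝ
  have mXp : Measurable (fun p : Ω × ℝ => if X p.1 ≤ p.2 then (1:ℝ) else 0) :=
    Measurable.ite (measurableSet_le (hX.comp measurable_fst) measurable_snd)
      measurable_const measurable_const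
  have mYp : Measurable (fun p : Ω × ℝ => if Y p.1 ≤ p.2 then (1:ℝ) else 0) :=
    Measurable.ite (measurableSet_le (hY.comp measurable_fst) measurable_snd)
      measurable_const measurable_const
  have b1X : ∀ p : Ω × ℝ, |if X p.1 ≤ p.2 then (1:ℝ) else 0| ≤ 1 := by
    intro p; by_cases h : X p.1 ≤ p.2 <;> simp [h]
  have b1Y : ∀ p : Ω × ℝ, |if Y p.1 ≤ p.2 then (1:ℝ) else 0| ≤ 1 := by
    intro p; by_cases h : Y p.1 ≤ p.2 <;> simp [h]
  -- marginal integrals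
  have hG : ∫ x in Set.Ioc (-C) C, (P {ω | X ω ≤ x}).toReal = C - ∫ ω, X ω ∂P := by
    calc ∫ x in Set.Ioc (-C) C, (P {ω | X ω ≤ x}).toReal
        = ∫ x in Set.Ioc (-C) C, ∫ ω, (if X ω ≤ x then (1:ℝ) else 0) ∂P :=
          setIntegral_congr_fun measurableSet_Ioc fun x _ => (k2X x).symm
      _ = ∫ ω, (∫ x in Set.Ioc (-C) C, (if X ω ≤ x then (1:ℝ) else 0)) ∂P :=
          (swap_helper P C _ mXp b1X).symm
      _ = ∫ ω, (C - X ω) ∂P :=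
          integral_congr_ae (Filter.Eventually.of_forall fun ω => k1X ω)
      _ = C - ∫ ω, X ω ∂P := by
          rw [integral_sub (integrable_const C) intX, integral_const]
          simp [measure_univ]
  have hF : ∫ y in Set.Ioc (-C) C, (P {ω | Y ω ≤ y}).toReal = C - ∫ ω, Y ω ∂P := by
    calc ∫ y in Set.Ioc (-C) C, (P {ω | Y ω ≤ y}).toReal
        = ∫ y in Set.Ioc (-C) C, ∫ ω, (if Y ω ≤ y then (1:ℝ) else 0) ∂P :=
          setIntegral_congr_fun measurableSet_Ioc fun y _ => (k2Y y).symm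
      _ = ∫ ω, (∫ y in Set.Ioc (-C) C, (if Y ω ≤ y then (1:ℝ) else 0)) ∂P :=
          (swap_helper P C _ mYp b1Y).symm
      _ = ∫ ω, (C - Y ω) ∂P :=
          integral_congr_ae (Filter.Eventually.of_forall fun ω => k1Y ω)
      _ = C - ∫ ω, Y ω ∂P := by
          rw [integral_sub (integrable_const C) intY, integral_const]
          simp [measure_univ]
  -- the joint distribution double integral
  have hinner : ∀ x : ℝ, ∫ y in Set.Ioc (-C) C, (P {ω | X ω ≤ x ∧ Y ω ≤ y}).toReal
      = ∫ ω, (if X ω ≤ x then (1:ℝ) else 0) * (C - Y ω) ∂P := by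
    intro x
    have m2 : Measurable (fun p : Ω × ℝ =>
        (if X p.1 ≤ x then (1:ℝ) else 0) * (if Y p.1 ≤ p.2 then (1:ℝ) else 0)) :=
      (Measurable.ite (measurableSet_le (hX.comp measurable_fst) measurable_const)
        measurable_const measurable_const).mul mYp
    have b2 : ∀ p : Ω × ℝ,
        |(if X p.1 ≤ x then (1:ℝ) else 0) * (if Y p.1 ≤ p.2 then (1:ℝ) else 0)| ≤ 1 := by
      intro p; rw [abs_mul]
      calc |if X p.1 ≤ x then (1:ℝ) else 0| * |if Y p.1 ≤ p.2 then (1:ℝ) else 0|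
          ≤ 1 * 1 := mul_le_mul (by split <;> simp) (b1Y p) (abs_nonneg _) one_pos.le
        _ = 1 := one_mul 1
    calc ∫ y in Set.Ioc (-C) C, (P {ω | X ω ≤ x ∧ Y ω ≤ y}).toReal
        = ∫ y in Set.Ioc (-C) C,
            ∫ ω, (if X ω ≤ x then (1:ℝ) else 0) * (if Y ω ≤ y then (1:ℝ) else 0) ∂P :=
          setIntegral_congr_fun measurableSet_Ioc fun y _ => (k2H x y).symm
      _ = ∫ ω, (∫ y in Set.Ioc (-C) C,
            (if X ω ≤ x then (1:ℝ) else 0) * (if Y ω ≤ y then (1:ℝ) else 0)) ∂P :=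
          (swap_helper P C _ m2 b2).symm
      _ = ∫ ω, (if X ω ≤ x then (1:ℝ) else 0) * (C - Y ω) ∂P := by
          refine integral_congr_ae (Filter.Eventually.of_forall fun ω => ?_)
          simp only [integral_const_mul, k1Y ω]
  have hHeq : ∫ x in Set.Ioc (-C) C, ∫ y in Set.Ioc (-C) C,
      (P {ω | X ω ≤ x ∧ Y ω ≤ y}).toReal = ∫ ω, (C - X ω) * (C - Y ω) ∂P := by
    have m3 : Measurable (fun p : Ω × ℝ =>
        (if X p.1 ≤ p.2 then (1:ℝ) else 0) * (C - Y p.1)) :=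
      mXp.mul (measurable_const.sub (hY.comp measurable_fst))
    have b3 : ∀ p : Ω × ℝ, |(if X p.1 ≤ p.2 then (1:ℝ) else 0) * (C - Y p.1)| ≤ 2 * C := by
      intro p
      have hy := abs_le.mp (hYb p.1)
      rw [abs_mul]
      calc |if X p.1 ≤ p.2 then (1:ℝ) else 0| * |C - Y p.1|
          ≤ 1 * (2 * C) := mul_le_mul (b1X p)
            (abs_le.mpr ⟨by linarith, by linarith⟩) (abs_nonneg _) one_pos.le
        _ = 2 * C := one_mul _
    calc ∫ x in Set.Ioc (-C) C, ∫ y in Set.Ioc (-C) C,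
        (P {ω | X ω ≤ x ∧ Y ω ≤ y}).toReal
        = ∫ x in Set.Ioc (-C) C, ∫ ω, (if X ω ≤ x then (1:ℝ) else 0) * (C - Y ω) ∂P :=
          setIntegral_congr_fun measurableSet_Ioc fun x _ => hinner x
      _ = ∫ ω, (∫ x in Set.Ioc (-C) C, (if X ω ≤ x then (1:ℝ) else 0) * (C - Y ω)) ∂P :=
          (swap_helper P C _ m3 b3).symm
      _ = ∫ ω, (C - X ω) * (C - Y ω) ∂P := by
          refine integral_congr_ae (Filter.Eventually.of_forall fun ω => ?_)
          simp only [integral_mul_const, k1X ω]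
  -- integrabilities over the interval
  have bP : ∀ s : Set Ω, |(P s).toReal| ≤ 1 := by
    intro s
    rw [abs_of_nonneg ENNReal.toReal_nonneg]
    calc (P s).toReal ≤ (1 : ENNReal).toReal :=
          ENNReal.toReal_mono ENNReal.one_ne_top prob_le_one
      _ = 1 := ENNReal.toReal_one
  have intF : Integrable (fun y => (P {ω | Y ω ≤ y}).toReal)
      (volume.restrict (Set.Ioc (-C) C)) := by
    have mono : Monotone (fun y => (P {ω | Y ω ≤ y}).toReal) := fun a b hab =>
      ENNReal.toReal_mono (measure_ne_top P _) (measure_mono fun ω h => le_trans h hab)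
    exact bdd_integrable mono.measurable.aestronglyMeasurable (fun y => bP _)
  have intG : Integrable (fun x => (P {ω | X ω ≤ x}).toReal)
      (volume.restrict (Set.Ioc (-C) C)) := by
    have mono : Monotone (fun x => (P {ω | X ω ≤ x}).toReal) := fun a b hab =>
      ENNReal.toReal_mono (measure_ne_top P _) (measure_mono fun ω h => le_trans h hab)
    exact bdd_integrable mono.measurable.aestronglyMeasurable (fun x => bP _)
  have intHx : ∀ x : ℝ, Integrable (fun y => (P {ω | X ω ≤ x ∧ Y ω ≤ y}).toReal)
      (volume.restrict (Set.Ioc (-C) C)) := by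
    intro x
    have mono : Monotone (fun y => (P {ω | X ω ≤ x ∧ Y ω ≤ y}).toReal) := fun a b hab =>
      ENNReal.toReal_mono (measure_ne_top P _)
        (measure_mono fun ω h => ⟨h.1, le_trans h.2 hab⟩)
    exact bdd_integrable mono.measurable.aestronglyMeasurable (fun y => bP _)
  have intIH : Integrable
      (fun x => ∫ y in Set.Ioc (-C) C, (P {ω | X ω ≤ x ∧ Y ω ≤ y}).toReal)
      (volume.restrict (Set.Ioc (-C) C)) := by
    have mono : Monotone
        (fun x => ∫ y in Set.Ioc (-C) C, (P {ω | X ω ≤ x ∧ Y ω ≤ y}).toReal) := by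
      intro a b hab
      refine integral_mono (intHx a) (intHx b) (fun y => ?_)
      exact ENNReal.toReal_mono (measure_ne_top P _)
        (measure_mono fun ω h => ⟨le_trans h.1 hab, h.2⟩)
    refine bdd_integrable mono.measurable.aestronglyMeasurable
      (M := (volume (Set.Ioc (-C) C)).toReal) (fun x => ?_)
    calc |∫ y in Set.Ioc (-C) C, (P {ω | X ω ≤ x ∧ Y ω ≤ y}).toReal|
        ≤ ∫ y in Set.Ioc (-C) C, |(P {ω | X ω ≤ x ∧ Y ω ≤ y}).toReal| := by
          simpa [Real.norm_eq_abs] using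
            norm_integral_le_integral_norm (μ := volume.restrict (Set.Ioc (-C) C))
              (fun y => (P {ω | X ω ≤ x ∧ Y ω ≤ y}).toReal)
      _ ≤ ∫ y in Set.Ioc (-C) C, (1:ℝ) :=
          integral_mono (intHx x).abs (integrable_const 1) (fun y => bP _)
      _ = (volume (Set.Ioc (-C) C)).toReal := by
          rw [setIntegral_const, smul_eq_mul, mul_one, measureReal_def]
  -- expansion of the product integral
  have hexp : ∫ ω, (C - X ω) * (C - Y ω) ∂P
      = C * C - C * (∫ ω, Y ω ∂P) - (∫ ω, X ω ∂P) * C + ∫ ω, X ω * Y ω ∂P := by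
    have he : ∀ ω, (C - X ω) * (C - Y ω)
        = C * C - C * Y ω - X ω * C + X ω * Y ω := fun ω => by ring
    have iC : Integrable (fun ω => C * Y ω) P := intY.const_mul C
    have iD : Integrable (fun ω => X ω * C) P := intX.mul_const C
    have iB : Integrable (fun ω => C * C - C * Y ω) P := (integrable_const (C * C)).sub iC
    have iA : Integrable (fun ω => C * C - C * Y ω - X ω * C) P := iB.sub iD
    rw [integral_congr_ae (Filter.Eventually.of_forall he)]
    rw [integral_add iA intXY, integral_sub iB iD,
      integral_sub (integrable_const (C * C)) iC, integral_const,
      integral_const_mul, integral_mul_const]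
    simp [measure_univ]
  -- assemble
  rw [intervalIntegral.integral_of_le (by linarith : -C ≤ C)]
  simp only [intervalIntegral.integral_of_le (show -C ≤ C by linarith)]
  have hsplit : ∀ x : ℝ, ∫ y in Set.Ioc (-C) C,
      ((P {ω | X ω ≤ x ∧ Y ω ≤ y}).toReal
        - (P {ω | X ω ≤ x}).toReal * (P {ω | Y ω ≤ y}).toReal)
      = (∫ y in Set.Ioc (-C) C, (P {ω | X ω ≤ x ∧ Y ω ≤ y}).toReal)
        - (P {ω | X ω ≤ x}).toReal * (C - ∫ ω, Y ω ∂P) := by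
    intro x
    rw [integral_sub (intHx x) (intF.const_mul _), integral_const_mul, hF]
  calc (∫ ω, X ω * Y ω ∂P) - (∫ ω, X ω ∂P) * (∫ ω, Y ω ∂P)
      = (∫ ω, (C - X ω) * (C - Y ω) ∂P)
        - (C - ∫ ω, X ω ∂P) * (C - ∫ ω, Y ω ∂P) := by rw [hexp]; ring
    _ = (∫ x in Set.Ioc (-C) C, ∫ y in Set.Ioc (-C) C,
          (P {ω | X ω ≤ x ∧ Y ω ≤ y}).toReal)
        - (∫ x in Set.Ioc (-C) C, (P {ω | X ω ≤ x}).toReal) * (C - ∫ ω, Y ω ∂P) := by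
          rw [hHeq, hG]
    _ = ∫ x in Set.Ioc (-C) C,
          ((∫ y in Set.Ioc (-C) C, (P {ω | X ω ≤ x ∧ Y ω ≤ y}).toReal)
            - (P {ω | X ω ≤ x}).toReal * (C - ∫ ω, Y ω ∂P)) := by
          rw [integral_sub intIH (intG.mul_const _), integral_mul_const]
    _ = ∫ x in Set.Ioc (-C) C, ∫ y in Set.Ioc (-C) C,
          ((P {ω | X ω ≤ x ∧ Y ω ≤ y}).toReal
            - (P {ω | X ω ≤ x}).toReal * (P {ω | Y ω ≤ y}).toReal) :=
          setIntegral_congr_fun measurableSet_Ioc fun x _ => (hsplit x).symm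
end

section
/- The plug-in sharp upper covariance estimator satisfies Ŝ_N^H(y₁,y₀) = Σ_{i=1}^P (p_i − p_{i−1})·y_{1[i]}·y_{0[i]} − μ̂_N(y₁)μ̂_N(y₀), and the lower estimator Ŝ_N^L(y₁,y₀) = Σ_{i=1}^P (p_i − p_{i−1})·y_{1[i]}·y_{0[P+1−i]} − μ̂_N(y₁)μ̂_N(y₀), where {p_0,…,p_P} are the ordered distinct elements of {0,1/m,…,1} ∪ {0,1/(n−m),…,1}, y_{1[i]} = y_{1(⌈m p_i⌉)}, y_{0[i]} = y_{0(m+⌈(n−m)p_i⌉)} are order statistics, using the identity ∫₀¹ Ĝ_N⁻¹(u) F̂_N⁻¹(u) du = Σᵢ (p_i − p_{i−1}) y_{1[i]} y_{0[i]}. -/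
open Finset
open MeasureTheory

lemma piece_int (a b c : ℝ) (hab : a ≤ b) (F : ℝ → ℝ)
    (h : ∀ u ∈ Set.Ioo a b, F u = c) :
    IntervalIntegrable F volume a b ∧ ∫ u in a..b, F u = (b - a) * c := by
  have hb : ∀ᵐ u : ℝ, u ≠ b := by
    have : (volume : Measure ℝ) {b} = 0 := Real.volume_singleton
    exact (MeasureTheory.ae_iff).2 (by simpa using this)
  have hae : F =ᵐ[volume.restrict (Set.Ioc a b)] fun _ => c := by
    rw [Filter.EventuallyEq, ae_restrict_iff' measurableSet_Ioc]
    filter_upwards [hb] with u hu hmem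
    exact h u ⟨hmem.1, lt_of_le_of_ne hmem.2 hu⟩
  have hint : IntervalIntegrable F volume a b := by
    rw [intervalIntegrable_iff_integrableOn_Ioc_of_le hab]
    exact (integrableOn_const (C := c) measure_Ioc_lt_top.ne).congr hae.symm
  refine ⟨hint, ?_⟩
  rw [intervalIntegral.integral_of_le hab, integral_congr_ae hae]
  simp [Real.volume_Ioc, ENNReal.toReal_ofReal (sub_nonneg.2 hab), mul_comm, hab]

/-- The plug-in sharp covariance bound estimators reduce to finite sums over
the common refinement partition `{p₀,…,p_P}` on which the empirical quantile
functions `g = Ĝ⁻¹` and `f = F̂⁻¹` are piecewise constant (with values the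
order statistics `Y1 i = y₁[i]`, `Y0 i = y₀[i]` on `(p_{i-1}, p_i]`), using
the symmetry `p_i = 1 - p_{P-i}`:
`∫₀¹ g(u) f(u) du = Σᵢ (pᵢ - pᵢ₋₁) y₁[i] y₀[i]` and
`∫₀¹ g(u) f(1-u) du = Σᵢ (pᵢ - pᵢ₋₁) y₁[i] y₀[P+1-i]`. -/
theorem stmt10 (P : ℕ) (hP : 0 < P) (p : ℕ → ℝ) (Y1 Y0 : ℕ → ℝ)
    (g f : ℝ → ℝ)
    (hp0 : p 0 = 0) (hpP : p P = 1)
    (hmono : ∀ i j, i ≤ j → j ≤ P → p i ≤ p j)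
    (hg : ∀ i ∈ Finset.Icc 1 P, ∀ u ∈ Set.Ioc (p (i - 1)) (p i), g u = Y1 i)
    (hf : ∀ i ∈ Finset.Icc 1 P, ∀ u ∈ Set.Ioc (p (i - 1)) (p i), f u = Y0 i)
    (hsym : ∀ i ≤ P, p i = 1 - p (P - i)) :
    (∫ u in (0:ℝ)..1, g u * f u)
        = ∑ i ∈ Finset.Icc 1 P, (p i - p (i - 1)) * Y1 i * Y0 i ∧
    (∫ u in (0:ℝ)..1, g u * f (1 - u))
        = ∑ i ∈ Finset.Icc 1 P, (p i - p (i - 1)) * Y1 i * Y0 (P + 1 - i) := by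
  have key : ∀ (F : ℝ → ℝ) (c : ℕ → ℝ),
      (∀ i ∈ Finset.Icc 1 P, ∀ u ∈ Set.Ioo (p (i - 1)) (p i), F u = c i) →
      (∫ u in (0:ℝ)..1, F u) = ∑ i ∈ Finset.Icc 1 P, (p i - p (i - 1)) * c i := by
    intro F c hc
    have hmem : ∀ i < P, (i + 1) ∈ Finset.Icc 1 P := by
      intro i hi; simp [Finset.mem_Icc]; omega
    have hpc : ∀ i < P,
        IntervalIntegrable F volume (p i) (p (i + 1)) ∧
        ∫ u in (p i)..(p (i + 1)), F u = (p (i + 1) - p i) * c (i + 1) := by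
      intro i hi
      refine piece_int _ _ _ (hmono i (i + 1) (Nat.le_succ i) hi) F ?_
      intro u hu
      have := hc (i + 1) (hmem i hi) u (by simpa using hu)
      simpa using this
    have hsum := intervalIntegral.sum_integral_adjacent_intervals
      (a := p) (μ := volume) (f := F) (n := P) (fun i hi => (hpc i hi).1)
    rw [hp0, hpP] at hsum
    rw [← hsum]
    rw [show Finset.Icc 1 P = Finset.Ico 1 (P + 1) by ext x; simp,
      Finset.sum_Ico_eq_sum_range]
    simp only [Nat.add_sub_cancel]
    refine Finset.sum_congr rfl fun i hi => ?_
    have hi' := Finset.mem_range.1 hi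
    rw [(hpc i hi').2]
    simp only [show 1 + i - 1 = i from by omega, show 1 + i = i + 1 from by omega, Nat.add_sub_cancel]
  constructor
  · rw [key (fun u => g u * f u) (fun i => Y1 i * Y0 i) (fun i hi u hu => by
      show g u * f u = Y1 i * Y0 i
      rw [hg i hi u (Set.Ioo_subset_Ioc_self hu), hf i hi u (Set.Ioo_subset_Ioc_self hu)])]
    exact Finset.sum_congr rfl fun i _ => by ring
  · rw [key (fun u => g u * f (1 - u)) (fun i => Y1 i * Y0 (P + 1 - i)) ?_]
    · exact Finset.sum_congr rfl fun i _ => by ring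
    intro i hi u hu
    show g u * f (1 - u) = Y1 i * Y0 (P + 1 - i)
    obtain ⟨hi1, hiP⟩ := Finset.mem_Icc.1 hi
    rw [hg i hi u (Set.Ioo_subset_Ioc_self hu)]
    congr 1
    have hjmem : (P + 1 - i) ∈ Finset.Icc 1 P := by simp [Finset.mem_Icc]; omega
    refine hf (P + 1 - i) hjmem (1 - u) ?_
    have e1 : p (P + 1 - i - 1) = 1 - p i := by
      have := hsym i hiP
      have h2 : P + 1 - i - 1 = P - i := by omega
      rw [h2]; linarith
    have e2 : p (P + 1 - i) = 1 - p (i - 1) := by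
      have := hsym (P + 1 - i) (by omega)
      have h2 : P - (P + 1 - i) = i - 1 := by omega
      rw [h2] at this; linarith
    rw [e1, e2]
    constructor <;> [linarith [hu.2]; linarith [hu.1]]
end

section
/- The sharp upper bound estimator never exceeds Neyman's Cauchy–Schwarz bound estimator: V̂_N^H ≤ V̂_N^{b+}, and the sharp lower bound estimator satisfies V̂_N^L ≥ V̂_N^{b−}. Equivalently, |Ŝ_N^H(y₁,y₀)|, |Ŝ_N^L(y₁,y₀)| ≤ {Ŝ_N²(y₁)·Ŝ_N²(y₀)}^{1/2} up to the finite population correction factors. -/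
open Finset MeasureTheory


-- count lemma for monotone tuples
lemma count_mono {m : ℕ} (s : Fin m → ℝ) (hs : Monotone s) (a : Fin m) (y : ℝ) :
    ((a : ℕ) + 1 ≤ (Finset.univ.filter (fun i => s i ≤ y)).card) ↔ s a ≤ y := by
  constructor
  · intro h
    by_contra hy
    push_neg at hy
    have hsub : (Finset.univ.filter (fun i => s i ≤ y)) ⊆ Finset.Iio a := by
      intro i hi
      simp only [mem_filter] at hi
      rw [Finset.mem_Iio]
      by_contra hia
      push_neg at hia
      exact absurd (le_trans (hs hia) hi.2) (not_le.mpr hy)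
    have := Finset.card_le_card hsub
    rw [Fin.card_Iio] at this  -- maybe wrong name
    omega
  · intro h
    have hsub : Finset.Iic a ⊆ (Finset.univ.filter (fun i => s i ≤ y)) := by
      intro i hi
      rw [Finset.mem_Iic] at hi
      simp only [mem_filter, Finset.mem_univ, true_and]
      exact le_trans (hs hi) h
    have := Finset.card_le_card hsub
    rw [Fin.card_Iic] at this  -- maybe wrong name
    omega

lemma count_perm {m : ℕ} (f : Fin m → ℝ) (σ : Equiv.Perm (Fin m)) (y : ℝ) :
    (Finset.univ.filter (fun i => f (σ i) ≤ y)).card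
      = (Finset.univ.filter (fun i => f i ≤ y)).card := by
  apply Finset.card_bij (fun i _ => σ i)
  · intro i hi; simp only [mem_filter, Finset.mem_univ, true_and] at *; exact hi
  · intro i _ j _ h; exact σ.injective h
  · intro j hj
    refine ⟨σ.symm j, ?_, by simp⟩
    simp only [mem_filter, Finset.mem_univ, true_and, Equiv.apply_symm_apply] at *
    exact hj

-- quantile value lemma
lemma quantile_eq {m : ℕ} (hm : 0 < m) (f : Fin m → ℝ) (a : Fin m) (u : ℝ)
    (hu1 : ((a : ℕ) : ℝ) / m < u) (hu2 : u ≤ (((a : ℕ) : ℝ) + 1) / m) :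
    sInf {y : ℝ | u ≤ ((Finset.univ.filter (fun i => f i ≤ y)).card : ℝ) / m}
      = (f ∘ Tuple.sort f) a := by
  have hs := Tuple.monotone_sort f
  have hmR : (0:ℝ) < m := by exact_mod_cast hm
  have hset : {y : ℝ | u ≤ ((Finset.univ.filter (fun i => f i ≤ y)).card : ℝ) / m}
      = Set.Ici ((f ∘ Tuple.sort f) a) := by
    ext y
    simp only [Set.mem_setOf_eq, Set.mem_Ici]
    rw [le_div_iff₀ hmR]
    rw [← count_perm f (Tuple.sort f) y]
    rw [← count_mono (f ∘ Tuple.sort f) hs a y]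
    constructor
    · intro h
      have : ((a:ℕ):ℝ) < ((Finset.univ.filter (fun i => f ((Tuple.sort f) i) ≤ y)).card : ℝ) :=
        lt_of_lt_of_le (by rw [div_lt_iff₀ hmR] at hu1; linarith) h
      exact_mod_cast this
    · intro h
      have h2 : u * m ≤ ((a:ℕ):ℝ) + 1 := by rw [le_div_iff₀ hmR] at hu2; linarith
      calc u * m ≤ ((a:ℕ):ℝ) + 1 := h2
        _ ≤ _ := by exact_mod_cast h
  rw [hset, csInf_Ici]

lemma integral_step (n : ℕ) (hn : 0 < n) (φ : ℝ → ℝ) (c : ℕ → ℝ)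
    (h : ∀ j < n, ∀ u ∈ Set.Ioo ((j : ℝ) / n) (((j : ℝ) + 1) / n), φ u = c j) :
    ∫ u in (0:ℝ)..1, φ u = (1 / (n : ℝ)) * ∑ j ∈ Finset.range n, c j := by
  have hnR : (0:ℝ) < n := by exact_mod_cast hn
  set a : ℕ → ℝ := fun i => (i : ℝ) / n with ha
  have hle : ∀ j : ℕ, a j ≤ a (j+1) := by
    intro j
    simp only [ha]
    rw [div_le_div_iff₀ hnR hnR]
    push_cast
    nlinarith [hnR.le]
  have hae : ∀ j < n, φ =ᵐ[volume.restrict (Set.Ioc (a j) (a (j+1)))] (fun _ => c j) := by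
    intro j hj
    rw [← Measure.restrict_congr_set Ioo_ae_eq_Ioc]
    refine ae_restrict_of_forall_mem measurableSet_Ioo ?_
    intro u hu
    refine h j hj u ?_
    simpa [ha] using hu
  have hint : ∀ j < n, IntervalIntegrable φ volume (a j) (a (j+1)) := by
    intro j hj
    rw [intervalIntegrable_iff_integrableOn_Ioc_of_le (hle j)]
    exact (integrableOn_const measure_Ioc_lt_top.ne).congr ((hae j hj).symm)
  have hval : ∀ j < n, (∫ u in (a j)..(a (j+1)), φ u) = c j * (1 / n) := by
    intro j hj
    rw [intervalIntegral.integral_congr_ae ?_]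
    · rw [intervalIntegral.integral_const]
      simp only [smul_eq_mul, ha]
      rw [mul_comm]; congr 1; field_simp; push_cast; ring
    · rw [Set.uIoc_of_le (hle j)]
      exact ae_imp_of_ae_restrict (hae j hj)
  have key := intervalIntegral.sum_integral_adjacent_intervals (a := a) (n := n) hint
  have h0 : a 0 = 0 := by simp [ha]
  have h1 : a n = 1 := by simp only [ha]; exact div_self hnR.ne'
  rw [h0, h1] at key
  rw [← key]
  rw [Finset.sum_congr rfl (fun j hj => hval j (Finset.mem_range.mp hj))]
  rw [← Finset.sum_mul, mul_comm]

lemma sum_div_blocks (m k : ℕ) (f : ℕ → ℝ) :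
    ∑ j ∈ Finset.range (m * k), f (j / k) = (k : ℝ) * ∑ i ∈ Finset.range m, f i := by
  induction m with
  | zero => simp
  | succ m ih =>
    rw [Nat.succ_mul, Finset.sum_range_add, ih, Finset.sum_range_succ]
    have : ∀ i ∈ Finset.range k, f ((m * k + i) / k) = f m := by
      intro i hi
      rw [Finset.mem_range] at hi
      congr 1
      rw [mul_comm, Nat.mul_add_div (by omega), Nat.div_eq_of_lt hi, add_zero]
    rw [Finset.sum_congr rfl this, Finset.sum_const, Finset.card_range]
    push_cast
    ring

set_option maxHeartbeats 1000000 in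
/-- The sharp bound estimators improve on Neyman's Cauchy–Schwarz bound
estimators: `V̂_N^H ≤ V̂_N^{b+}` and `V̂_N^{b-} ≤ V̂_N^L`, where the sharp
estimators use the comonotonic/countermonotonic plug-in covariances built from
the empirical quantile functions, and the Neyman bounds use
`± 2 √(Ŝ_N²(y₁) Ŝ_N²(y₀))`. -/
theorem stmt12 (N m k : ℕ) (hm : 2 ≤ m) (hk : 2 ≤ k) (hn : m + k ≤ N)
    (yt : Fin m → ℝ) (yc : Fin k → ℝ) :
    let μ1 := (∑ i, yt i) / (m : ℝ)
    let μ0 := (∑ i, yc i) / (k : ℝ)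
    let Ghat : ℝ → ℝ := fun y => ((Finset.univ.filter (fun i => yt i ≤ y)).card : ℝ) / (m : ℝ)
    let Fhat : ℝ → ℝ := fun y => ((Finset.univ.filter (fun i => yc i ≤ y)).card : ℝ) / (k : ℝ)
    let Ginv : ℝ → ℝ := fun u => sInf {y : ℝ | u ≤ Ghat y}
    let Finv : ℝ → ℝ := fun u => sInf {y : ℝ | u ≤ Fhat y}
    let SH := (∫ u in (0:ℝ)..1, Ginv u * Finv u) - μ1 * μ0
    let SL := (∫ u in (0:ℝ)..1, Ginv u * Finv (1 - u)) - μ1 * μ0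
    let S1 := ((N : ℝ) - 1) / ((N : ℝ) * ((m : ℝ) - 1)) * ∑ i, (yt i - μ1) ^ 2
    let S0 := ((N : ℝ) - 1) / ((N : ℝ) * ((k : ℝ) - 1)) * ∑ i, (yc i - μ0) ^ 2
    let base := ((N : ℝ) - m) / m * S1 + ((N : ℝ) - k) / k * S0
    (1 / ((N : ℝ) - 1)) * (base + 2 * SH)
        ≤ (1 / ((N : ℝ) - 1)) * (base + 2 * Real.sqrt (S1 * S0)) ∧
    (1 / ((N : ℝ) - 1)) * (base - 2 * Real.sqrt (S1 * S0))
        ≤ (1 / ((N : ℝ) - 1)) * (base + 2 * SL) := by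
  intro μ1 μ0 Ghat Fhat Ginv Finv SH SL S1 S0 base
  have hm0 : 0 < m := by omega
  have hk0 : 0 < k := by omega
  have hn0 : 0 < m * k := Nat.mul_pos hm0 hk0
  have hmR : (0:ℝ) < m := by exact_mod_cast hm0
  have hkR : (0:ℝ) < k := by exact_mod_cast hk0
  have hnR : (0:ℝ) < ((m*k : ℕ) : ℝ) := by exact_mod_cast hn0
  have hN4 : (4:ℝ) ≤ (N:ℝ) := by exact_mod_cast (by omega : 4 ≤ N)
  have hNN : (0:ℝ) ≤ 1/((N:ℝ)-1) := le_of_lt (one_div_pos.mpr (by linarith))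
  set n := m * k with hn_def
  -- sorted step values
  set g : ℕ → ℝ := fun i => yt ((Tuple.sort yt) ⟨i % m, Nat.mod_lt _ hm0⟩) with hg_def
  set h : ℕ → ℝ := fun i => yc ((Tuple.sort yc) ⟨i % k, Nat.mod_lt _ hk0⟩) with hh_def
  have hg : ∀ (a : ℕ) (ha : a < m), g a = yt ((Tuple.sort yt) ⟨a, ha⟩) := by
    intro a ha; simp only [hg_def]; congr 2; exact Fin.ext (Nat.mod_eq_of_lt ha)
  have hh : ∀ (a : ℕ) (ha : a < k), h a = yc ((Tuple.sort yc) ⟨a, ha⟩) := by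
    intro a ha; simp only [hh_def]; congr 2; exact Fin.ext (Nat.mod_eq_of_lt ha)
  -- quantile step facts
  have hGinv : ∀ j < n, ∀ u ∈ Set.Ioo ((j:ℝ)/((n:ℕ):ℝ)) (((j:ℝ)+1)/((n:ℕ):ℝ)),
      Ginv u = g (j / k) := by
    intro j hj u hu
    have ha : j / k < m := (Nat.div_lt_iff_lt_mul hk0).mpr hj
    have hjk1 : (j / k) * k ≤ j := Nat.div_mul_le_self j k
    have hjk2 : j + 1 ≤ (j / k + 1) * k := (Nat.div_lt_iff_lt_mul hk0).mp (Nat.lt_succ_self _)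
    have hc1 : (((j/k : ℕ)):ℝ) * k ≤ (j:ℝ) := by exact_mod_cast hjk1
    have hc2 : (j:ℝ) + 1 ≤ (((j/k : ℕ)):ℝ) * k + k := by
      have : ((j+1 : ℕ):ℝ) ≤ (((j/k + 1) * k : ℕ):ℝ) := by exact_mod_cast hjk2
      push_cast at this; linarith
    have hnmk : ((n:ℕ):ℝ) = (m:ℝ) * k := by rw [hn_def]; push_cast; ring
    have h1 : (((j/k : ℕ)):ℝ) / m < u := by
      refine lt_of_le_of_lt ?_ hu.1
      rw [div_le_div_iff₀ hmR hnR, hnmk]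
      nlinarith [hmR.le]
    have h2 : u ≤ ((((j/k) : ℕ):ℝ) + 1) / m := by
      refine le_trans hu.2.le ?_
      rw [div_le_div_iff₀ hnR hmR, hnmk]
      nlinarith [hkR.le]
    rw [hg (j/k) ha]
    exact quantile_eq hm0 yt ⟨j/k, ha⟩ u h1 h2
  have hFinv : ∀ j < n, ∀ u ∈ Set.Ioo ((j:ℝ)/((n:ℕ):ℝ)) (((j:ℝ)+1)/((n:ℕ):ℝ)),
      Finv u = h (j / m) := by
    intro j hj u hu
    have hj' : j < k * m := by rwa [hn_def, Nat.mul_comm] at hj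
    have ha : j / m < k := (Nat.div_lt_iff_lt_mul hm0).mpr hj'
    have hjk1 : (j / m) * m ≤ j := Nat.div_mul_le_self j m
    have hjk2 : j + 1 ≤ (j / m + 1) * m := (Nat.div_lt_iff_lt_mul hm0).mp (Nat.lt_succ_self _)
    have hc1 : (((j/m : ℕ)):ℝ) * m ≤ (j:ℝ) := by exact_mod_cast hjk1
    have hc2 : (j:ℝ) + 1 ≤ (((j/m : ℕ)):ℝ) * m + m := by
      have : ((j+1 : ℕ):ℝ) ≤ (((j/m + 1) * m : ℕ):ℝ) := by exact_mod_cast hjk2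
      push_cast at this; linarith
    have hnmk : ((n:ℕ):ℝ) = (k:ℝ) * m := by rw [hn_def]; push_cast; ring
    have h1 : (((j/m : ℕ)):ℝ) / k < u := by
      refine lt_of_le_of_lt ?_ hu.1
      rw [div_le_div_iff₀ hkR hnR, hnmk]
      nlinarith [hkR.le]
    have h2 : u ≤ ((((j/m) : ℕ):ℝ) + 1) / k := by
      refine le_trans hu.2.le ?_
      rw [div_le_div_iff₀ hnR hkR, hnmk]
      nlinarith [hmR.le]
    rw [hh (j/m) ha]
    exact quantile_eq hk0 yc ⟨j/m, ha⟩ u h1 h2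
  -- reflected membership
  have hrefl : ∀ j, j < n → ∀ u ∈ Set.Ioo ((j:ℝ)/((n:ℕ):ℝ)) (((j:ℝ)+1)/((n:ℕ):ℝ)),
      (1 - u) ∈ Set.Ioo (((n-1-j : ℕ):ℝ)/((n:ℕ):ℝ)) ((((n-1-j : ℕ):ℝ)+1)/((n:ℕ):ℝ)) := by
    intro j hj u hu
    have hc : ((n-1-j : ℕ):ℝ) = ((n:ℕ):ℝ) - 1 - j := by
      have h1 : (n-1-j) + 1 + j = n := by omega
      have h2 := congrArg (Nat.cast : ℕ → ℝ) h1
      push_cast at h2; linarith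
    have e1 : ((n-1-j : ℕ):ℝ)/((n:ℕ):ℝ) = 1 - ((j:ℝ)+1)/((n:ℕ):ℝ) := by
      rw [hc]; field_simp; ring
    have e2 : (((n-1-j : ℕ):ℝ)+1)/((n:ℕ):ℝ) = 1 - (j:ℝ)/((n:ℕ):ℝ) := by
      rw [hc]; field_simp; ring
    constructor
    · rw [e1]; linarith [hu.2]
    · rw [e2]; linarith [hu.1]
  -- integral computations
  have I1 : (∫ u in (0:ℝ)..1, Ginv u * Finv u)
      = (1/((n:ℕ):ℝ)) * ∑ j ∈ Finset.range n, g (j/k) * h (j/m) := by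
    apply integral_step n hn0
    intro j hj u hu
    rw [hGinv j hj u hu, hFinv j hj u hu]
  have I2 : (∫ u in (0:ℝ)..1, Ginv u * Finv (1-u))
      = (1/((n:ℕ):ℝ)) * ∑ j ∈ Finset.range n, g (j/k) * h ((n-1-j)/m) := by
    apply integral_step n hn0
    intro j hj u hu
    rw [hGinv j hj u hu, hFinv (n-1-j) (by omega) (1-u) (hrefl j hj u hu)]
  -- sums over blocks
  have hsum_gF : ∀ F : ℝ → ℝ, ∑ i ∈ Finset.range m, F (g i) = ∑ i, F (yt i) := by
    intro F
    rw [← Fin.sum_univ_eq_sum_range (fun i => F (g i)) m]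
    calc ∑ i : Fin m, F (g ↑i) = ∑ i : Fin m, F (yt ((Tuple.sort yt) i)) :=
          Finset.sum_congr rfl (fun i _ => by rw [hg ↑i i.isLt])
      _ = _ := Equiv.sum_comp (Tuple.sort yt) (fun i => F (yt i))
  have hsum_hF : ∀ F : ℝ → ℝ, ∑ i ∈ Finset.range k, F (h i) = ∑ i, F (yc i) := by
    intro F
    rw [← Fin.sum_univ_eq_sum_range (fun i => F (h i)) k]
    calc ∑ i : Fin k, F (h ↑i) = ∑ i : Fin k, F (yc ((Tuple.sort yc) i)) :=
          Finset.sum_congr rfl (fun i _ => by rw [hh ↑i i.isLt])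
      _ = _ := Equiv.sum_comp (Tuple.sort yc) (fun i => F (yc i))
  have Sg1 : ∑ j ∈ Finset.range n, g (j/k) = (k:ℝ) * ∑ i, yt i := by
    rw [hn_def, sum_div_blocks m k g, hsum_gF (fun x => x)]
  have Sh1 : ∑ j ∈ Finset.range n, h (j/m) = (m:ℝ) * ∑ i, yc i := by
    rw [hn_def, Nat.mul_comm, sum_div_blocks k m h, hsum_hF (fun x => x)]
  set P1 : ℝ := ∑ i, (yt i - μ1) ^ 2 with hP1_def
  set P0 : ℝ := ∑ i, (yc i - μ0) ^ 2 with hP0_def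
  have hP1 : 0 ≤ P1 := Finset.sum_nonneg fun i _ => sq_nonneg _
  have hP0 : 0 ≤ P0 := Finset.sum_nonneg fun i _ => sq_nonneg _
  have Sg2 : ∑ j ∈ Finset.range n, (g (j/k) - μ1) ^ 2 = (k:ℝ) * P1 := by
    rw [hn_def, sum_div_blocks m k (fun i => (g i - μ1)^2), hsum_gF (fun x => (x - μ1)^2)]
  have Sh2 : ∑ j ∈ Finset.range n, (h (j/m) - μ0) ^ 2 = (m:ℝ) * P0 := by
    rw [hn_def, Nat.mul_comm, sum_div_blocks k m (fun i => (h i - μ0)^2),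
      hsum_hF (fun x => (x - μ0)^2)]
  have Sh1r : ∑ j ∈ Finset.range n, h ((n-1-j)/m) = (m:ℝ) * ∑ i, yc i := by
    rw [Finset.sum_range_reflect (fun j => h (j/m)) n]; exact Sh1
  have Sh2r : ∑ j ∈ Finset.range n, (h ((n-1-j)/m) - μ0) ^ 2 = (m:ℝ) * P0 := by
    rw [Finset.sum_range_reflect (fun j => (h (j/m) - μ0)^2) n]; exact Sh2
  have hμ1def : μ1 = (∑ i, yt i) / (m:ℝ) := rfl
  have hμ0def : μ0 = (∑ i, yc i) / (k:ℝ) := rfl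
  have hnmk : ((n:ℕ):ℝ) = (m:ℝ) * k := by rw [hn_def]; push_cast; ring
  -- expansions
  have expand1 : ∑ j ∈ Finset.range n, (g (j/k) - μ1) * (h (j/m) - μ0)
      = (∑ j ∈ Finset.range n, g (j/k) * h (j/m)) - ((n:ℕ):ℝ) * (μ1 * μ0) := by
    rw [Finset.sum_congr rfl (fun j _ => show (g (j/k) - μ1) * (h (j/m) - μ0)
      = g (j/k) * h (j/m) - μ0 * g (j/k) - μ1 * h (j/m) + μ1*μ0 from by ring)]
    rw [Finset.sum_add_distrib, Finset.sum_sub_distrib, Finset.sum_sub_distrib,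
      ← Finset.mul_sum, ← Finset.mul_sum, Sg1, Sh1, Finset.sum_const, Finset.card_range,
      nsmul_eq_mul, hμ1def, hμ0def, hnmk]
    field_simp
    ring
  have expand2 : ∑ j ∈ Finset.range n, (g (j/k) - μ1) * (h ((n-1-j)/m) - μ0)
      = (∑ j ∈ Finset.range n, g (j/k) * h ((n-1-j)/m)) - ((n:ℕ):ℝ) * (μ1 * μ0) := by
    rw [Finset.sum_congr rfl (fun j _ => show (g (j/k) - μ1) * (h ((n-1-j)/m) - μ0)
      = g (j/k) * h ((n-1-j)/m) - μ0 * g (j/k) - μ1 * h ((n-1-j)/m) + μ1*μ0 from by ring)]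
    rw [Finset.sum_add_distrib, Finset.sum_sub_distrib, Finset.sum_sub_distrib,
      ← Finset.mul_sum, ← Finset.mul_sum, Sg1, Sh1r, Finset.sum_const, Finset.card_range,
      nsmul_eq_mul, hμ1def, hμ0def, hnmk]
    field_simp
    ring
  -- sqrt algebra
  have hQ1 : (0:ℝ) ≤ P1/m := div_nonneg hP1 hmR.le
  have hQ0 : (0:ℝ) ≤ P0/k := div_nonneg hP0 hkR.le
  have hkey : Real.sqrt ((k:ℝ)*P1) * Real.sqrt ((m:ℝ)*P0)
      = ((n:ℕ):ℝ) * Real.sqrt ((P1/m) * (P0/k)) := by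
    rw [← Real.sqrt_mul (mul_nonneg hkR.le hP1),
      show ((n:ℕ):ℝ) = Real.sqrt (((n:ℕ):ℝ)^2) from (Real.sqrt_sq hnR.le).symm,
      ← Real.sqrt_mul (sq_nonneg _)]
    congr 1
    rw [hnmk]
    field_simp
  -- Cauchy-Schwarz
  have CS1 : (∑ j ∈ Finset.range n, (g (j/k) - μ1) * (h (j/m) - μ0))
      ≤ ((n:ℕ):ℝ) * Real.sqrt ((P1/m) * (P0/k)) := by
    have t := Real.sum_mul_le_sqrt_mul_sqrt (Finset.range n)
      (fun j => g (j/k) - μ1) (fun j => h (j/m) - μ0)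
    rwa [Sg2, Sh2, hkey] at t
  have CS2 : -(∑ j ∈ Finset.range n, (g (j/k) - μ1) * (h ((n-1-j)/m) - μ0))
      ≤ ((n:ℕ):ℝ) * Real.sqrt ((P1/m) * (P0/k)) := by
    have t := Real.sum_mul_le_sqrt_mul_sqrt (Finset.range n)
      (fun j => g (j/k) - μ1) (fun j => -(h ((n-1-j)/m) - μ0))
    simp only [mul_neg, Finset.sum_neg_distrib, neg_sq] at t
    rwa [Sg2, Sh2r, hkey] at t
  -- bounds on the variance pieces
  have hNR : (m:ℝ) + k ≤ (N:ℝ) := by exact_mod_cast hn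
  have hmR2 : (2:ℝ) ≤ m := by exact_mod_cast hm
  have hkR2 : (2:ℝ) ≤ k := by exact_mod_cast hk
  have hS1def : S1 = ((N:ℝ)-1)/((N:ℝ)*((m:ℝ)-1)) * P1 := rfl
  have hS0def : S0 = ((N:ℝ)-1)/((N:ℝ)*((k:ℝ)-1)) * P0 := rfl
  have hNpos : (0:ℝ) < (N:ℝ)*((m:ℝ)-1) := by nlinarith
  have hNpos' : (0:ℝ) < (N:ℝ)*((k:ℝ)-1) := by nlinarith
  have hcoef1 : 1/(m:ℝ) ≤ ((N:ℝ)-1)/((N:ℝ)*((m:ℝ)-1)) := by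
    rw [div_le_div_iff₀ hmR hNpos]; nlinarith
  have hcoef0 : 1/(k:ℝ) ≤ ((N:ℝ)-1)/((N:ℝ)*((k:ℝ)-1)) := by
    rw [div_le_div_iff₀ hkR hNpos']; nlinarith
  have hQS1 : P1/m ≤ S1 := by
    rw [hS1def, show P1/(m:ℝ) = 1/(m:ℝ) * P1 from by ring]
    exact mul_le_mul_of_nonneg_right hcoef1 hP1
  have hQS0 : P0/k ≤ S0 := by
    rw [hS0def, show P0/(k:ℝ) = 1/(k:ℝ) * P0 from by ring]
    exact mul_le_mul_of_nonneg_right hcoef0 hP0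
  have hS1nn : 0 ≤ S1 := le_trans hQ1 hQS1
  have hsqrt_le : Real.sqrt ((P1/m) * (P0/k)) ≤ Real.sqrt (S1 * S0) :=
    Real.sqrt_le_sqrt (mul_le_mul hQS1 hQS0 hQ0 hS1nn)
  -- value of SH and SL
  have hSHval : SH = (1/((n:ℕ):ℝ)) * ∑ j ∈ Finset.range n, (g (j/k) - μ1) * (h (j/m) - μ0) := by
    show (∫ u in (0:ℝ)..1, Ginv u * Finv u) - μ1 * μ0 = _
    rw [I1, expand1]
    field_simp
  have hSLval : SL = (1/((n:ℕ):ℝ)) * ∑ j ∈ Finset.range n, (g (j/k) - μ1) * (h ((n-1-j)/m) - μ0) := by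
    show (∫ u in (0:ℝ)..1, Ginv u * Finv (1-u)) - μ1 * μ0 = _
    rw [I2, expand2]
    field_simp
  have hninv : (0:ℝ) < 1/((n:ℕ):ℝ) := by positivity
  have hid : (1/((n:ℕ):ℝ)) * (((n:ℕ):ℝ) * Real.sqrt ((P1/m) * (P0/k)))
      = Real.sqrt ((P1/m) * (P0/k)) := by
    rw [← mul_assoc, one_div, inv_mul_cancel₀ (ne_of_gt hnR), one_mul]
  have final1 : SH ≤ Real.sqrt (S1 * S0) := by
    rw [hSHval]
    calc (1/((n:ℕ):ℝ)) * ∑ j ∈ Finset.range n, (g (j/k) - μ1) * (h (j/m) - μ0)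
        ≤ (1/((n:ℕ):ℝ)) * (((n:ℕ):ℝ) * Real.sqrt ((P1/m) * (P0/k))) :=
          mul_le_mul_of_nonneg_left CS1 hninv.le
      _ = Real.sqrt ((P1/m) * (P0/k)) := hid
      _ ≤ _ := hsqrt_le
  have final2 : -Real.sqrt (S1 * S0) ≤ SL := by
    rw [hSLval]
    calc -Real.sqrt (S1 * S0) ≤ -Real.sqrt ((P1/m) * (P0/k)) := neg_le_neg hsqrt_le
      _ = (1/((n:ℕ):ℝ)) * (-(((n:ℕ):ℝ) * Real.sqrt ((P1/m) * (P0/k)))) := by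
          rw [mul_neg, hid]
      _ ≤ (1/((n:ℕ):ℝ)) * ∑ j ∈ Finset.range n, (g (j/k) - μ1) * (h ((n-1-j)/m) - μ0) :=
          mul_le_mul_of_nonneg_left (neg_le.1 CS2) hninv.le
  -- conclusion
  have h2nn : (0:ℝ) ≤ 2 := by norm_num
  constructor
  · exact mul_le_mul_of_nonneg_left
      (add_le_add_right (mul_le_mul_of_nonneg_left final1 h2nn) base) hNN
  · refine mul_le_mul_of_nonneg_left ?_ hNN
    calc base - 2*Real.sqrt (S1*S0) = base + 2*(-Real.sqrt (S1*S0)) := by ring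
      _ ≤ base + 2*SL := add_le_add_right (mul_le_mul_of_nonneg_left final2 h2nn) base
end

section
/- If bivariate distribution functions H_N converge pointwise to a distribution function H, the product y₁y₀ is uniformly integrable with respect to {H_N}, and H has marginals G, F, then E_{H_N}[y₁y₀] → E_H[y₁y₀]; in particular, applying this to the Fréchet couplings, the plug-in covariance bound estimators converge: Ŝ^H → sup_{h∈𝓗} Cov_h(y₁,y₀) and Ŝ^L → inf_{h∈𝓗} Cov_h(y₁,y₀), where 𝓗 is the set of all couplings of G and F. -/
open MeasureTheory Filter Set Topology


noncomputable section

/-- elementary "layer" function: `∫ s, ee s x ds = x`. -/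
def ee (s x : ℝ) : ℝ := (if s < x then (1:ℝ) else 0) - (if s < 0 then (1:ℝ) else 0)

lemma ee_of_nonneg {x : ℝ} (hx : 0 ≤ x) :
    (fun s => ee s x) = (Set.Ico 0 x).indicator (fun _ => (1:ℝ)) := by
  funext s
  simp only [ee, Set.indicator_apply, Set.mem_Ico]
  split_ifs <;> (try push_neg at *) <;> simp_all <;> linarith

lemma ee_of_neg {x : ℝ} (hx : x < 0) :
    (fun s => ee s x) = fun s => -((Set.Ico x 0).indicator (fun _ => (1:ℝ)) s) := by
  funext s
  simp only [ee, Set.indicator_apply, Set.mem_Ico]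
  split_ifs <;> (try push_neg at *) <;> simp_all <;> linarith

lemma ee_abs (x : ℝ) : (fun s => |ee s x|)
    = (Set.Ico (min x 0) (max x 0)).indicator (fun _ => (1:ℝ)) := by
  funext s
  rcases le_or_gt 0 x with hx | hx
  · rw [congrFun (ee_of_nonneg hx) s, min_eq_right hx, max_eq_left hx]
    by_cases h : s ∈ Set.Ico 0 x <;> simp [h]
  · rw [congrFun (ee_of_neg hx) s, min_eq_left hx.le, max_eq_right hx.le]
    by_cases h : s ∈ Set.Ico x 0 <;> simp [h]

lemma indicator_Ico_integrable (a b : ℝ) :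
    Integrable ((Set.Ico a b).indicator (fun _ => (1:ℝ))) := by
  exact (IntegrableOn.integrable_indicator
    (integrableOn_const measure_Ico_lt_top.ne) measurableSet_Ico)

lemma indicator_Ico_integral (a b : ℝ) (hab : a ≤ b) :
    ∫ s, (Set.Ico a b).indicator (fun _ => (1:ℝ)) s = b - a := by
  rw [integral_indicator_const (1:ℝ) measurableSet_Ico]
  simp [Real.volume_Ico, ENNReal.toReal_ofReal (by linarith : (0:ℝ) ≤ b - a), hab]

lemma ee_integrable (x : ℝ) : Integrable (fun s => ee s x) := by
  rcases le_or_gt 0 x with hx | hx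
  · rw [ee_of_nonneg hx]; exact indicator_Ico_integrable 0 x
  · rw [ee_of_neg hx]; exact (indicator_Ico_integrable x 0).neg

lemma ee_integral (x : ℝ) : ∫ s, ee s x = x := by
  rcases le_or_gt 0 x with hx | hx
  · rw [ee_of_nonneg hx, indicator_Ico_integral 0 x hx]; ring
  · rw [ee_of_neg hx, integral_neg, indicator_Ico_integral x 0 hx.le]; ring

lemma ee_abs_integrable (x : ℝ) : Integrable (fun s => |ee s x|) := by
  rw [ee_abs]; exact indicator_Ico_integrable _ _

lemma ee_abs_integral (x : ℝ) : ∫ s, |ee s x| = |x| := by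
  rw [ee_abs, indicator_Ico_integral _ _ (min_le_max)]
  rcases le_or_gt 0 x with hx | hx
  · rw [min_eq_right hx, max_eq_left hx, abs_of_nonneg hx]; ring
  · rw [min_eq_left hx.le, max_eq_right hx.le, abs_of_neg hx]; ring

lemma measurable_ee {α : Type*} [MeasurableSpace α] {f g : α → ℝ}
    (hf : Measurable f) (hg : Measurable g) : Measurable (fun a => ee (f a) (g a)) := by
  unfold ee
  exact (Measurable.ite (measurableSet_lt hf hg) measurable_const measurable_const).sub
    (Measurable.ite (measurableSet_lt hf measurable_const) measurable_const measurable_const)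

end

noncomputable section
set_option linter.unusedSectionVars false

variable (h : Measure (ℝ × ℝ)) [IsProbabilityMeasure h]

lemma F_meas : Measurable (fun r : (ℝ×ℝ) × (ℝ×ℝ) => ee r.2.1 r.1.1 * ee r.2.2 r.1.2) :=
  (measurable_ee (measurable_fst.comp measurable_snd) (measurable_fst.comp measurable_fst)).mul
    (measurable_ee (measurable_snd.comp measurable_snd) (measurable_snd.comp measurable_fst))

lemma F_integrable (ih : Integrable (fun p : ℝ×ℝ => p.1 * p.2) h) :
    Integrable (fun r : (ℝ×ℝ) × (ℝ×ℝ) => ee r.2.1 r.1.1 * ee r.2.2 r.1.2)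
      (h.prod (volume : Measure (ℝ×ℝ))) := by
  refine (integrable_prod_iff (F_meas.aestronglyMeasurable)).2 ⟨?_, ?_⟩
  · refine Eventually.of_forall fun p => ?_
    rw [Measure.volume_eq_prod]
    exact (ee_integrable p.1).mul_prod (ee_integrable p.2)
  · have : (fun p : ℝ×ℝ => ∫ q : ℝ×ℝ, ‖ee q.1 p.1 * ee q.2 p.2‖ ∂volume)
        = fun p : ℝ×ℝ => |p.1 * p.2| := by
      funext p
      rw [Measure.volume_eq_prod]
      simp only [norm_mul, Real.norm_eq_abs]
      rw [integral_prod_mul (fun s => |ee s p.1|) (fun t => |ee t p.2|),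
        ee_abs_integral, ee_abs_integral, abs_mul]
    rw [this]
    exact ih.abs

lemma K_integrable (ih : Integrable (fun p : ℝ×ℝ => p.1 * p.2) h) :
    Integrable (fun q : ℝ×ℝ => ∫ p : ℝ×ℝ, ee q.1 p.1 * ee q.2 p.2 ∂h) volume :=
  (F_integrable h ih).integral_prod_right

lemma moment_repr (ih : Integrable (fun p : ℝ×ℝ => p.1 * p.2) h) :
    ∫ p : ℝ×ℝ, p.1 * p.2 ∂h
      = ∫ q : ℝ×ℝ, (∫ p : ℝ×ℝ, ee q.1 p.1 * ee q.2 p.2 ∂h) ∂volume := by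
  have h1 : ∀ p : ℝ×ℝ, p.1 * p.2 = ∫ q : ℝ×ℝ, ee q.1 p.1 * ee q.2 p.2 ∂volume := by
    intro p
    rw [Measure.volume_eq_prod,
      integral_prod_mul (fun s => ee s p.1) (fun t => ee t p.2), ee_integral, ee_integral]
  calc ∫ p : ℝ×ℝ, p.1 * p.2 ∂h
      = ∫ p : ℝ×ℝ, (∫ q : ℝ×ℝ, ee q.1 p.1 * ee q.2 p.2 ∂volume) ∂h :=
        integral_congr_ae (Eventually.of_forall fun p => h1 p)
    _ = ∫ q : ℝ×ℝ, (∫ p : ℝ×ℝ, ee q.1 p.1 * ee q.2 p.2 ∂h) ∂volume :=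
        integral_integral_swap (F_integrable h ih)
end

section inner
variable (h : Measure (ℝ × ℝ)) [IsProbabilityMeasure h]

lemma preimage_fst_Iic (s : ℝ) : (Prod.fst ⁻¹' Set.Iic s : Set (ℝ×ℝ)) = Set.Iic s ×ˢ Set.univ := by
  ext ⟨a, b⟩; simp

lemma preimage_snd_Iic (t : ℝ) : (Prod.snd ⁻¹' Set.Iic t : Set (ℝ×ℝ)) = Set.univ ×ˢ Set.Iic t := by
  ext ⟨a, b⟩; simp

lemma map_fst_Iic (s : ℝ) : (h.map Prod.fst) (Set.Iic s) = h (Set.Iic s ×ˢ Set.univ) := by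
  rw [Measure.map_apply measurable_fst measurableSet_Iic, preimage_fst_Iic]

lemma map_snd_Iic (t : ℝ) : (h.map Prod.snd) (Set.Iic t) = h (Set.univ ×ˢ Set.Iic t) := by
  rw [Measure.map_apply measurable_snd measurableSet_Iic, preimage_snd_Iic]

lemma ioi_prod_toReal (s t : ℝ) :
    (h (Set.Ioi s ×ˢ Set.Ioi t)).toReal
      = 1 - ((h.map Prod.fst) (Set.Iic s)).toReal - ((h.map Prod.snd) (Set.Iic t)).toReal
        + (h (Set.Iic s ×ˢ Set.Iic t)).toReal := by
  set A : Set (ℝ×ℝ) := Set.Iic s ×ˢ Set.univ with hA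
  set B : Set (ℝ×ℝ) := Set.univ ×ˢ Set.Iic t with hB
  have hAm : MeasurableSet A := measurableSet_Iic.prod MeasurableSet.univ
  have hBm : MeasurableSet B := MeasurableSet.univ.prod measurableSet_Iic
  have hcompl : Set.Ioi s ×ˢ Set.Ioi t = (A ∪ B)ᶜ := by
    ext ⟨a, b⟩; simp [hA, hB, not_le, and_comm]
  have hinter : A ∩ B = Set.Iic s ×ˢ Set.Iic t := by
    ext ⟨a, b⟩; simp [hA, hB]
  have h1 : h (A ∪ B) + h ((A ∪ B)ᶜ) = 1 := by
    rw [measure_add_measure_compl (hAm.union hBm)]; exact measure_univ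
  have h2 : h (A ∪ B) + h (A ∩ B) = h A + h B := measure_union_add_inter A hBm
  have fin : ∀ S : Set (ℝ×ℝ), h S ≠ ⊤ := fun S => measure_ne_top h S
  have t1 : (h (A ∪ B)).toReal + (h ((A ∪ B)ᶜ)).toReal = 1 := by
    rw [← ENNReal.toReal_add (fin _) (fin _), h1]; simp
  have t2 : (h (A ∪ B)).toReal + (h (A ∩ B)).toReal = (h A).toReal + (h B).toReal := by
    rw [← ENNReal.toReal_add (fin _) (fin _), ← ENNReal.toReal_add (fin _) (fin _), h2]
  rw [hcompl, map_fst_Iic, map_snd_Iic, ← hinter, ← hA, ← hB]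
  linarith

lemma inner_eq (s t : ℝ) :
    ∫ p : ℝ×ℝ, ee s p.1 * ee t p.2 ∂h
      = (h (Set.Iic s ×ˢ Set.Iic t)).toReal
        + (1 - ((h.map Prod.fst) (Set.Iic s)).toReal - ((h.map Prod.snd) (Set.Iic t)).toReal)
        - (if t < 0 then (1:ℝ) else 0) * (1 - ((h.map Prod.fst) (Set.Iic s)).toReal)
        - (if s < 0 then (1:ℝ) else 0) * (1 - ((h.map Prod.snd) (Set.Iic t)).toReal)
        + (if s < 0 then (1:ℝ) else 0) * (if t < 0 then (1:ℝ) else 0) := by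
  set cs : ℝ := if s < 0 then (1:ℝ) else 0 with hcs
  set ct : ℝ := if t < 0 then (1:ℝ) else 0 with hct
  have hpt : ∀ p : ℝ×ℝ, ee s p.1 * ee t p.2
      = (Set.Ioi s ×ˢ Set.Ioi t).indicator (fun _ => (1:ℝ)) p
        - ct * (Set.Ioi s ×ˢ (Set.univ : Set ℝ)).indicator (fun _ => (1:ℝ)) p
        - cs * ((Set.univ : Set ℝ) ×ˢ Set.Ioi t).indicator (fun _ => (1:ℝ)) p
        + cs * ct := by
    intro p
    unfold ee
    by_cases h1 : s < p.1 <;> by_cases h2 : t < p.2 <;>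
      simp [Set.indicator_apply, Set.mem_prod, h1, h2, hcs, hct] <;> split_ifs <;> ring
  have i1 : Integrable ((Set.Ioi s ×ˢ Set.Ioi t).indicator (fun _ => (1:ℝ))) h :=
    (integrable_const (1:ℝ)).indicator (measurableSet_Ioi.prod measurableSet_Ioi)
  have i2 : Integrable ((Set.Ioi s ×ˢ (Set.univ : Set ℝ)).indicator (fun _ => (1:ℝ))) h :=
    (integrable_const (1:ℝ)).indicator (measurableSet_Ioi.prod MeasurableSet.univ)
  have i3 : Integrable (((Set.univ : Set ℝ) ×ˢ Set.Ioi t).indicator (fun _ => (1:ℝ))) h :=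
    (integrable_const (1:ℝ)).indicator (MeasurableSet.univ.prod measurableSet_Ioi)
  have j2 : Integrable (fun p : ℝ×ℝ => ct * (Set.Ioi s ×ˢ (Set.univ : Set ℝ)).indicator (fun _ => (1:ℝ)) p) h := i2.const_mul ct
  have j3 : Integrable (fun p : ℝ×ℝ => cs * ((Set.univ : Set ℝ) ×ˢ Set.Ioi t).indicator (fun _ => (1:ℝ)) p) h := i3.const_mul cs
  have j4 : Integrable (fun p : ℝ×ℝ => (Set.Ioi s ×ˢ Set.Ioi t).indicator (fun _ => (1:ℝ)) p
      - ct * (Set.Ioi s ×ˢ (Set.univ : Set ℝ)).indicator (fun _ => (1:ℝ)) p) h := i1.sub j2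
  have j5 : Integrable (fun p : ℝ×ℝ => (Set.Ioi s ×ˢ Set.Ioi t).indicator (fun _ => (1:ℝ)) p
      - ct * (Set.Ioi s ×ˢ (Set.univ : Set ℝ)).indicator (fun _ => (1:ℝ)) p
      - cs * ((Set.univ : Set ℝ) ×ˢ Set.Ioi t).indicator (fun _ => (1:ℝ)) p) h := j4.sub j3
  rw [integral_congr_ae (Eventually.of_forall hpt)]
  rw [integral_add j5 (integrable_const _)]
  rw [integral_sub j4 j3]
  rw [integral_sub i1 j2]
  rw [integral_const_mul, integral_const_mul, integral_const,
    integral_indicator_const _ (measurableSet_Ioi.prod measurableSet_Ioi),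
    integral_indicator_const _ (measurableSet_Ioi.prod MeasurableSet.univ),
    integral_indicator_const _ (MeasurableSet.univ.prod measurableSet_Ioi)]
  simp only [measureReal_def]
  have e2 : (h (Set.Ioi s ×ˢ (Set.univ : Set ℝ))).toReal
      = 1 - ((h.map Prod.fst) (Set.Iic s)).toReal := by
    have : Set.Ioi s ×ˢ (Set.univ : Set ℝ) = (Set.Iic s ×ˢ (Set.univ : Set ℝ))ᶜ := by
      ext ⟨a, b⟩; simp [not_le]
    rw [this, map_fst_Iic]
    have := measure_add_measure_compl (μ := h) (s := Set.Iic s ×ˢ (Set.univ : Set ℝ)) (measurableSet_Iic.prod MeasurableSet.univ)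
    rw [measure_univ] at this
    have tt : (h (Set.Iic s ×ˢ (Set.univ : Set ℝ))).toReal + (h ((Set.Iic s ×ˢ (Set.univ : Set ℝ))ᶜ)).toReal = 1 := by
      rw [← ENNReal.toReal_add (measure_ne_top h _) (measure_ne_top h _), this]; simp
    linarith
  have e3 : (h ((Set.univ : Set ℝ) ×ˢ Set.Ioi t)).toReal
      = 1 - ((h.map Prod.snd) (Set.Iic t)).toReal := by
    have : (Set.univ : Set ℝ) ×ˢ Set.Ioi t = ((Set.univ : Set ℝ) ×ˢ Set.Iic t)ᶜ := by
      ext ⟨a, b⟩; simp [not_le]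
    rw [this, map_snd_Iic]
    have := measure_add_measure_compl (μ := h) (s := (Set.univ : Set ℝ) ×ˢ Set.Iic t) (MeasurableSet.univ.prod measurableSet_Iic)
    rw [measure_univ] at this
    have tt : (h ((Set.univ : Set ℝ) ×ˢ Set.Iic t)).toReal + (h (((Set.univ : Set ℝ) ×ˢ Set.Iic t)ᶜ)).toReal = 1 := by
      rw [← ENNReal.toReal_add (measure_ne_top h _) (measure_ne_top h _), this]; simp
    linarith
  rw [ioi_prod_toReal, e2, e3]
  simp [measure_univ]
  ring
end inner

lemma key_le (h₁ h₂ : Measure (ℝ×ℝ)) [IsProbabilityMeasure h₁] [IsProbabilityMeasure h₂]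
    (mfst : h₁.map Prod.fst = h₂.map Prod.fst) (msnd : h₁.map Prod.snd = h₂.map Prod.snd)
    (i₁ : Integrable (fun p : ℝ×ℝ => p.1 * p.2) h₁)
    (i₂ : Integrable (fun p : ℝ×ℝ => p.1 * p.2) h₂)
    (hle : ∀ s t : ℝ, (h₁ (Set.Iic s ×ˢ Set.Iic t)).toReal ≤ (h₂ (Set.Iic s ×ˢ Set.Iic t)).toReal) :
    ∫ p : ℝ×ℝ, p.1 * p.2 ∂h₁ ≤ ∫ p : ℝ×ℝ, p.1 * p.2 ∂h₂ := by
  rw [moment_repr h₁ i₁, moment_repr h₂ i₂]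
  refine integral_mono (K_integrable h₁ i₁) (K_integrable h₂ i₂) fun q => ?_
  rw [inner_eq h₁ q.1 q.2, inner_eq h₂ q.1 q.2, mfst, msnd]
  have := hle q.1 q.2
  linarith

lemma frechet_upper_fst (h : Measure (ℝ×ℝ)) [IsProbabilityMeasure h] (s t : ℝ) :
    (h (Set.Iic s ×ˢ Set.Iic t)).toReal ≤ ((h.map Prod.fst) (Set.Iic s)).toReal := by
  rw [map_fst_Iic]
  exact ENNReal.toReal_mono (measure_ne_top _ _)
    (measure_mono (Set.prod_mono subset_rfl (Set.subset_univ _)))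

lemma frechet_upper_snd (h : Measure (ℝ×ℝ)) [IsProbabilityMeasure h] (s t : ℝ) :
    (h (Set.Iic s ×ˢ Set.Iic t)).toReal ≤ ((h.map Prod.snd) (Set.Iic t)).toReal := by
  rw [map_snd_Iic]
  exact ENNReal.toReal_mono (measure_ne_top _ _)
    (measure_mono (Set.prod_mono (Set.subset_univ _) subset_rfl))

lemma frechet_lower (h : Measure (ℝ×ℝ)) [IsProbabilityMeasure h] (s t : ℝ) :
    ((h.map Prod.fst) (Set.Iic s)).toReal + ((h.map Prod.snd) (Set.Iic t)).toReal - 1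
      ≤ (h (Set.Iic s ×ˢ Set.Iic t)).toReal := by
  set A : Set (ℝ×ℝ) := Set.Iic s ×ˢ Set.univ with hA
  set B : Set (ℝ×ℝ) := Set.univ ×ˢ Set.Iic t with hB
  have hinter : A ∩ B = Set.Iic s ×ˢ Set.Iic t := by ext ⟨a, b⟩; simp [hA, hB]
  have h2 : h (A ∪ B) + h (A ∩ B) = h A + h B := measure_union_add_inter A (MeasurableSet.univ.prod measurableSet_Iic)
  have t2 : (h (A ∪ B)).toReal + (h (A ∩ B)).toReal = (h A).toReal + (h B).toReal := by
    rw [← ENNReal.toReal_add (measure_ne_top h _) (measure_ne_top h _),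
      ← ENNReal.toReal_add (measure_ne_top h _) (measure_ne_top h _), h2]
  have hle1 : (h (A ∪ B)).toReal ≤ 1 := by
    have := prob_le_one (μ := h) (s := A ∪ B)
    exact ENNReal.toReal_le_of_le_ofReal zero_le_one (by simpa using this)
  rw [map_fst_Iic, map_snd_Iic, ← hinter, ← hA, ← hB]
  linarith


noncomputable section

def clipf (β u : ℝ) : ℝ := max (-β) (min u β)

lemma clipf_abs_le {β : ℝ} (hβ : 0 ≤ β) (u : ℝ) : |clipf β u| ≤ β := by
  unfold clipf
  rw [abs_le]
  constructor
  · exact le_max_left _ _ |>.trans' (by linarith)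
  · exact max_le (by linarith) (min_le_right _ _)

lemma clipf_lip (β u v : ℝ) : |clipf β u - clipf β v| ≤ |u - v| := by
  unfold clipf
  calc |max (-β) (min u β) - max (-β) (min v β)|
      = |max (min u β) (-β) - max (min v β) (-β)| := by rw [max_comm (-β), max_comm (-β)]
    _ ≤ |min u β - min v β| := abs_max_sub_max_le_abs _ _ _
    _ ≤ max |u - v| |β - β| := abs_min_sub_min_le_max _ _ _ _
    _ ≤ |u - v| := by simp

lemma clipf_tail {β₀ β u : ℝ} (hβ : β₀ ≤ β) (hβ₀ : 0 < β₀) :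
    |u - clipf β u| ≤ if β₀ ≤ |u| then |u| else 0 := by
  unfold clipf
  rcases le_or_gt (|u|) β with h | h
  · have h1 : -β ≤ u := by cases abs_le.1 h; linarith
    have h2 : u ≤ β := (abs_le.1 h).2
    rw [min_eq_left h2, max_eq_right h1]
    simp; split <;> simp [abs_nonneg]
  · split
    · rcases le_or_gt 0 u with hu | hu
      · have : |u| = u := abs_of_nonneg hu
        rw [min_eq_right (by linarith), max_eq_right (by linarith)]
        rw [abs_of_nonneg (by linarith)]; linarith [abs_nonneg u]
      · have : |u| = -u := abs_of_neg hu
        rw [min_eq_left (by linarith), max_eq_left (by linarith)]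
        rw [abs_of_nonpos (by linarith)]; linarith
    · next hc => exact absurd (le_of_lt (lt_of_le_of_lt hβ (lt_of_le_of_lt (le_refl _) h))) hc

lemma continuous_clip_prod (β : ℝ) : Continuous (fun p : ℝ×ℝ => clipf β (p.1 * p.2)) := by
  unfold clipf
  exact continuous_const.max ((continuous_fst.mul continuous_snd).min continuous_const)

lemma clip_integrable (β : ℝ) (hβ : 0 ≤ β) (μ : Measure (ℝ×ℝ)) [IsProbabilityMeasure μ] :
    Integrable (fun p : ℝ×ℝ => clipf β (p.1 * p.2)) μ := by
  refine Integrable.mono' (integrable_const β) (continuous_clip_prod β).aestronglyMeasurable ?_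
  exact Eventually.of_forall fun p => by simpa [Real.norm_eq_abs] using clipf_abs_le hβ (p.1*p.2)

-- measure of half-open rectangle via CDF corners
lemma rect_toReal (μ : Measure (ℝ×ℝ)) [IsProbabilityMeasure μ] {a b c d : ℝ}
    (hab : a ≤ b) (hcd : c ≤ d) :
    (μ (Set.Ioc a b ×ˢ Set.Ioc c d)).toReal
      = (μ (Set.Iic b ×ˢ Set.Iic d)).toReal - (μ (Set.Iic a ×ˢ Set.Iic d)).toReal
        - ((μ (Set.Iic b ×ˢ Set.Iic c)).toReal - (μ (Set.Iic a ×ˢ Set.Iic c)).toReal) := by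
  have split1 : ∀ (T : Set ℝ), MeasurableSet T →
      (μ (Set.Iic b ×ˢ T)).toReal
        = (μ (Set.Iic a ×ˢ T)).toReal + (μ (Set.Ioc a b ×ˢ T)).toReal := by
    intro T hT
    have hu : Set.Iic b ×ˢ T = (Set.Iic a ×ˢ T) ∪ (Set.Ioc a b ×ˢ T) := by
      rw [← Set.union_prod, Set.Iic_union_Ioc_eq_Iic hab]
    have hd : Disjoint (Set.Iic a ×ˢ T) (Set.Ioc a b ×ˢ T) :=
      Set.Disjoint.set_prod_left (Set.Iic_disjoint_Ioc le_rfl) _ _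
    rw [hu, measure_union hd (measurableSet_Ioc.prod hT),
      ENNReal.toReal_add (measure_ne_top _ _) (measure_ne_top _ _)]
  have split2 : (μ (Set.Ioc a b ×ˢ Set.Iic d)).toReal
      = (μ (Set.Ioc a b ×ˢ Set.Iic c)).toReal + (μ (Set.Ioc a b ×ˢ Set.Ioc c d)).toReal := by
    have hu : Set.Ioc a b ×ˢ Set.Iic d
        = (Set.Ioc a b ×ˢ Set.Iic c) ∪ (Set.Ioc a b ×ˢ Set.Ioc c d) := by
      rw [← Set.prod_union, Set.Iic_union_Ioc_eq_Iic hcd]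
    have hd : Disjoint (Set.Ioc a b ×ˢ Set.Iic c) (Set.Ioc a b ×ˢ Set.Ioc c d) :=
      Set.Disjoint.set_prod_right (Set.Iic_disjoint_Ioc le_rfl) _ _
    rw [hu, measure_union hd (measurableSet_Ioc.prod measurableSet_Ioc),
      ENNReal.toReal_add (measure_ne_top _ _) (measure_ne_top _ _)]
  have h1 := split1 (Set.Iic d) measurableSet_Iic
  have h2 := split1 (Set.Iic c) measurableSet_Iic
  linarith

-- partition of an interval: indicator sum
lemma indicator_sum_Ioc (a : ℕ → ℝ) (ha : Monotone a) (n : ℕ) (x : ℝ) :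
    ∑ i ∈ Finset.range n, (Set.Ioc (a i) (a (i+1))).indicator (fun _ => (1:ℝ)) x
      = (Set.Ioc (a 0) (a n)).indicator (fun _ => (1:ℝ)) x := by
  induction n with
  | zero => simp
  | succ n ih =>
    rw [Finset.sum_range_succ, ih]
    have hd : Disjoint (Set.Ioc (a 0) (a n)) (Set.Ioc (a n) (a (n+1))) := Set.Ioc_disjoint_Ioc_of_le le_rfl
    have hu : Set.Ioc (a 0) (a n) ∪ Set.Ioc (a n) (a (n+1)) = Set.Ioc (a 0) (a (n+1)) :=
      Set.Ioc_union_Ioc_eq_Ioc (ha (Nat.zero_le n)) (ha (Nat.le_succ n))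
    rw [← hu, Set.indicator_union_of_disjoint hd]

end

noncomputable section

lemma tendsto_rect (μs : ℕ → Measure (ℝ×ℝ)) (μ : Measure (ℝ×ℝ))
    [∀ N, IsProbabilityMeasure (μs N)] [IsProbabilityMeasure μ]
    (hcdf : ∀ x y : ℝ, Tendsto (fun N => (μs N (Set.Iic x ×ˢ Set.Iic y)).toReal) atTop
      (nhds ((μ (Set.Iic x ×ˢ Set.Iic y)).toReal)))
    {a b c d : ℝ} (hab : a ≤ b) (hcd : c ≤ d) :
    Tendsto (fun N => (μs N (Set.Ioc a b ×ˢ Set.Ioc c d)).toReal) atTop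
      (𝓝 ((μ (Set.Ioc a b ×ˢ Set.Ioc c d)).toReal)) := by
  rw [rect_toReal μ hab hcd]
  exact Tendsto.congr (fun N => (rect_toReal (μs N) hab hcd).symm)
    (((hcdf b d).sub (hcdf a d)).sub ((hcdf b c).sub (hcdf a c)))

set_option maxHeartbeats 1000000 in
lemma tends_integral_clip (μs : ℕ → Measure (ℝ×ℝ)) (μ : Measure (ℝ×ℝ))
    [∀ N, IsProbabilityMeasure (μs N)] [IsProbabilityMeasure μ]
    (hcdf : ∀ x y : ℝ, Tendsto (fun N => (μs N (Set.Iic x ×ˢ Set.Iic y)).toReal) atTop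
      (nhds ((μ (Set.Iic x ×ˢ Set.Iic y)).toReal)))
    (β : ℝ) (hβ : 0 < β) :
    Tendsto (fun N => ∫ p : ℝ×ℝ, clipf β (p.1 * p.2) ∂(μs N)) atTop
      (𝓝 (∫ p : ℝ×ℝ, clipf β (p.1 * p.2) ∂μ)) := by
  rw [Metric.tendsto_nhds]
  intro ε hε
  set ε₁ : ℝ := ε / (8 * (β + 1)) with hε₁def
  have hε₁ : 0 < ε₁ := by positivity
  -- tightness
  have hQm : Tendsto (fun m : ℕ => μ (Set.Ioc (-(m:ℝ)) m ×ˢ Set.Ioc (-(m:ℝ)) m)) atTop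
      (𝓝 (μ Set.univ)) := by
    have hmono : Monotone (fun m : ℕ => Set.Ioc (-(m:ℝ)) m ×ˢ Set.Ioc (-(m:ℝ)) m) := by
      intro m m' hmm'
      have hc : ((m:ℝ)) ≤ m' := by exact_mod_cast hmm'
      exact Set.prod_mono (Set.Ioc_subset_Ioc (by linarith) hc) (Set.Ioc_subset_Ioc (by linarith) hc)
    have hunion : (⋃ m : ℕ, Set.Ioc (-(m:ℝ)) m ×ˢ Set.Ioc (-(m:ℝ)) m) = Set.univ := by
      ext p
      simp only [Set.mem_iUnion, Set.mem_prod, Set.mem_Ioc, Set.mem_univ, iff_true]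
      obtain ⟨m, hm⟩ := exists_nat_gt (max |p.1| |p.2|)
      have h1 := abs_lt.1 (lt_of_le_of_lt (le_max_left |p.1| |p.2|) hm)
      have h2 := abs_lt.1 (lt_of_le_of_lt (le_max_right |p.1| |p.2|) hm)
      exact ⟨m, ⟨h1.1, h1.2.le⟩, h2.1, h2.2.le⟩
    simpa only [hunion, Function.comp_def] using tendsto_measure_iUnion_atTop (μ := μ) hmono
  have hQmr : Tendsto (fun m : ℕ => (μ (Set.Ioc (-(m:ℝ)) m ×ˢ Set.Ioc (-(m:ℝ)) m)).toReal) atTop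
      (𝓝 1) := by
    have huniv : (μ Set.univ) = 1 := measure_univ
    have h := (ENNReal.tendsto_toReal (a := μ Set.univ) (by simp [huniv])).comp hQm
    simpa [huniv, Function.comp_def] using h
  have hev : ∀ᶠ m : ℕ in atTop,
      1 - (μ (Set.Ioc (-(m:ℝ)) m ×ˢ Set.Ioc (-(m:ℝ)) m)).toReal < ε₁ := by
    filter_upwards [Metric.tendsto_nhds.1 hQmr ε₁ hε₁] with m hm
    rw [Real.dist_eq] at hm
    have := abs_lt.1 hm
    linarith [this.1, this.2]
  obtain ⟨m₀, hm₀⟩ := eventually_atTop.1 hev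
  set m : ℕ := max m₀ 1 with hmdef
  have hmQ := hm₀ m (le_max_left _ _)
  set M : ℝ := (m : ℝ) with hMdef
  have hM : 1 ≤ M := by
    rw [hMdef]; exact_mod_cast le_max_right m₀ 1
  have hM0 : 0 < M := by linarith
  -- choose n
  obtain ⟨n₀, hn₀⟩ := exists_nat_gt (4 * M^2 * 8 / ε)
  set n : ℕ := max n₀ 1 with hndef
  have hn : 4 * M^2 * 8 / ε < (n:ℝ) := by
    refine lt_of_lt_of_le hn₀ ?_
    exact_mod_cast le_max_left n₀ 1
  have hn0 : 0 < n := lt_of_lt_of_le Nat.one_pos (le_max_right n₀ 1)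
  have hnR : (0:ℝ) < n := by exact_mod_cast hn0
  set δ : ℝ := 4 * M^2 / n with hδdef
  have hδ0 : 0 ≤ δ := by positivity
  have hδε : δ < ε/8 := by
    rw [hδdef, div_lt_div_iff₀ hnR (by norm_num : (0:ℝ) < 8)]
    have := (div_lt_iff₀ hε).1 hn
    linarith
  -- partition
  set a : ℕ → ℝ := fun i => -M + 2*M*i/n with hadef
  have hstep : ∀ i : ℕ, a (i+1) - a i = 2*M/n := by
    intro i; simp only [hadef]; push_cast; field_simp; ring
  have ha0 : a 0 = -M := by simp [hadef]
  have han : a n = M := by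
    simp only [hadef]
    field_simp
    ring
  clear_value a
  have hamono : Monotone a := by
    apply monotone_nat_of_le_succ
    intro i
    have h1 := hstep i
    have h2 : 0 ≤ 2*M/n := by positivity
    linarith
  have haub : ∀ i, i ≤ n → a i ≤ M := fun i hi => han ▸ hamono hi
  have halb : ∀ i, -M ≤ a i := fun i => ha0 ▸ hamono (Nat.zero_le i)
  set Q : Set (ℝ×ℝ) := Set.Ioc (-M) M ×ˢ Set.Ioc (-M) M with hQdef
  set f : ℝ×ℝ → ℝ := fun p => clipf β (p.1 * p.2) with hfdef
  set R : ℕ → ℕ → Set (ℝ×ℝ) :=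
    fun i j => Set.Ioc (a i) (a (i+1)) ×ˢ Set.Ioc (a j) (a (j+1)) with hRdef
  set g : ℝ×ℝ → ℝ := fun p => ∑ i ∈ Finset.range n, ∑ j ∈ Finset.range n,
    (R i j).indicator (fun _ => f (a (i+1), a (j+1))) p with hgdef
  have hRmeas : ∀ i j, MeasurableSet (R i j) := fun i j => measurableSet_Ioc.prod measurableSet_Ioc
  have hQmeas : MeasurableSet Q := measurableSet_Ioc.prod measurableSet_Ioc
  -- indicator partition identity
  have hind2 : ∀ p : ℝ×ℝ, ∑ i ∈ Finset.range n, ∑ j ∈ Finset.range n,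
      (R i j).indicator (fun _ => (1:ℝ)) p = Q.indicator (fun _ => (1:ℝ)) p := by
    intro p
    have hfac : ∀ i j : ℕ, (R i j).indicator (fun _ => (1:ℝ)) p
        = (Set.Ioc (a i) (a (i+1))).indicator (fun _ => (1:ℝ)) p.1
          * (Set.Ioc (a j) (a (j+1))).indicator (fun _ => (1:ℝ)) p.2 := by
      intro i j
      by_cases h1 : p.1 ∈ Set.Ioc (a i) (a (i+1)) <;>
        by_cases h2 : p.2 ∈ Set.Ioc (a j) (a (j+1)) <;>
        simp [hRdef, Set.indicator_apply, Set.mem_prod, h1, h2]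
    have hQfac : Q.indicator (fun _ => (1:ℝ)) p
        = (Set.Ioc (-M) M).indicator (fun _ => (1:ℝ)) p.1
          * (Set.Ioc (-M) M).indicator (fun _ => (1:ℝ)) p.2 := by
      by_cases h1 : p.1 ∈ Set.Ioc (-M) M <;> by_cases h2 : p.2 ∈ Set.Ioc (-M) M <;>
        simp [hQdef, Set.indicator_apply, Set.mem_prod, h1, h2]
    calc ∑ i ∈ Finset.range n, ∑ j ∈ Finset.range n, (R i j).indicator (fun _ => (1:ℝ)) p
        = (∑ i ∈ Finset.range n, (Set.Ioc (a i) (a (i+1))).indicator (fun _ => (1:ℝ)) p.1)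
          * (∑ j ∈ Finset.range n, (Set.Ioc (a j) (a (j+1))).indicator (fun _ => (1:ℝ)) p.2) := by
          rw [Finset.sum_mul_sum]
          exact Finset.sum_congr rfl fun i _ => Finset.sum_congr rfl fun j _ => hfac i j
      _ = (Set.Ioc (a 0) (a n)).indicator (fun _ => (1:ℝ)) p.1
          * (Set.Ioc (a 0) (a n)).indicator (fun _ => (1:ℝ)) p.2 := by
          rw [indicator_sum_Ioc a hamono n p.1, indicator_sum_Ioc a hamono n p.2]
      _ = Q.indicator (fun _ => (1:ℝ)) p := by rw [ha0, han, ← hQfac]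
  -- per-cell estimate
  have hterm : ∀ i ∈ Finset.range n, ∀ j ∈ Finset.range n, ∀ p ∈ R i j,
      |f p - f (a (i+1), a (j+1))| ≤ δ := by
    intro i hi j hj p hp
    have hi' : i + 1 ≤ n := Finset.mem_range.1 hi
    have hj' : j + 1 ≤ n := Finset.mem_range.1 hj
    obtain ⟨hp1, hp2⟩ := hp
    simp only [Set.mem_Ioc] at hp1 hp2
    have b1 : |p.1| ≤ M := abs_le.2 ⟨(halb i).trans hp1.1.le, hp1.2.trans (haub _ hi')⟩
    have b2 : |a (j+1)| ≤ M := abs_le.2 ⟨halb _, haub _ hj'⟩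
    have hs1 := hstep i
    have hs2 := hstep j
    have d1 : |p.1 - a (i+1)| ≤ 2*M/n := by
      rw [abs_le]
      constructor <;> [linarith [hp1.1, hp1.2]; skip]
      have : 0 ≤ 2*M/n := by positivity
      linarith [hp1.2]
    have d2 : |p.2 - a (j+1)| ≤ 2*M/n := by
      rw [abs_le]
      constructor <;> [linarith [hp2.1, hp2.2]; skip]
      have : 0 ≤ 2*M/n := by positivity
      linarith [hp2.2]
    have habs : |p.1 * p.2 - a (i+1) * a (j+1)|
        ≤ |p.1| * |p.2 - a (j+1)| + |p.1 - a (i+1)| * |a (j+1)| := by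
      calc |p.1 * p.2 - a (i+1) * a (j+1)|
          = |p.1 * (p.2 - a (j+1)) + (p.1 - a (i+1)) * a (j+1)| := by ring_nf
        _ ≤ |p.1 * (p.2 - a (j+1))| + |(p.1 - a (i+1)) * a (j+1)| := abs_add_le _ _
        _ = |p.1| * |p.2 - a (j+1)| + |p.1 - a (i+1)| * |a (j+1)| := by
            rw [abs_mul, abs_mul]
    calc |f p - f (a (i+1), a (j+1))|
        ≤ |p.1 * p.2 - a (i+1) * a (j+1)| := clipf_lip β _ _
      _ ≤ |p.1| * |p.2 - a (j+1)| + |p.1 - a (i+1)| * |a (j+1)| := habs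
      _ ≤ M * (2*M/n) + (2*M/n) * M := by
          have h1 : |p.1| * |p.2 - a (j+1)| ≤ M * (2*M/n) :=
            mul_le_mul b1 d2 (abs_nonneg _) hM0.le
          have h2 : |p.1 - a (i+1)| * |a (j+1)| ≤ (2*M/n) * M :=
            mul_le_mul d1 b2 (abs_nonneg _) (by positivity)
          linarith
      _ = δ := by rw [hδdef]; field_simp; ring
  -- pointwise bound |f - g|
  have hpt : ∀ p : ℝ×ℝ, |f p - g p| ≤ δ + β * (1 - Q.indicator (fun _ => (1:ℝ)) p) := by
    intro p
    by_cases hQp : p ∈ Q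
    · have hQ1 : Q.indicator (fun _ => (1:ℝ)) p = 1 := Set.indicator_of_mem hQp _
      have key : f p - g p = ∑ i ∈ Finset.range n, ∑ j ∈ Finset.range n,
          (f p - f (a (i+1), a (j+1))) * (R i j).indicator (fun _ => (1:ℝ)) p := by
        have h1 : f p = ∑ i ∈ Finset.range n, ∑ j ∈ Finset.range n,
            f p * (R i j).indicator (fun _ => (1:ℝ)) p := by
          simp_rw [← Finset.mul_sum]
          rw [hind2 p, hQ1, mul_one]
        have h2 : g p = ∑ i ∈ Finset.range n, ∑ j ∈ Finset.range n,
            f (a (i+1), a (j+1)) * (R i j).indicator (fun _ => (1:ℝ)) p := by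
          rw [hgdef]
          refine Finset.sum_congr rfl fun i _ => Finset.sum_congr rfl fun j _ => ?_
          by_cases hp : p ∈ R i j <;> simp [Set.indicator_apply, hp]
        calc f p - g p
            = (∑ i ∈ Finset.range n, ∑ j ∈ Finset.range n,
                f p * (R i j).indicator (fun _ => (1:ℝ)) p)
              - (∑ i ∈ Finset.range n, ∑ j ∈ Finset.range n,
                f (a (i+1), a (j+1)) * (R i j).indicator (fun _ => (1:ℝ)) p) := by
              rw [← h1, ← h2]
          _ = ∑ i ∈ Finset.range n, ∑ j ∈ Finset.range n,
              (f p - f (a (i+1), a (j+1))) * (R i j).indicator (fun _ => (1:ℝ)) p := by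
              rw [← Finset.sum_sub_distrib]
              refine Finset.sum_congr rfl fun i _ => ?_
              rw [← Finset.sum_sub_distrib]
              exact Finset.sum_congr rfl fun j _ => by ring
      have habs : |f p - g p| ≤ δ := by
        rw [key]
        calc |∑ i ∈ Finset.range n, ∑ j ∈ Finset.range n,
            (f p - f (a (i+1), a (j+1))) * (R i j).indicator (fun _ => (1:ℝ)) p|
            ≤ ∑ i ∈ Finset.range n, |∑ j ∈ Finset.range n,
              (f p - f (a (i+1), a (j+1))) * (R i j).indicator (fun _ => (1:ℝ)) p| :=
              Finset.abs_sum_le_sum_abs _ _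
          _ ≤ ∑ i ∈ Finset.range n, ∑ j ∈ Finset.range n,
              |(f p - f (a (i+1), a (j+1))) * (R i j).indicator (fun _ => (1:ℝ)) p| :=
              Finset.sum_le_sum fun i _ => Finset.abs_sum_le_sum_abs _ _
          _ ≤ ∑ i ∈ Finset.range n, ∑ j ∈ Finset.range n,
              δ * (R i j).indicator (fun _ => (1:ℝ)) p := by
              refine Finset.sum_le_sum fun i hi => Finset.sum_le_sum fun j hj => ?_
              by_cases hp : p ∈ R i j
              · rw [Set.indicator_of_mem hp]
                simpa using hterm i hi j hj p hp
              · rw [Set.indicator_of_notMem hp]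
                simp
          _ = δ * Q.indicator (fun _ => (1:ℝ)) p := by
              simp_rw [← Finset.mul_sum]
              rw [hind2 p]
          _ = δ := by rw [hQ1, mul_one]
      calc |f p - g p| ≤ δ := habs
        _ ≤ δ + β * (1 - Q.indicator (fun _ => (1:ℝ)) p) := by rw [hQ1]; norm_num
    · have hg0 : g p = 0 := by
        rw [hgdef]
        refine Finset.sum_eq_zero fun i hi => Finset.sum_eq_zero fun j hj => ?_
        refine Set.indicator_of_notMem (fun hpR => hQp ?_) _
        obtain ⟨h1, h2⟩ := hpR
        simp only [Set.mem_Ioc] at h1 h2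
        refine ⟨Set.mem_Ioc.2 ⟨lt_of_le_of_lt (halb i) h1.1,
          h1.2.trans (haub _ (Finset.mem_range.1 hi))⟩,
          Set.mem_Ioc.2 ⟨lt_of_le_of_lt (halb j) h2.1,
          h2.2.trans (haub _ (Finset.mem_range.1 hj))⟩⟩
      have hQ0 : Q.indicator (fun _ => (1:ℝ)) p = 0 := Set.indicator_of_notMem hQp _
      rw [hg0, hQ0, sub_zero]
      have hfb : |f p| ≤ β := clipf_abs_le hβ.le (p.1 * p.2)
      nlinarith
  -- integrability facts
  have hIg : ∀ (ν : Measure (ℝ×ℝ)), IsProbabilityMeasure ν → Integrable g ν := by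
    intro ν hν
    haveI := hν
    rw [hgdef]
    refine integrable_finset_sum _ fun i _ => integrable_finset_sum _ fun j _ => ?_
    exact (integrable_const _).indicator (hRmeas i j)
  have hIQ : ∀ (ν : Measure (ℝ×ℝ)), IsProbabilityMeasure ν →
      Integrable (Q.indicator (fun _ => (1:ℝ))) ν := by
    intro ν hν
    haveI := hν
    exact (integrable_const _).indicator hQmeas
  have hdiff : ∀ (ν : Measure (ℝ×ℝ)), IsProbabilityMeasure ν →
      |(∫ p, f p ∂ν) - ∫ p, g p ∂ν| ≤ δ + β * (1 - (ν Q).toReal) := by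
    intro ν hν
    haveI := hν
    have hIf : Integrable f ν := clip_integrable β hβ.le ν
    have hIgv := hIg ν hν
    have hIQv := hIQ ν hν
    have hI2 : Integrable (fun p => β * (1 - Q.indicator (fun _ => (1:ℝ)) p)) ν :=
      ((integrable_const (1:ℝ)).sub hIQv).const_mul β
    have h1 : |(∫ p, f p ∂ν) - ∫ p, g p ∂ν| ≤ ∫ p, |f p - g p| ∂ν := by
      rw [← integral_sub hIf hIgv]
      simpa [Real.norm_eq_abs] using
        norm_integral_le_integral_norm (μ := ν) (fun p => f p - g p)
    have h2 : ∫ p, |f p - g p| ∂ν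
        ≤ ∫ p, (δ + β * (1 - Q.indicator (fun _ => (1:ℝ)) p)) ∂ν := by
      refine integral_mono (hIf.sub hIgv).abs ((integrable_const δ).add hI2) fun p => hpt p
    have h3 : ∫ p, (δ + β * (1 - Q.indicator (fun _ => (1:ℝ)) p)) ∂ν
        = δ + β * (1 - (ν Q).toReal) := by
      rw [integral_add (integrable_const δ) hI2, integral_const, integral_const_mul,
        integral_sub (integrable_const 1) hIQv, integral_const,
        integral_indicator_const _ hQmeas]
      simp [measure_univ, measureReal_def]
    linarith
  -- convergence of the simple integral
  have hgint : ∀ (ν : Measure (ℝ×ℝ)), IsProbabilityMeasure ν →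
      ∫ p, g p ∂ν = ∑ i ∈ Finset.range n, ∑ j ∈ Finset.range n,
        f (a (i+1), a (j+1)) * (ν (R i j)).toReal := by
    intro ν hν
    haveI := hν
    rw [hgdef, integral_finset_sum _ (fun i _ => integrable_finset_sum _
      (fun j _ => (integrable_const _).indicator (hRmeas i j)))]
    refine Finset.sum_congr rfl fun i _ => ?_
    rw [integral_finset_sum _ (fun j _ => (integrable_const _).indicator (hRmeas i j))]
    refine Finset.sum_congr rfl fun j _ => ?_
    rw [integral_indicator_const _ (hRmeas i j)]
    simp [mul_comm, measureReal_def]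
  have hgconv : Tendsto (fun N => ∫ p, g p ∂(μs N)) atTop (𝓝 (∫ p, g p ∂μ)) := by
    rw [hgint μ inferInstance]
    refine Tendsto.congr (fun N => (hgint (μs N) inferInstance).symm) ?_
    refine tendsto_finset_sum _ fun i _ => tendsto_finset_sum _ fun j _ => ?_
    exact Tendsto.const_mul _
      (tendsto_rect μs μ hcdf (hamono (Nat.le_succ i)) (hamono (Nat.le_succ j)))
  have hQconv : Tendsto (fun N => ((μs N) Q).toReal) atTop (𝓝 ((μ Q).toReal)) := by
    rw [hQdef]
    exact tendsto_rect μs μ hcdf (by linarith) (by linarith)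
  have e1 : ∀ᶠ N in atTop, |(∫ p, g p ∂(μs N)) - ∫ p, g p ∂μ| < ε/8 := by
    filter_upwards [Metric.tendsto_nhds.1 hgconv (ε/8) (by linarith)] with N hN
    rwa [Real.dist_eq] at hN
  have e2 : ∀ᶠ N in atTop, 1 - ((μs N) Q).toReal < 2*ε₁ := by
    filter_upwards [Metric.tendsto_nhds.1 hQconv ε₁ hε₁] with N hN
    rw [Real.dist_eq] at hN
    have h := abs_lt.1 hN
    have : 1 - (μ Q).toReal < ε₁ := hmQ
    linarith [h.1, h.2]
  have hβbig : β * ε₁ ≤ ε/8 := by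
    have key : ε₁ * (8*(β+1)) = ε := by
      rw [hε₁def]; exact div_mul_cancel₀ ε (by positivity)
    nlinarith [key, hε₁.le]
  filter_upwards [e1, e2] with N h1 h2
  rw [Real.dist_eq]
  have d1 := hdiff (μs N) inferInstance
  have d2 := hdiff μ inferInstance
  have hQN : β * (1 - ((μs N) Q).toReal) ≤ ε/4 := by
    have := mul_le_mul_of_nonneg_left h2.le hβ.le
    linarith
  have hQH : β * (1 - (μ Q).toReal) ≤ ε/8 := by
    have := mul_le_mul_of_nonneg_left hmQ.le hβ.le
    linarith
  have tri1 := abs_sub_le (∫ p, f p ∂(μs N)) (∫ p, g p ∂(μs N)) (∫ p, f p ∂μ)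
  have tri2 := abs_sub_le (∫ p, g p ∂(μs N)) (∫ p, g p ∂μ) (∫ p, f p ∂μ)
  have hgf := abs_sub_comm (∫ p, g p ∂μ) (∫ p, f p ∂μ)
  show |(∫ p, f p ∂(μs N)) - ∫ p, f p ∂μ| < ε
  linarith [d1, d2, h1, tri1, tri2, hQN, hQH, hδε, hgf]

noncomputable section

set_option maxHeartbeats 1000000 in
lemma part1 (Hs : ℕ → Measure (ℝ × ℝ)) (H : Measure (ℝ × ℝ))
    [∀ N, IsProbabilityMeasure (Hs N)] [IsProbabilityMeasure H]
    (hcdf : ∀ x y : ℝ, Tendsto (fun N => (Hs N (Set.Iic x ×ˢ Set.Iic y)).toReal)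
      atTop (nhds ((H (Set.Iic x ×ˢ Set.Iic y)).toReal)))
    (hUI : ∀ ε : ℝ, 0 < ε → ∃ β : ℝ, 0 < β ∧ ∀ N,
      (∫⁻ p, Set.indicator {q : ℝ × ℝ | β ≤ |q.1 * q.2|}
        (fun q => ENNReal.ofReal |q.1 * q.2|) p ∂(Hs N)) < ENNReal.ofReal ε)
    (hint : ∀ N, Integrable (fun p : ℝ × ℝ => p.1 * p.2) (Hs N))
    (hintH : Integrable (fun p : ℝ × ℝ => p.1 * p.2) H) :
    Tendsto (fun N => ∫ p, p.1 * p.2 ∂(Hs N)) atTop (nhds (∫ p, p.1 * p.2 ∂H)) := by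
  rw [Metric.tendsto_nhds]
  intro ε hε
  have habs : Integrable (fun p : ℝ×ℝ => |p.1 * p.2|) H := hintH.abs
  have hmeasset : ∀ c : ℝ, MeasurableSet {q : ℝ×ℝ | c ≤ |q.1 * q.2|} := fun c =>
    measurableSet_le measurable_const ((measurable_fst.mul measurable_snd).abs)
  have hindmeas : ∀ c : ℝ,
      Measurable (Set.indicator {q : ℝ×ℝ | c ≤ |q.1*q.2|} (fun q : ℝ×ℝ => |q.1*q.2|)) :=
    fun c => ((measurable_fst.mul measurable_snd).abs).indicator (hmeasset c)
  -- tail of the limit measure tends to 0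
  have htail : Tendsto (fun mm : ℕ => ∫ p, Set.indicator {q : ℝ×ℝ | (mm:ℝ) ≤ |q.1*q.2|}
      (fun q => |q.1*q.2|) p ∂H) atTop (𝓝 (∫ _p : ℝ×ℝ, (0:ℝ) ∂H)) := by
    apply tendsto_integral_of_dominated_convergence (fun p : ℝ×ℝ => |p.1*p.2|)
    · exact fun mm => (hindmeas _).aestronglyMeasurable
    · exact habs
    · intro mm
      refine Eventually.of_forall fun p => ?_
      rw [Real.norm_eq_abs]
      by_cases hp : p ∈ {q : ℝ×ℝ | (mm:ℝ) ≤ |q.1*q.2|}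
      · rw [Set.indicator_of_mem hp]
        exact le_of_eq (abs_abs _)
      · rw [Set.indicator_of_notMem hp]
        simp [abs_nonneg]; positivity
    · refine Eventually.of_forall fun p => ?_
      obtain ⟨k, hk⟩ := exists_nat_gt |p.1 * p.2|
      refine Tendsto.congr' ?_ tendsto_const_nhds
      refine eventually_atTop.2 ⟨k, fun mm hmm => ?_⟩
      have hnm : p ∉ {q : ℝ×ℝ | (mm:ℝ) ≤ |q.1*q.2|} := by
        simp only [Set.mem_setOf_eq, not_le]
        calc |p.1*p.2| < k := hk
          _ ≤ mm := by exact_mod_cast hmm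
      exact (Set.indicator_of_notMem hnm _).symm
  rw [integral_zero] at htail
  obtain ⟨m₁, hm₁⟩ := eventually_atTop.1 (Metric.tendsto_nhds.1 htail (ε/4) (by linarith))
  set m : ℕ := max m₁ 1 with hmdef
  have hm1R : (1:ℝ) ≤ (m:ℝ) := by exact_mod_cast le_max_right m₁ 1
  have hm0 : (0:ℝ) < (m:ℝ) := by linarith
  have htailm : ∫ p, Set.indicator {q : ℝ×ℝ | (m:ℝ) ≤ |q.1*q.2|}
      (fun q => |q.1*q.2|) p ∂H < ε/4 := by
    have := hm₁ m (le_max_left _ _)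
    rw [Real.dist_eq, sub_zero] at this
    exact lt_of_le_of_lt (le_abs_self _) this
  obtain ⟨β₀, hβ₀pos, hβ₀⟩ := hUI (ε/4) (by linarith)
  set β : ℝ := max β₀ m with hβdef
  have hβpos : 0 < β := lt_of_lt_of_le hβ₀pos (le_max_left _ _)
  have hclip : ∀ (ν : Measure (ℝ×ℝ)), IsProbabilityMeasure ν →
      Integrable (fun p : ℝ×ℝ => clipf β (p.1 * p.2)) ν := by
    intro ν hν; haveI := hν; exact clip_integrable β hβpos.le ν
  -- E2 : tail bound for H
  have hptH : ∀ p : ℝ×ℝ, |p.1*p.2 - clipf β (p.1*p.2)|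
      ≤ Set.indicator {q : ℝ×ℝ | (m:ℝ) ≤ |q.1*q.2|} (fun q => |q.1*q.2|) p := by
    intro p
    have h := clipf_tail (le_max_right β₀ (m:ℝ)) hm0 (u := p.1*p.2)
    simp only [Set.indicator_apply, Set.mem_setOf_eq]
    exact h
  have hindintH : Integrable (fun p : ℝ×ℝ => Set.indicator {q : ℝ×ℝ | (m:ℝ) ≤ |q.1*q.2|}
      (fun q => |q.1*q.2|) p) H := by
    refine Integrable.mono' habs (hindmeas _).aestronglyMeasurable ?_
    refine Eventually.of_forall fun p => ?_
    rw [Real.norm_eq_abs]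
    by_cases hp : p ∈ {q : ℝ×ℝ | (m:ℝ) ≤ |q.1*q.2|}
    · rw [Set.indicator_of_mem hp]; exact le_of_eq (abs_abs _)
    · rw [Set.indicator_of_notMem hp]; simp [abs_nonneg]; positivity
  have hE2 : |(∫ p : ℝ×ℝ, p.1*p.2 ∂H) - ∫ p : ℝ×ℝ, clipf β (p.1*p.2) ∂H| < ε/4 := by
    have h1 : |(∫ p : ℝ×ℝ, p.1*p.2 ∂H) - ∫ p : ℝ×ℝ, clipf β (p.1*p.2) ∂H|
        ≤ ∫ p : ℝ×ℝ, |p.1*p.2 - clipf β (p.1*p.2)| ∂H := by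
      rw [← integral_sub hintH (hclip H inferInstance)]
      simpa [Real.norm_eq_abs] using
        norm_integral_le_integral_norm (μ := H) (fun p : ℝ×ℝ => p.1*p.2 - clipf β (p.1*p.2))
    have h2 : ∫ p : ℝ×ℝ, |p.1*p.2 - clipf β (p.1*p.2)| ∂H
        ≤ ∫ p, Set.indicator {q : ℝ×ℝ | (m:ℝ) ≤ |q.1*q.2|} (fun q => |q.1*q.2|) p ∂H :=
      integral_mono (hintH.sub (hclip H inferInstance)).abs hindintH fun p => hptH p
    linarith
  -- E1 : uniform tail bound for Hs N
  have hptN : ∀ p : ℝ×ℝ, |p.1*p.2 - clipf β (p.1*p.2)|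
      ≤ Set.indicator {q : ℝ×ℝ | β₀ ≤ |q.1*q.2|} (fun q => |q.1*q.2|) p := by
    intro p
    have h := clipf_tail (le_max_left β₀ (m:ℝ)) hβ₀pos (u := p.1*p.2)
    simp only [Set.indicator_apply, Set.mem_setOf_eq]
    exact h
  have hE1 : ∀ N, |(∫ p : ℝ×ℝ, p.1*p.2 ∂(Hs N)) - ∫ p : ℝ×ℝ, clipf β (p.1*p.2) ∂(Hs N)|
      < ε/4 := by
    intro N
    have hindintN : Integrable (fun p : ℝ×ℝ => Set.indicator {q : ℝ×ℝ | β₀ ≤ |q.1*q.2|}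
        (fun q => |q.1*q.2|) p) (Hs N) := by
      refine Integrable.mono' (hint N).abs (hindmeas _).aestronglyMeasurable ?_
      refine Eventually.of_forall fun p => ?_
      rw [Real.norm_eq_abs]
      by_cases hp : p ∈ {q : ℝ×ℝ | β₀ ≤ |q.1*q.2|}
      · rw [Set.indicator_of_mem hp]; exact le_of_eq (abs_abs _)
      · rw [Set.indicator_of_notMem hp]; simp [abs_nonneg]; positivity
    have h1 : |(∫ p : ℝ×ℝ, p.1*p.2 ∂(Hs N)) - ∫ p : ℝ×ℝ, clipf β (p.1*p.2) ∂(Hs N)|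
        ≤ ∫ p : ℝ×ℝ, |p.1*p.2 - clipf β (p.1*p.2)| ∂(Hs N) := by
      rw [← integral_sub (hint N) (hclip (Hs N) inferInstance)]
      simpa [Real.norm_eq_abs] using
        norm_integral_le_integral_norm (μ := Hs N) (fun p : ℝ×ℝ => p.1*p.2 - clipf β (p.1*p.2))
    have h2 : ∫ p : ℝ×ℝ, |p.1*p.2 - clipf β (p.1*p.2)| ∂(Hs N)
        ≤ ∫ p, Set.indicator {q : ℝ×ℝ | β₀ ≤ |q.1*q.2|} (fun q => |q.1*q.2|) p ∂(Hs N) :=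
      integral_mono ((hint N).sub (hclip (Hs N) inferInstance)).abs hindintN fun p => hptN p
    have h3 : ∫ p, Set.indicator {q : ℝ×ℝ | β₀ ≤ |q.1*q.2|} (fun q => |q.1*q.2|) p ∂(Hs N)
        < ε/4 := by
      have heq : ∫ p, Set.indicator {q : ℝ×ℝ | β₀ ≤ |q.1*q.2|} (fun q => |q.1*q.2|) p ∂(Hs N)
          = (∫⁻ p, Set.indicator {q : ℝ × ℝ | β₀ ≤ |q.1 * q.2|}
            (fun q => ENNReal.ofReal |q.1 * q.2|) p ∂(Hs N)).toReal := by
        rw [integral_eq_lintegral_of_nonneg_ae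
          (Eventually.of_forall fun p => Set.indicator_nonneg (fun q _ => abs_nonneg _) p)
          (hindmeas _).aestronglyMeasurable]
        congr 1
        refine lintegral_congr fun p => ?_
        by_cases hp : p ∈ {q : ℝ×ℝ | β₀ ≤ |q.1*q.2|} <;>
            simp only [Set.indicator_apply, hp, ↓reduceIte, ENNReal.ofReal_zero]
      rw [heq]
      exact ENNReal.toReal_lt_of_lt_ofReal (hβ₀ N)
    linarith
  -- conclude
  have hclipconv := tends_integral_clip Hs H hcdf β hβpos
  filter_upwards [Metric.tendsto_nhds.1 hclipconv (ε/4) (by linarith)] with N hN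
  rw [Real.dist_eq] at hN ⊢
  have tri1 := abs_sub_le (∫ p : ℝ×ℝ, p.1*p.2 ∂(Hs N)) (∫ p : ℝ×ℝ, clipf β (p.1*p.2) ∂(Hs N))
    (∫ p : ℝ×ℝ, p.1*p.2 ∂H)
  have tri2 := abs_sub_le (∫ p : ℝ×ℝ, clipf β (p.1*p.2) ∂(Hs N))
    (∫ p : ℝ×ℝ, clipf β (p.1*p.2) ∂H) (∫ p : ℝ×ℝ, p.1*p.2 ∂H)
  have hcomm := abs_sub_comm (∫ p : ℝ×ℝ, clipf β (p.1*p.2) ∂H) (∫ p : ℝ×ℝ, p.1*p.2 ∂H)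
  have := hE1 N
  linarith [hE2]
end


open MeasureTheory Filter

/-- Weak convergence (pointwise convergence of bivariate distribution
functions) plus uniform integrability of the product implies convergence of
the product moments `E_{H_N}[y₁y₀] → E_H[y₁y₀]`; in particular, if the limit
is the upper (resp. lower) Fréchet coupling of the marginals `γ, φ`, the
limiting covariance is the supremum (resp. infimum) of the covariance over all
couplings of `γ` and `φ`. -/
theorem stmt19 (Hs : ℕ → Measure (ℝ × ℝ)) (H : Measure (ℝ × ℝ))
    [∀ N, IsProbabilityMeasure (Hs N)] [IsProbabilityMeasure H]
    (γ φ : Measure ℝ) [IsProbabilityMeasure γ] [IsProbabilityMeasure φ]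
    (hmarg1 : H.map Prod.fst = γ) (hmarg2 : H.map Prod.snd = φ)
    (hcdf : ∀ x y : ℝ, Tendsto (fun N => (Hs N (Set.Iic x ×ˢ Set.Iic y)).toReal)
      atTop (nhds ((H (Set.Iic x ×ˢ Set.Iic y)).toReal)))
    (hUI : ∀ ε : ℝ, 0 < ε → ∃ β : ℝ, 0 < β ∧ ∀ N,
      (∫⁻ p, Set.indicator {q : ℝ × ℝ | β ≤ |q.1 * q.2|}
        (fun q => ENNReal.ofReal |q.1 * q.2|) p ∂(Hs N)) < ENNReal.ofReal ε)
    (hint : ∀ N, Integrable (fun p : ℝ × ℝ => p.1 * p.2) (Hs N))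
    (hintH : Integrable (fun p : ℝ × ℝ => p.1 * p.2) H) :
    Tendsto (fun N => ∫ p, p.1 * p.2 ∂(Hs N)) atTop (nhds (∫ p, p.1 * p.2 ∂H)) ∧
    ((∀ x y : ℝ, (H (Set.Iic x ×ˢ Set.Iic y)).toReal
        = min ((γ (Set.Iic x)).toReal) ((φ (Set.Iic y)).toReal)) →
      (∫ p, p.1 * p.2 ∂H) - (∫ x, x ∂γ) * (∫ x, x ∂φ)
        = sSup {c : ℝ | ∃ h : Measure (ℝ × ℝ), IsProbabilityMeasure h ∧
            h.map Prod.fst = γ ∧ h.map Prod.snd = φ ∧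
            Integrable (fun p : ℝ × ℝ => p.1 * p.2) h ∧
            c = (∫ p, p.1 * p.2 ∂h) - (∫ x, x ∂γ) * (∫ x, x ∂φ)}) ∧
    ((∀ x y : ℝ, (H (Set.Iic x ×ˢ Set.Iic y)).toReal
        = max 0 ((γ (Set.Iic x)).toReal + (φ (Set.Iic y)).toReal - 1)) →
      (∫ p, p.1 * p.2 ∂H) - (∫ x, x ∂γ) * (∫ x, x ∂φ)
        = sInf {c : ℝ | ∃ h : Measure (ℝ × ℝ), IsProbabilityMeasure h ∧
            h.map Prod.fst = γ ∧ h.map Prod.snd = φ ∧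
            Integrable (fun p : ℝ × ℝ => p.1 * p.2) h ∧
            c = (∫ p, p.1 * p.2 ∂h) - (∫ x, x ∂γ) * (∫ x, x ∂φ)}) := by
  refine ⟨part1 Hs H hcdf hUI hint hintH, ?_, ?_⟩
  · intro hmin
    symm
    apply IsGreatest.csSup_eq
    constructor
    · exact ⟨H, inferInstance, hmarg1, hmarg2, hintH, rfl⟩
    · rintro c ⟨h, hprob, h1, h2, hi, rfl⟩
      haveI := hprob
      have hle : ∫ p : ℝ×ℝ, p.1 * p.2 ∂h ≤ ∫ p : ℝ×ℝ, p.1 * p.2 ∂H := by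
        refine key_le h H (by rw [h1, hmarg1]) (by rw [h2, hmarg2]) hi hintH fun s t => ?_
        rw [hmin s t]
        refine le_min ?_ ?_
        · have hf := frechet_upper_fst h s t
          rwa [h1] at hf
        · have hf := frechet_upper_snd h s t
          rwa [h2] at hf
      exact sub_le_sub_right hle _
  · intro hmax
    symm
    apply IsLeast.csInf_eq
    constructor
    · exact ⟨H, inferInstance, hmarg1, hmarg2, hintH, rfl⟩
    · rintro c ⟨h, hprob, h1, h2, hi, rfl⟩
      haveI := hprob
      have hle : ∫ p : ℝ×ℝ, p.1 * p.2 ∂H ≤ ∫ p : ℝ×ℝ, p.1 * p.2 ∂h := by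
        refine key_le H h (by rw [h1, hmarg1]) (by rw [h2, hmarg2]) hintH hi fun s t => ?_
        rw [hmax s t]
        refine max_le ENNReal.toReal_nonneg ?_
        have hf := frechet_lower h s t
        rw [h1, h2] at hf
        linarith
      exact sub_le_sub_right hle _
end
end
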